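/- arXiv:1609.00424 — 7 statements merged into one kernel-verified Lean document; each statement's English description precedes it below -/
import Mathlib

section
/- For any real λ with 0 < λ < 1 and any positive integer y, the Borel–Tanner distribution p(z | y) = (y · z^{z-y-1} · λ^{z-y} · e^{-zλ}) / (z-y)! for integers z ≥ y sums to 1 over z, i.e., ∑_{z=y}^∞ (y · z^{z-y-1} · λ^{z-y} · e^{-zλ}) / (z-y)! = 1. -/
open Real Filter Finset Set Topology

namespace BTaux


noncomputable def c (y : ℕ) : ℕ → ℝ
  | 0 => 1
  | (k+1) => (y : ℝ) * ((y : ℝ) + (k+1)) ^ k / (Nat.factorial (k+1))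

lemma c_nonneg (y k : ℕ) : 0 ≤ c y k := by
  cases k with
  | zero => norm_num [c]
  | succ k => unfold c; positivity

lemma rexp_eq_tsum (x : ℝ) : Real.exp x = ∑' n : ℕ, x ^ n / n.factorial := by
  rw [Real.exp_eq_exp_ℝ, NormedSpace.exp_eq_tsum_div]

lemma pow_self_le (m : ℕ) : (m : ℝ) ^ m ≤ Real.exp m * m.factorial := by
  have h : ((m : ℝ) ^ m / m.factorial) ≤ Real.exp m := by
    rw [rexp_eq_tsum]
    exact Summable.le_tsum (Real.summable_pow_div_factorial _) m (fun j _ => by positivity)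
  have hf : (0:ℝ) < m.factorial := by positivity
  calc (m:ℝ)^m = ((m:ℝ)^m / m.factorial) * m.factorial := by field_simp
  _ ≤ Real.exp m * m.factorial := by gcongr

lemma exp_cast_succ (k : ℕ) : Real.exp ((k:ℝ)+1) = Real.exp 1 ^ (k+1) := by
  rw [← Real.exp_nat_mul]; push_cast; ring_nf

lemma c_le (y : ℕ) (hy : 1 ≤ y) (k : ℕ) :
    c y k ≤ (y : ℝ) * Real.exp y * Real.exp 1 ^ (k+1) := by
  have hy1 : (1:ℝ) ≤ (y:ℝ) := by exact_mod_cast hy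
  have he1 : (1:ℝ) ≤ Real.exp 1 := by linarith [Real.add_one_le_exp (1:ℝ)]
  have hey : (1:ℝ) ≤ Real.exp y := by
    rw [← Real.exp_zero]; exact Real.exp_le_exp.mpr (by positivity)
  cases k with
  | zero =>
    simp only [c, zero_add, pow_one]
    nlinarith [mul_le_mul hy1 hey zero_le_one (by positivity : (0:ℝ) ≤ (y:ℝ))]
  | succ k =>
    unfold c
    have hk1 : (0:ℝ) < (k:ℝ)+1 := by positivity
    have h1 : ((y:ℝ) + ((k:ℝ)+1)) ^ k ≤ Real.exp y * ((k:ℝ)+1) ^ k := by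
      have hb : (y:ℝ) + ((k:ℝ)+1) ≤ ((k:ℝ)+1) * Real.exp ((y:ℝ)/((k:ℝ)+1)) := by
        have h := Real.add_one_le_exp ((y:ℝ)/((k:ℝ)+1))
        have h2 : ((k:ℝ)+1) * ((y:ℝ)/((k:ℝ)+1) + 1) ≤ ((k:ℝ)+1) * Real.exp ((y:ℝ)/((k:ℝ)+1)) := by
          gcongr
        have h3 : (y:ℝ) + ((k:ℝ)+1) = ((k:ℝ)+1) * ((y:ℝ)/((k:ℝ)+1) + 1) := by
          push_cast; field_simp
        linarith [h3 ▸ h2]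
      calc ((y:ℝ) + ((k:ℝ)+1)) ^ k ≤ (((k:ℝ)+1) * Real.exp ((y:ℝ)/((k:ℝ)+1))) ^ k := by
            apply pow_le_pow_left₀ (by positivity) hb
      _ = ((k:ℝ)+1)^k * Real.exp ((y:ℝ)/((k:ℝ)+1)) ^ k := mul_pow _ _ _
      _ = ((k:ℝ)+1)^k * Real.exp ((k:ℝ) * ((y:ℝ)/((k:ℝ)+1))) := by
            rw [Real.exp_nat_mul]
      _ ≤ ((k:ℝ)+1)^k * Real.exp y := by
            gcongr
            rw [mul_div_assoc', div_le_iff₀ hk1]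
            nlinarith [Nat.cast_nonneg (α := ℝ) y, Nat.cast_nonneg (α := ℝ) k]
      _ = Real.exp y * ((k:ℝ)+1)^k := by ring
    have h2 : ((k:ℝ)+1) ^ k ≤ Real.exp 1 ^ (k+1) * (Nat.factorial (k+1)) := by
      have hp := pow_self_le (k+1)
      push_cast at hp
      have hmono : ((k:ℝ)+1)^k ≤ ((k:ℝ)+1)^(k+1) := by
        apply pow_le_pow_right₀ (by linarith) (by omega)
      rw [← exp_cast_succ]
      exact hmono.trans hp
    have hfac : (0:ℝ) < (Nat.factorial (k+1) : ℝ) := by positivity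
    rw [div_le_iff₀ hfac]
    have hpow : Real.exp 1 ^ (k+1) ≤ Real.exp 1 ^ (k+1+1) := by
      apply pow_le_pow_right₀ he1 (by omega)
    calc (y:ℝ) * (((y:ℝ) + ((k:ℝ)+1)) ^ k)
        ≤ (y:ℝ) * (Real.exp y * ((k:ℝ)+1)^k) := by
          gcongr
      _ ≤ (y:ℝ) * (Real.exp y * (Real.exp 1 ^ (k+1) * (Nat.factorial (k+1)))) := by
          gcongr
      _ ≤ (y:ℝ) * (Real.exp y * (Real.exp 1 ^ (k+1+1) * (Nat.factorial (k+1)))) := by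
          gcongr <;> positivity
      _ = (y:ℝ) * Real.exp y * Real.exp 1 ^ (k+1+1) * (Nat.factorial (k+1)) := by ring



lemma pascal_split (n : ℕ) (g : ℕ → ℝ) :
    ∑ k ∈ range (n+2), (-1:ℝ)^k * ((n+1).choose k) * g k
      = ∑ k ∈ range (n+1), (-1:ℝ)^k * (n.choose k) * (g k - g (k+1)) := by
  rw [Finset.sum_range_succ' (fun k => (-1:ℝ)^k * ((n+1).choose k) * g k) (n+1)]
  have hterm : ∀ k, (-1:ℝ)^(k+1) * ((n+1).choose (k+1)) * g (k+1)
      = (-1)^(k+1) * (n.choose k) * g (k+1) + (-1)^(k+1) * (n.choose (k+1)) * g (k+1) := by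
    intro k
    rw [Nat.choose_succ_succ]
    push_cast
    ring
  rw [Finset.sum_congr rfl (fun k _ => hterm k), Finset.sum_add_distrib]
  have hA : ∑ k ∈ range (n+1), (-1:ℝ)^(k+1) * (n.choose (k+1)) * g (k+1)
      = ∑ k ∈ range (n+1), (-1:ℝ)^k * (n.choose k) * g k
        - (-1:ℝ)^0 * (n.choose 0) * g 0 := by
    rw [Finset.sum_range_succ' (fun k => (-1:ℝ)^k * (n.choose k) * g k) n]
    rw [Finset.sum_range_succ (fun k => (-1:ℝ)^(k+1) * (n.choose (k+1)) * g (k+1)) n]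
    simp [Nat.choose_succ_self]
  rw [hA]
  simp only [pow_zero, Nat.choose_zero_right, Nat.cast_one, one_mul, mul_one]
  have hsub : ∀ k, (-1:ℝ)^k * (n.choose k) * (g k - g (k+1))
      = (-1:ℝ)^k * (n.choose k) * g k + (-1:ℝ)^(k+1) * (n.choose k) * g (k+1) := by
    intro k; ring
  rw [Finset.sum_congr rfl (fun k _ => hsub k), Finset.sum_add_distrib]
  ring

lemma fin_diff : ∀ (n : ℕ), ∀ j < n, ∀ b : ℝ,
    ∑ k ∈ range (n+1), (-1:ℝ)^k * (n.choose k) * (b + k)^j = 0 := by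
  intro n
  induction n with
  | zero => intro j hj; omega
  | succ n ih =>
    intro j hj b
    have hdiff : ∀ k : ℕ, (b + k : ℝ)^j - (b + (k+1:ℕ))^j
        = - ∑ i ∈ range j, (b + k)^i * (j.choose i) := by
      intro k
      have hbin : (b + (k:ℝ) + 1)^j = ∑ i ∈ range (j+1), (b + k)^i * (j.choose i) := by
        have h := add_pow (b + (k:ℝ)) 1 j
        simp only [one_pow, mul_one] at h
        exact h
      push_cast
      rw [show (b + ((k:ℝ)+1)) = b + (k:ℝ) + 1 by ring, hbin, Finset.sum_range_succ]
      simp [Nat.choose_self]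
    have h2 := pascal_split n (fun k => (b + k)^j)
    rw [show n + 1 + 1 = n + 2 from rfl, h2]
    calc ∑ k ∈ range (n+1), (-1:ℝ)^k * (n.choose k) * ((b+k)^j - (b+(k+1:ℕ))^j)
        = ∑ k ∈ range (n+1), ∑ i ∈ range j,
            -((j.choose i : ℝ) * ((-1:ℝ)^k * (n.choose k) * (b+k)^i)) := by
          refine Finset.sum_congr rfl fun k _ => ?_
          rw [hdiff k, mul_neg, Finset.mul_sum, ← Finset.sum_neg_distrib]
          exact Finset.sum_congr rfl fun i _ => by ring
      _ = ∑ i ∈ range j, -((j.choose i : ℝ)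
            * ∑ k ∈ range (n+1), (-1:ℝ)^k * (n.choose k) * (b+k)^i) := by
          rw [Finset.sum_comm]
          exact Finset.sum_congr rfl fun i _ => by
            rw [Finset.mul_sum, ← Finset.sum_neg_distrib]
      _ = 0 := by
          refine Finset.sum_eq_zero fun i hi => ?_
          rw [ih i (by exact lt_of_lt_of_le (Finset.mem_range.mp hi) (by omega)) b]
          simp



lemma tsum_prod_antidiagonal {f : ℕ × ℕ → ℝ} (hf : Summable f) :
    ∑' p : ℕ × ℕ, f p = ∑' n : ℕ, ∑ kl ∈ Finset.HasAntidiagonal.antidiagonal n, f kl := by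
  rw [← Finset.HasAntidiagonal.sigmaAntidiagonalEquivProd.tsum_eq f]
  conv_rhs => congr; ext; rw [← Finset.sum_finset_coe, ← tsum_fintype (L := SummationFilter.unconditional _)]
  exact Summable.tsum_sigma' (fun n => (hasSum_fintype _).summable)
    (Finset.HasAntidiagonal.sigmaAntidiagonalEquivProd.summable_iff.mpr hf)

lemma hsign {n k : ℕ} (hk : k ≤ n) : (-1:ℝ)^(n-k) = (-1:ℝ)^n * (-1:ℝ)^k := by
  have h1 : (-1:ℝ)^(n-k) * (-1:ℝ)^k = (-1:ℝ)^n := by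
    rw [← pow_add, Nat.sub_add_cancel hk]
  have h2 : (-1:ℝ)^k * (-1:ℝ)^k = 1 := by
    rw [← pow_add]
    exact Even.neg_one_pow ⟨k, rfl⟩
  calc (-1:ℝ)^(n-k) = (-1:ℝ)^(n-k) * ((-1:ℝ)^k * (-1:ℝ)^k) := by rw [h2, mul_one]
  _ = ((-1:ℝ)^(n-k) * (-1:ℝ)^k) * (-1:ℝ)^k := by ring
  _ = (-1:ℝ)^n * (-1:ℝ)^k := by rw [h1]

lemma term_eq (y : ℕ) (lam : ℝ) (n k : ℕ) (hn : 1 ≤ n) (hk : k ≤ n) :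
    (c y k * lam^k) * ((-(((y:ℝ)+k))*lam)^(n-k) / (Nat.factorial (n-k)))
      = ((y:ℝ) * lam^n * (-1:ℝ)^n / (Nat.factorial n))
        * ((-1:ℝ)^k * (n.choose k) * ((y:ℝ)+k)^(n-1)) := by
  have hfac : ((n.choose k : ℝ)) * (Nat.factorial k) * (Nat.factorial (n-k))
      = (Nat.factorial n) := by
    exact_mod_cast congrArg (Nat.cast (R := ℝ)) (Nat.choose_mul_factorial_mul_factorial hk)
  have hpowneg : (-(((y:ℝ)+k))*lam)^(n-k) = (-1:ℝ)^(n-k) * (((y:ℝ)+k)^(n-k) * lam^(n-k)) := by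
    rw [show -(((y:ℝ)+k))*lam = (-1) * ((((y:ℝ)+k)) * lam) by ring, mul_pow, mul_pow]
  have hlam : lam^k * lam^(n-k) = lam^n := by rw [← pow_add, Nat.add_sub_cancel' hk]
  have hfk : (0:ℝ) < (Nat.factorial k : ℝ) := by positivity
  have hfnk : (0:ℝ) < (Nat.factorial (n-k) : ℝ) := by positivity
  have hfn : (0:ℝ) < (Nat.factorial n : ℝ) := by positivity
  rw [hpowneg, hsign hk]
  cases k with
  | zero =>
    simp only [c, Nat.cast_zero, add_zero, Nat.sub_zero, pow_zero, Nat.choose_zero_right,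
      Nat.cast_one, Nat.factorial_zero] at *
    have hyy : ((y:ℝ))^n = (y:ℝ) * ((y:ℝ))^(n-1) := by
      rw [← pow_succ']
      congr 1
      omega
    rw [hyy]
    field_simp
  | succ j =>
    have hke : j + 1 ≤ n := hk
    have hyk : ((y:ℝ) + ((j:ℝ)+1))^j * ((y:ℝ) + ((j:ℝ)+1))^(n-(j+1))
        = ((y:ℝ) + ((j:ℝ)+1))^(n-1) := by
      rw [← pow_add]; congr 1; omega
    simp only [c]
    push_cast at hfac hlam ⊢
    field_simp
    linear_combination
      ((y:ℝ) * (1:ℝ) * (((y:ℝ)+((j:ℝ)+1))^j * ((y:ℝ)+((j:ℝ)+1))^(n-(j+1)))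
          * (Nat.factorial n : ℝ)) * hlam
      + ((y:ℝ) * (1:ℝ) * lam^n * (Nat.factorial n : ℝ)) * hyk
      - ((y:ℝ) * lam^n * (1:ℝ) * (((y:ℝ)+((j:ℝ)+1))^(n-1))) * hfac

variable {y : ℕ} {lam : ℝ}

/-- The double-series term. -/
noncomputable def f (y : ℕ) (lam : ℝ) (p : ℕ × ℕ) : ℝ :=
  (c y p.1 * lam ^ p.1) * ((-(((y:ℝ) + p.1)) * lam) ^ p.2 / (Nat.factorial p.2))

lemma S_eval (hy : 1 ≤ y) (n : ℕ) :
    ∑ kl ∈ Finset.HasAntidiagonal.antidiagonal n, f y lam kl = if n = 0 then 1 else 0 := by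
  rw [Finset.Nat.sum_antidiagonal_eq_sum_range_succ_mk]
  simp only [Nat.succ_eq_add_one]
  rcases Nat.eq_zero_or_pos n with hn | hn
  · subst hn
    simp [f, c]
  · rw [if_neg hn.ne']
    have hterm : ∀ k ∈ range (n+1), f y lam (k, n - k)
        = ((y:ℝ) * lam^n * (-1:ℝ)^n / (Nat.factorial n))
          * ((-1:ℝ)^k * (n.choose k) * ((y:ℝ)+k)^(n-1)) := by
      intro k hk
      exact term_eq y lam n k hn (Nat.lt_succ_iff.mp (Finset.mem_range.mp hk))
    rw [Finset.sum_congr rfl hterm, ← Finset.mul_sum]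
    rw [fin_diff n (n-1) (by omega) (y:ℝ)]
    ring

lemma norm_f (hy : 1 ≤ y) (hlam : 0 ≤ lam) (k m : ℕ) :
    ‖f y lam (k, m)‖ = (c y k * lam ^ k) * ((((y:ℝ) + k) * lam) ^ m / (Nat.factorial m)) := by
  have h0 : (0:ℝ) ≤ (y:ℝ) + k := by positivity
  show ‖(c y k * lam ^ k) * ((-(((y:ℝ) + k)) * lam) ^ m / (Nat.factorial m))‖ = _
  rw [norm_mul, norm_div, norm_pow]
  rw [Real.norm_eq_abs, Real.norm_eq_abs, Real.norm_eq_abs]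
  rw [abs_of_nonneg (mul_nonneg (c_nonneg y k) (pow_nonneg hlam k))]
  rw [show -(((y:ℝ) + k)) * lam = -((((y:ℝ) + k)) * lam) by ring, abs_neg,
    abs_of_nonneg (by positivity), abs_of_nonneg (by positivity)]

lemma summable_fiber (hy : 1 ≤ y) (hlam : 0 ≤ lam) (k : ℕ) :
    Summable (fun m => ‖f y lam (k, m)‖) := by
  have := (Real.summable_pow_div_factorial (((y:ℝ) + k) * lam)).mul_left (c y k * lam ^ k)
  exact this.congr (fun m => (norm_f hy hlam k m).symm)

lemma tsum_fiber_norm (hy : 1 ≤ y) (hlam : 0 ≤ lam) (k : ℕ) :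
    ∑' m : ℕ, ‖f y lam (k, m)‖ = (c y k * lam ^ k) * Real.exp ((((y:ℝ) + k)) * lam) := by
  rw [tsum_congr (fun m => norm_f hy hlam k m), tsum_mul_left, rexp_eq_tsum]

lemma tsum_fiber (hy : 1 ≤ y) (k : ℕ) :
    ∑' m : ℕ, f y lam (k, m) = c y k * lam ^ k * Real.exp (-(((y:ℝ) + k)) * lam) := by
  have h : ∀ m : ℕ, f y lam (k, m)
      = (c y k * lam ^ k) * ((-(((y:ℝ) + k)) * lam) ^ m / (Nat.factorial m)) := fun m => rfl
  rw [tsum_congr h, tsum_mul_left, rexp_eq_tsum]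

lemma summable_norm_f (hy : 1 ≤ y) (h0 : 0 < lam) (h1 : lam ≤ 1/10) :
    Summable (fun p : ℕ × ℕ => ‖f y lam p‖) := by
  rw [summable_prod_of_nonneg (fun p => norm_nonneg _)]
  refine ⟨summable_fiber hy h0.le, ?_⟩
  have hr0 : 0 ≤ lam * (Real.exp 1 * Real.exp lam) := by positivity
  have hr1 : lam * (Real.exp 1 * Real.exp lam) < 1 := by
    have hel : Real.exp lam ≤ Real.exp 1 := Real.exp_le_exp.mpr (by linarith)
    have he := Real.exp_one_lt_d9
    have hp1 : (0:ℝ) < Real.exp 1 := Real.exp_pos 1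
    have hpl : (0:ℝ) < Real.exp lam := Real.exp_pos lam
    calc lam * (Real.exp 1 * Real.exp lam) ≤ (1/10) * (Real.exp 1 * Real.exp lam) := by
          apply mul_le_mul_of_nonneg_right h1 (by positivity)
      _ ≤ (1/10) * (Real.exp 1 * Real.exp 1) := by
          have := mul_le_mul_of_nonneg_left hel hp1.le
          linarith
      _ < 1 := by nlinarith
  refine Summable.of_nonneg_of_le
    (fun k => by
      rw [tsum_fiber_norm hy h0.le]
      exact mul_nonneg (mul_nonneg (c_nonneg y k) (pow_nonneg h0.le k)) (Real.exp_pos _).le)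
    (fun k => ?_)
    (((summable_geometric_of_lt_one hr0 hr1).mul_left
      ((y:ℝ) * Real.exp y * Real.exp 1 * Real.exp ((y:ℝ) * lam))))
  rw [tsum_fiber_norm hy h0.le]
  have hexp : Real.exp ((((y:ℝ) + k)) * lam)
      = Real.exp ((y:ℝ) * lam) * Real.exp lam ^ k := by
    rw [add_mul, Real.exp_add, ← Real.exp_nat_mul]
  rw [hexp]
  have hc := c_le y hy k
  have h2 : c y k * lam ^ k * (Real.exp ((y:ℝ) * lam) * Real.exp lam ^ k)
      ≤ ((y:ℝ) * Real.exp y * Real.exp 1 ^ (k+1)) * lam ^ k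
          * (Real.exp ((y:ℝ) * lam) * Real.exp lam ^ k) := by
    have hnn : (0:ℝ) ≤ lam ^ k * (Real.exp ((y:ℝ) * lam) * Real.exp lam ^ k) := by positivity
    nlinarith [mul_le_mul_of_nonneg_right hc hnn]
  refine h2.trans (le_of_eq ?_)
  rw [pow_succ, mul_pow, mul_pow]
  ring

lemma key_small (hy : 1 ≤ y) (h0 : 0 < lam) (h1 : lam ≤ 1/10) :
    ∑' k : ℕ, c y k * lam ^ k * Real.exp (-(((y:ℝ) + k)) * lam) = 1 := by
  have hF : Summable (f y lam) := (summable_norm_f hy h0 h1).of_norm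
  calc ∑' k : ℕ, c y k * lam ^ k * Real.exp (-(((y:ℝ) + k)) * lam)
      = ∑' (k : ℕ) (m : ℕ), f y lam (k, m) := by
        exact tsum_congr fun k => (tsum_fiber hy k).symm
    _ = ∑' p : ℕ × ℕ, f y lam p := by
        exact (Summable.tsum_prod' hF (fun k => (summable_fiber hy h0.le k).of_norm)).symm
    _ = ∑' n : ℕ, ∑ kl ∈ Finset.HasAntidiagonal.antidiagonal n, f y lam kl := tsum_prod_antidiagonal hF
    _ = ∑' n : ℕ, if n = 0 then (1:ℝ) else 0 := tsum_congr fun n => S_eval hy n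
    _ = 1 := by rw [tsum_ite_eq]


noncomputable def P (y : ℕ) : FormalMultilinearSeries ℝ ℝ ℝ :=
  FormalMultilinearSeries.ofScalars ℝ (c y)

noncomputable def r0 : NNReal := Real.toNNReal (Real.exp 1)⁻¹

lemma r0_coe : (r0 : ℝ) = (Real.exp 1)⁻¹ :=
  Real.coe_toNNReal _ (by positivity)

lemma r0_pos : 0 < r0 := by
  rw [← NNReal.coe_lt_coe, r0_coe]
  positivity

lemma radius_ge (y : ℕ) (hy : 1 ≤ y) : (r0 : ENNReal) ≤ (P y).radius := by
  apply (P y).le_radius_of_bound ((y:ℝ) * Real.exp y * Real.exp 1)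
  intro n
  have hnorm : ‖P y n‖ = c y n := by
    rw [P, FormalMultilinearSeries.ofScalars_norm]
    exact abs_of_nonneg (c_nonneg y n)
  rw [hnorm, r0_coe]
  have h1 := c_le y hy n
  have h2 : (0:ℝ) ≤ ((Real.exp 1)⁻¹) ^ n := by positivity
  calc c y n * ((Real.exp 1)⁻¹) ^ n
      ≤ ((y:ℝ) * Real.exp y * Real.exp 1 ^ (n+1)) * ((Real.exp 1)⁻¹) ^ n := by
        exact mul_le_mul_of_nonneg_right h1 h2
    _ = (y:ℝ) * Real.exp y * Real.exp 1 * (Real.exp 1 * (Real.exp 1)⁻¹) ^ n := by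
        rw [mul_pow, pow_succ]
        ring
    _ = (y:ℝ) * Real.exp y * Real.exp 1 := by
        rw [mul_inv_cancel₀ (Real.exp_ne_zero 1), one_pow, mul_one]

lemma Psum_eq (y : ℕ) (x : ℝ) : (P y).sum x = ∑' k : ℕ, c y k * x ^ k := by
  unfold FormalMultilinearSeries.sum
  refine tsum_congr fun n => ?_
  rw [P, FormalMultilinearSeries.ofScalars_apply_eq, smul_eq_mul]

noncomputable def H (y : ℕ) (lam : ℝ) : ℝ :=
  Real.exp (-(y:ℝ) * lam) * (P y).sum (lam * Real.exp (-lam))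

lemma x_small {lam : ℝ} (h : lam ∈ Ioo (-(1/10) : ℝ) 1) :
    |lam * Real.exp (-lam)| < (Real.exp 1)⁻¹ := by
  obtain ⟨hl, hr⟩ := h
  rcases le_or_gt 0 lam with h0 | h0
  · rw [abs_of_nonneg (by positivity)]
    have h1 : lam < Real.exp (lam - 1) := by
      have := Real.add_one_lt_exp (x := lam - 1) (by intro hc; nlinarith)
      linarith
    calc lam * Real.exp (-lam) < Real.exp (lam - 1) * Real.exp (-lam) := by
          exact mul_lt_mul_of_pos_right h1 (Real.exp_pos _)
      _ = Real.exp (-1) := by rw [← Real.exp_add]; ring_nf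
      _ = (Real.exp 1)⁻¹ := Real.exp_neg 1
  · have habs : |lam * Real.exp (-lam)| = (-lam) * Real.exp (-lam) := by
      rw [abs_mul, abs_of_neg h0, abs_of_pos (Real.exp_pos _)]
    rw [habs]
    have hle : Real.exp (-lam) ≤ Real.exp 1 := Real.exp_le_exp.mpr (by linarith)
    have h2 : (-lam) * Real.exp (-lam) < (1/10) * Real.exp 1 := by
      have hlam10 : -lam < 1/10 := by linarith
      calc (-lam) * Real.exp (-lam) < (1/10) * Real.exp (-lam) := by
            exact mul_lt_mul_of_pos_right hlam10 (Real.exp_pos _)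
        _ ≤ (1/10) * Real.exp 1 := by linarith
    have h3 : (1/10) * Real.exp 1 < (Real.exp 1)⁻¹ := by
      rw [inv_eq_one_div, lt_div_iff₀ (Real.exp_pos 1)]
      nlinarith [Real.exp_one_lt_d9, Real.exp_pos 1]
    linarith

lemma analyticOnNhd_H (y : ℕ) (hy : 1 ≤ y) :
    AnalyticOnNhd ℝ (H y) (Ioo (-(1/10) : ℝ) 1) := by
  intro lam hlam
  have hid : AnalyticAt ℝ (fun t : ℝ => t) lam := analyticAt_id
  have hexp1 : AnalyticAt ℝ (fun t : ℝ => Real.exp (-t)) lam := hid.neg.rexp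
  have hinner : AnalyticAt ℝ (fun t : ℝ => t * Real.exp (-t)) lam := hid.mul hexp1
  have houter : AnalyticAt ℝ (fun t : ℝ => Real.exp (-(y:ℝ) * t)) lam :=
    (analyticAt_const.mul hid).rexp
  have hrad : 0 < (P y).radius := lt_of_lt_of_le (by exact_mod_cast r0_pos) (radius_ge y hy)
  have hball := (P y).hasFPowerSeriesOnBall hrad
  have hmem : lam * Real.exp (-lam) ∈ Metric.eball (0:ℝ) (P y).radius := by
    rw [mem_eball_zero_iff]
    refine lt_of_lt_of_le ?_ (radius_ge y hy)
    rw [enorm_eq_nnnorm, ENNReal.coe_lt_coe, ← NNReal.coe_lt_coe, coe_nnnorm, r0_coe, Real.norm_eq_abs]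
    exact x_small hlam
  have hsum : AnalyticAt ℝ (P y).sum (lam * Real.exp (-lam)) :=
    hball.analyticAt_of_mem hmem
  exact houter.mul (AnalyticAt.comp (f := fun t : ℝ => t * Real.exp (-t)) hsum hinner)

lemma H_small (y : ℕ) (hy : 1 ≤ y) {lam : ℝ} (h0 : 0 < lam) (h1 : lam ≤ 1/10) :
    H y lam = 1 := by
  have hterm : ∀ k : ℕ, Real.exp (-(y:ℝ) * lam) * (c y k * (lam * Real.exp (-lam)) ^ k)
      = c y k * lam ^ k * Real.exp (-(((y:ℝ) + k)) * lam) := by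
    intro k
    rw [mul_pow, ← Real.exp_nat_mul]
    rw [show Real.exp (-(y:ℝ) * lam) * (c y k * (lam ^ k * Real.exp ((k:ℝ) * -lam)))
        = c y k * lam ^ k * (Real.exp (-(y:ℝ) * lam) * Real.exp ((k:ℝ) * -lam)) by ring]
    rw [← Real.exp_add]
    congr 2
    ring
  rw [H, Psum_eq, ← tsum_mul_left, tsum_congr hterm]
  exact key_small hy h0 h1

lemma H_eq_one (y : ℕ) (hy : 1 ≤ y) {lam : ℝ} (h0 : 0 < lam) (h1 : lam < 1) :
    H y lam = 1 := by
  have hEq : EqOn (H y) (fun _ => 1) (Ioo (-(1/10) : ℝ) 1) := by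
    apply AnalyticOnNhd.eqOn_of_preconnected_of_eventuallyEq
      (analyticOnNhd_H y hy) analyticOnNhd_const isPreconnected_Ioo
      (show (1/20 : ℝ) ∈ Ioo (-(1/10):ℝ) 1 by constructor <;> norm_num)
    have hmem : Ioo (0:ℝ) (1/10) ∈ 𝓝 (1/20 : ℝ) :=
      Ioo_mem_nhds (by norm_num) (by norm_num)
    filter_upwards [hmem] with t ht
    exact H_small y hy ht.1 ht.2.le
  exact hEq ⟨by linarith, h1⟩

end BTaux

/-- The Borel–Tanner distribution sums to 1: for `0 < λ < 1` and `y ≥ 1`,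
`∑_{z=y}^∞ y z^{z-y-1} λ^{z-y} e^{-zλ} / (z-y)! = 1`, where the sum is indexed by
`z = y + k`, `k ∈ ℕ`, and the (possibly negative) exponent `z - y - 1 = k - 1` is
an integer power. -/
theorem stmt1 (lam : ℝ) (h0 : 0 < lam) (h1 : lam < 1) (y : ℕ) (hy : 1 ≤ y) :
    ∑' k : ℕ,
      (y : ℝ) * ((y : ℝ) + k) ^ ((k : ℤ) - 1) * lam ^ k
        * Real.exp (-(((y : ℝ) + k)) * lam) / (Nat.factorial k) = 1 := by
  have hy0 : ((y:ℝ)) ≠ 0 := by positivity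
  have hterm : ∀ k : ℕ,
      (y : ℝ) * ((y : ℝ) + k) ^ ((k : ℤ) - 1) * lam ^ k
        * Real.exp (-(((y : ℝ) + k)) * lam) / (Nat.factorial k)
      = Real.exp (-(y:ℝ) * lam) * (BTaux.c y k * (lam * Real.exp (-lam)) ^ k) := by
    intro k
    have halg : ∀ k : ℕ, BTaux.c y k * (lam * Real.exp (-lam)) ^ k
        = BTaux.c y k * lam ^ k * Real.exp ((k:ℝ) * -lam) := by
      intro k
      rw [mul_pow, ← Real.exp_nat_mul]
      ring
    rw [halg]
    cases k with
    | zero =>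
      simp only [BTaux.c, Nat.cast_zero, add_zero, pow_zero, Nat.factorial_zero,
        Nat.cast_one, zero_add, mul_one, one_mul, mul_zero, zero_mul, Real.exp_zero]
      rw [show ((0:ℤ) - 1) = (-1 : ℤ) by ring, zpow_neg, zpow_one]
      rw [mul_comm ((y:ℝ)) (((y:ℝ))⁻¹), inv_mul_cancel₀ hy0]
      rw [one_mul, div_one]
    | succ k =>
      have hz : ((y : ℝ) + (k+1:ℕ)) ^ (((k+1:ℕ) : ℤ) - 1) = ((y : ℝ) + (k+1:ℕ)) ^ (k:ℕ) := by
        rw [show (((k+1:ℕ) : ℤ) - 1) = (k : ℤ) by push_cast; ring, zpow_natCast]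
      rw [hz]
      simp only [BTaux.c]
      have hexp : Real.exp (-(((y:ℝ) + (k+1:ℕ))) * lam)
          = Real.exp (-(y:ℝ) * lam) * Real.exp (((k+1:ℕ):ℝ) * -lam) := by
        rw [← Real.exp_add]
        congr 1
        push_cast
        ring
      rw [hexp]
      have hf : ((Nat.factorial (k+1) : ℝ)) ≠ 0 := by positivity
      field_simp
      push_cast
      ring
  rw [tsum_congr hterm, tsum_mul_left, ← BTaux.Psum_eq]
  exact BTaux.H_eq_one y hy h0 h1
end

section
/- Let λ ∈ (0,1) and let X be a random variable on the nonnegative integers with P(X=0) = e^{-λ}, P(X=1) = λe^{-λ}, and P(X=x) = ((x-1)^{x-2} / (x·(x-2)!)) λ^x e^{-xλ} for x ≥ 2. Then E[X²] = ((1 - λ + λ²)/(1-λ)²) · E[X] = ((1 - λ + λ²)/(1-λ)³) · λ e^{-λ}. -/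
open Finset

noncomputable def abelP (k : ℕ) (x : ℝ) : ℝ := if k = 0 then 1 else x * (x + k) ^ (k - 1)

lemma abelP_zero (x : ℝ) : abelP 0 x = 1 := rfl

lemma abelP_succ (k : ℕ) (x : ℝ) : abelP (k+1) x = x * (x + (k+1:ℕ)) ^ k := by
  simp [abelP]

lemma abelP_at_zero (k : ℕ) (hk : k ≠ 0) : abelP k 0 = 0 := by
  obtain ⟨j, rfl⟩ := Nat.exists_eq_succ_of_ne_zero hk
  simp [abelP_succ]

lemma hasDerivAt_abelP (k : ℕ) (x : ℝ) :
    HasDerivAt (abelP k) (k * abelP (k-1) (x+1)) x := by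
  match k with
  | 0 => simpa [show abelP 0 = fun _ => (1:ℝ) from funext fun z => by simp [abelP]] using hasDerivAt_const x (1:ℝ)
  | 1 =>
    have h : HasDerivAt (abelP 1) 1 x := by
      have e : (abelP 1) = fun x : ℝ => x := by
        funext z; simp [abelP]
      rw [e]; exact hasDerivAt_id x
    simpa [abelP] using h
  | (j+2) =>
    have hp : HasDerivAt (fun x : ℝ => (x + ((j:ℝ)+2)) ^ (j+1))
        (((j+1:ℕ):ℝ) * (x + ((j:ℝ)+2)) ^ j * 1) x := by
      have := ((hasDerivAt_id x).add_const ((j:ℝ)+2)).fun_pow (j+1)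
      simpa using this
    have h1 : HasDerivAt (fun x : ℝ => x * (x + ((j:ℝ)+2)) ^ (j+1))
        (1 * (x + ((j:ℝ)+2)) ^ (j+1) + x * (((j+1:ℕ):ℝ) * (x + ((j:ℝ)+2)) ^ j * 1)) x :=
      (hasDerivAt_id x).mul hp
    have e1 : abelP (j+2) = fun x : ℝ => x * (x + ((j:ℝ)+2)) ^ (j+1) := by
      funext z; rw [show j+2 = (j+1)+1 by rfl, abelP_succ]; push_cast; ring_nf
    rw [e1]
    convert h1 using 1
    have e2 : abelP (j+2-1) (x+1) = (x+1) * ((x+1) + ((j:ℝ)+1)) ^ j := by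
      rw [show j+2-1 = j+1 by rfl, abelP_succ]; push_cast; ring_nf
    rw [e2, show x+1+((j:ℝ)+1) = x+((j:ℝ)+2) by ring, pow_succ]
    push_cast; ring

lemma abel_identity (n : ℕ) (x y : ℝ) :
    ∑ k ∈ range (n+1), (n.choose k : ℝ) * abelP k x * abelP (n-k) y = abelP n (x+y) := by
  induction n generalizing x y with
  | zero => simp [abelP_zero]
  | succ n IH =>
    set f : ℝ → ℝ := fun x =>
      (∑ k ∈ range (n+2), ((n+1).choose k : ℝ) * abelP k x * abelP (n+1-k) y)
        - abelP (n+1) (x+y) with hf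
    have hderiv : ∀ z : ℝ, HasDerivAt f 0 z := by
      intro z
      have hsum : HasDerivAt (fun x => ∑ k ∈ range (n+2),
          ((n+1).choose k : ℝ) * abelP k x * abelP (n+1-k) y)
          (∑ k ∈ range (n+2),
            ((n+1).choose k : ℝ) * ((k:ℝ) * abelP (k-1) (z+1)) * abelP (n+1-k) y) z := by
        apply HasDerivAt.fun_sum
        intro k _
        exact ((hasDerivAt_abelP k z).const_mul (((n+1).choose k : ℝ))).mul_const _
      have hrhs : HasDerivAt (fun x => abelP (n+1) (x+y))
          (((n+1:ℕ):ℝ) * abelP n (z+y+1)) z := by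
        have := (hasDerivAt_abelP (n+1) (z+y)).comp z ((hasDerivAt_id z).add_const y)
        simpa [Function.comp_def] using this
      have key : (∑ k ∈ range (n+2),
            ((n+1).choose k : ℝ) * ((k:ℝ) * abelP (k-1) (z+1)) * abelP (n+1-k) y)
          = ((n+1:ℕ):ℝ) * abelP n (z+y+1) := by
        have e : ∀ k ∈ range (n+2),
            ((n+1).choose k : ℝ) * ((k:ℝ) * abelP (k-1) (z+1)) * abelP (n+1-k) y
            = ((n+1:ℕ):ℝ) * (if k = 0 then 0 else
                (n.choose (k-1) : ℝ) * abelP (k-1) (z+1) * abelP (n-(k-1)) y) := by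
          intro k _
          match k with
          | 0 => simp
          | (j+1) =>
            simp only [if_neg (Nat.succ_ne_zero j)]
            have hc : ((n+1).choose (j+1)) * (j+1) = (n+1) * n.choose j := by
              rw [← Nat.add_one_mul_choose_eq]
            have hc' : (((n+1).choose (j+1)) : ℝ) * ((j+1:ℕ):ℝ)
                = ((n+1:ℕ):ℝ) * (n.choose j : ℝ) := by exact_mod_cast hc
            have hsub : n+1-(j+1) = n-j := by omega
            have hsub2 : j+1-1 = j := rfl
            rw [hsub, hsub2]
            linear_combination (abelP j (z+1) * abelP (n-j) y) * hc'
        rw [Finset.sum_congr rfl e, ← Finset.mul_sum]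
        congr 1
        rw [Finset.sum_range_succ']
        simp only [Nat.succ_ne_zero, if_false, if_pos rfl, add_zero, Nat.add_sub_cancel,
          ite_true, ite_false]
        rw [IH (z+1) y, show z+1+y = z+y+1 by ring]
      have hd := hsum.fun_sub hrhs
      rw [key] at hd
      simpa using hd
    have hconst : f x = f 0 :=
      is_const_of_deriv_eq_zero (fun w => (hderiv w).differentiableAt)
        (fun w => (hderiv w).deriv) x 0
    have hf0 : f 0 = 0 := by
      rw [hf]
      simp only [zero_add]
      rw [Finset.sum_eq_single 0]
      · simp [abelP_zero]
      · intro k _ hk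
        rw [abelP_at_zero k hk]; ring
      · intro h; simp at h
    have hfx : f x = 0 := hconst.trans hf0
    rw [hf] at hfx
    simp only [sub_eq_zero] at hfx
    exact hfx

lemma abelP_one (j : ℕ) : ((j:ℝ)+1) * abelP j 1 = ((j:ℝ)+1)^j := by
  cases j with
  | zero => simp [abelP_zero]
  | succ i =>
    rw [abelP_succ]
    push_cast
    rw [pow_succ]
    ring

lemma abelP_two (n : ℕ) : ((n:ℝ)+2) * abelP n 2 = 2 * ((n:ℝ)+2)^n := by
  cases n with
  | zero => simp [abelP_zero]
  | succ i =>
    rw [abelP_succ]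
    push_cast
    rw [pow_succ]
    ring

lemma abel_R (n : ℕ) (y : ℝ) :
    ∑ j ∈ range (n+1), ((n+1).choose (j+1) : ℝ) * ((j:ℝ)+1)^j * abelP (n-j) y
      = ((n:ℝ)+1) * abelP n (1+y) := by
  have h := abel_identity n 1 y
  calc ∑ j ∈ range (n+1), ((n+1).choose (j+1) : ℝ) * ((j:ℝ)+1)^j * abelP (n-j) y
      = ∑ j ∈ range (n+1), ((n:ℝ)+1) * ((n.choose j : ℝ) * abelP j 1 * abelP (n-j) y) := by
        apply Finset.sum_congr rfl
        intro j _
        have hc : ((n+1).choose (j+1)) * (j+1) = (n+1) * n.choose j := by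
          rw [← Nat.add_one_mul_choose_eq]
        have hc' : (((n+1).choose (j+1)) : ℝ) * ((j:ℝ)+1) = ((n:ℝ)+1) * (n.choose j : ℝ) := by
          exact_mod_cast hc
        rw [← abelP_one j]
        calc ((n+1).choose (j+1) : ℝ) * (((j:ℝ)+1) * abelP j 1) * abelP (n-j) y
            = (((n+1).choose (j+1) : ℝ) * ((j:ℝ)+1)) * abelP j 1 * abelP (n-j) y := by ring
          _ = (((n:ℝ)+1) * (n.choose j : ℝ)) * abelP j 1 * abelP (n-j) y := by rw [hc']
          _ = ((n:ℝ)+1) * ((n.choose j : ℝ) * abelP j 1 * abelP (n-j) y) := by ring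
    _ = ((n:ℝ)+1) * abelP n (1+y) := by rw [← Finset.mul_sum, h]

lemma key_identity (n : ℕ) :
    ∑ j ∈ range (n+1), ((n+2).choose (j+1) : ℝ) * ((j:ℝ)+1)^j * (((n:ℝ)+1)-j)^(n-j)
      = 2 * ((n:ℝ)+1) * ((n:ℝ)+2)^n := by
  have step : ∀ j ∈ range (n+1),
      ((n+2).choose (j+1) : ℝ) * ((j:ℝ)+1)^j * (((n:ℝ)+1)-j)^(n-j)
      = ((n:ℝ)+2) * (((n+1).choose (j+1) : ℝ) * ((j:ℝ)+1)^j * abelP (n-j) 1) := by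
    intro j hj
    have hj' : j ≤ n := by
      have := Finset.mem_range.mp hj; omega
    have hcast : ((n:ℝ)+1) - (j:ℝ) = ((n-j:ℕ):ℝ) + 1 := by
      have : ((n-j:ℕ):ℝ) = (n:ℝ) - (j:ℝ) := by
        rw [Nat.cast_sub hj']
      rw [this]; ring
    have hpow : (((n:ℝ)+1)-j)^(n-j) = (((n-j:ℕ):ℝ)+1) * abelP (n-j) 1 := by
      rw [hcast, abelP_one]
    -- choose identity: C(n+2,j+1)*(n+1-j) = (n+2)*C(n+1,j+1)
    have hc1 : (n+2).choose (j+2) * (j+2) = (n+2).choose (j+1) * (n+2-(j+1)) :=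
      Nat.choose_succ_right_eq (n+2) (j+1)
    have hc2 : (n+2) * (n+1).choose (j+1) = (n+2).choose (j+2) * (j+2) := by
      have := Nat.add_one_mul_choose_eq (n+1) (j+1)
      simpa using this
    have hc3 : (n+2).choose (j+1) * (n+1-j) = (n+2) * (n+1).choose (j+1) := by
      rw [hc2, hc1]
      congr 1
      omega
    have hc3' : ((n+2).choose (j+1) : ℝ) * (((n-j:ℕ):ℝ)+1)
        = ((n:ℝ)+2) * ((n+1).choose (j+1) : ℝ) := by
      have h1 : ((n+1-j:ℕ):ℝ) = ((n-j:ℕ):ℝ) + 1 := by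
        have : n+1-j = (n-j)+1 := by omega
        rw [this]; push_cast; ring
      have h2 : (((n+2):ℕ):ℝ) = (n:ℝ)+2 := by push_cast; ring
      calc ((n+2).choose (j+1) : ℝ) * (((n-j:ℕ):ℝ)+1)
          = ((n+2).choose (j+1) : ℝ) * ((n+1-j:ℕ):ℝ) := by rw [h1]
        _ = (((n+2).choose (j+1) * (n+1-j) : ℕ) : ℝ) := by push_cast; ring
        _ = (((n+2) * (n+1).choose (j+1) : ℕ) : ℝ) := by rw [hc3]
        _ = ((n:ℝ)+2) * ((n+1).choose (j+1) : ℝ) := by push_cast; ring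
    rw [hpow]
    calc ((n+2).choose (j+1) : ℝ) * ((j:ℝ)+1)^j * ((((n-j:ℕ):ℝ)+1) * abelP (n-j) 1)
        = (((n+2).choose (j+1) : ℝ) * (((n-j:ℕ):ℝ)+1)) * ((j:ℝ)+1)^j * abelP (n-j) 1 := by
          ring
      _ = (((n:ℝ)+2) * ((n+1).choose (j+1) : ℝ)) * ((j:ℝ)+1)^j * abelP (n-j) 1 := by rw [hc3']
      _ = ((n:ℝ)+2) * (((n+1).choose (j+1) : ℝ) * ((j:ℝ)+1)^j * abelP (n-j) 1) := by ring
  rw [Finset.sum_congr rfl step, ← Finset.mul_sum, abel_R n 1]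
  have h11 : (1:ℝ) + 1 = 2 := by norm_num
  rw [h11]
  calc ((n:ℝ)+2) * (((n:ℝ)+1) * abelP n 2) = ((n:ℝ)+1) * (((n:ℝ)+2) * abelP n 2) := by ring
    _ = ((n:ℝ)+1) * (2 * ((n:ℝ)+2)^n) := by rw [abelP_two]
    _ = 2 * ((n:ℝ)+1) * ((n:ℝ)+2)^n := by ring

open Real

noncomputable def bterm (lam : ℝ) (m : ℕ) : ℝ :=
  ((m:ℝ)+1)^m * lam^(m+1) * Real.exp (-((m:ℝ)+1)*lam) / (Nat.factorial (m+1))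

noncomputable def dbterm (lam : ℝ) (m : ℕ) : ℝ :=
  ((m:ℝ)+1)^(m+1) * (1-lam) * lam^m * Real.exp (-((m:ℝ)+1)*lam) / (Nat.factorial (m+1))

lemma bterm_nonneg {lam : ℝ} (h : 0 ≤ lam) (m : ℕ) : 0 ≤ bterm lam m := by
  unfold bterm
  positivity

lemma pow_succ_div_factorial_le (m : ℕ) :
    ((m:ℝ)+1)^(m+1) / (Nat.factorial (m+1)) ≤ Real.exp ((m:ℝ)+1) := by
  have h := Real.sum_le_exp_of_nonneg (x := ((m:ℝ)+1)) (by positivity) (m+2)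
  have hterm : ((m:ℝ)+1)^(m+1) / (Nat.factorial (m+1)) ≤
      ∑ i ∈ range (m+2), ((m:ℝ)+1)^i / (Nat.factorial i) := by
    apply Finset.single_le_sum (f := fun i => ((m:ℝ)+1)^i / (Nat.factorial i))
    · intro i _; positivity
    · exact Finset.self_mem_range_succ (m+1)
  exact hterm.trans h

lemma bterm_le {lam : ℝ} (h0 : 0 ≤ lam) (m : ℕ) :
    bterm lam m ≤ (lam * Real.exp (1-lam))^(m+1) := by
  unfold bterm
  have h1 : ((m:ℝ)+1)^m * lam^(m+1) * Real.exp (-((m:ℝ)+1)*lam) / (Nat.factorial (m+1))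
      ≤ ((m:ℝ)+1)^(m+1) / (Nat.factorial (m+1)) * (lam^(m+1) * Real.exp (-((m:ℝ)+1)*lam)) := by
    rw [div_mul_eq_mul_div]
    apply div_le_div_of_nonneg_right ?_ (by positivity)
    have : ((m:ℝ)+1)^m ≤ ((m:ℝ)+1)^(m+1) := by
      apply pow_le_pow_right₀ (by linarith [Nat.cast_nonneg (α := ℝ) m])
      omega
    nlinarith [pow_nonneg h0 (m+1), Real.exp_pos (-((m:ℝ)+1)*lam), this,
      mul_le_mul_of_nonneg_right this (mul_nonneg (pow_nonneg h0 (m+1)) (Real.exp_pos (-((m:ℝ)+1)*lam)).le)]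
  calc ((m:ℝ)+1)^m * lam^(m+1) * Real.exp (-((m:ℝ)+1)*lam) / (Nat.factorial (m+1))
      ≤ ((m:ℝ)+1)^(m+1) / (Nat.factorial (m+1)) * (lam^(m+1) * Real.exp (-((m:ℝ)+1)*lam)) := h1
    _ ≤ Real.exp ((m:ℝ)+1) * (lam^(m+1) * Real.exp (-((m:ℝ)+1)*lam)) := by
        apply mul_le_mul_of_nonneg_right (pow_succ_div_factorial_le m) (by positivity)
    _ = (lam * Real.exp (1-lam))^(m+1) := by
        have he : Real.exp ((m:ℝ)+1) * Real.exp (-((m:ℝ)+1)*lam)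
            = Real.exp (((m+1:ℕ):ℝ)*(1-lam)) := by
          rw [← Real.exp_add]; congr 1; push_cast; ring
        rw [mul_pow, ← Real.exp_nat_mul]
        linear_combination (lam^(m+1)) * he

lemma dbterm_le {lam : ℝ} (h0 : 0 ≤ lam) (h1 : lam ≤ 1) (m : ℕ) :
    |dbterm lam m| ≤ Real.exp 1 * (lam * Real.exp (1-lam))^m := by
  have hnn : 0 ≤ dbterm lam m := by
    unfold dbterm
    have h2 : (0:ℝ) ≤ 1 - lam := by linarith
    have h3 : (0:ℝ) ≤ ((m:ℝ)+1)^(m+1) := by positivity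
    have h6 : (0:ℝ) ≤ ((Nat.factorial (m+1) : ℕ) : ℝ) := by positivity
    apply div_nonneg _ h6
    exact mul_nonneg (mul_nonneg (mul_nonneg h3 h2) (pow_nonneg h0 m)) (Real.exp_pos _).le
  rw [abs_of_nonneg hnn]
  unfold dbterm
  calc ((m:ℝ)+1)^(m+1) * (1-lam) * lam^m * Real.exp (-((m:ℝ)+1)*lam) / (Nat.factorial (m+1))
      ≤ ((m:ℝ)+1)^(m+1) / (Nat.factorial (m+1)) * (lam^m * Real.exp (-((m:ℝ)+1)*lam)) := by
        rw [div_mul_eq_mul_div]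
        apply div_le_div_of_nonneg_right ?_ (by positivity)
        nlinarith [pow_nonneg (by linarith [Nat.cast_nonneg (α := ℝ) m] : (0:ℝ) ≤ (m:ℝ)+1) (m+1),
          pow_nonneg h0 m, Real.exp_pos (-((m:ℝ)+1)*lam),
          mul_nonneg (mul_nonneg (pow_nonneg (by linarith [Nat.cast_nonneg (α := ℝ) m] : (0:ℝ) ≤ (m:ℝ)+1) (m+1)) (pow_nonneg h0 m)) (Real.exp_pos (-((m:ℝ)+1)*lam)).le]
    _ ≤ Real.exp ((m:ℝ)+1) * (lam^m * Real.exp (-((m:ℝ)+1)*lam)) := by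
        apply mul_le_mul_of_nonneg_right (pow_succ_div_factorial_le m) (by positivity)
    _ = Real.exp 1 * (lam * Real.exp (1-lam))^m * Real.exp (-lam) := by
        have he : Real.exp ((m:ℝ)+1) * Real.exp (-((m:ℝ)+1)*lam)
            = Real.exp 1 * Real.exp (((m:ℕ):ℝ)*(1-lam)) * Real.exp (-lam) := by
          rw [← Real.exp_add, ← Real.exp_add, ← Real.exp_add]; congr 1; push_cast; ring
        rw [mul_pow, ← Real.exp_nat_mul]
        linear_combination (lam^m) * he
    _ ≤ Real.exp 1 * (lam * Real.exp (1-lam))^m := by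
        have : Real.exp (-lam) ≤ 1 := Real.exp_le_one_iff.mpr (by linarith)
        nlinarith [mul_nonneg (Real.exp_pos 1).le (pow_nonneg (mul_nonneg h0 (Real.exp_pos (1-lam)).le) m)]

lemma qmono {x y : ℝ} (hx : 0 ≤ x) (hxy : x ≤ y) (hy : y ≤ 1) :
    x * Real.exp (1-x) ≤ y * Real.exp (1-y) := by
  have h := Real.add_one_le_exp (x - y)
  have hy0 : 0 ≤ y := le_trans hx hxy
  have key : x ≤ y * Real.exp (x - y) := by
    have h2 : y * (x - y + 1) ≤ y * Real.exp (x - y) :=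
      mul_le_mul_of_nonneg_left h hy0
    nlinarith
  calc x * Real.exp (1-x) ≤ (y * Real.exp (x-y)) * Real.exp (1-x) :=
        mul_le_mul_of_nonneg_right key (Real.exp_pos _).le
    _ = y * Real.exp ((x-y)+(1-x)) := by rw [mul_assoc, ← Real.exp_add]
    _ = y * Real.exp (1-y) := by congr 1; ring

lemma qlt1 {x : ℝ} (hx : 0 ≤ x) (h1 : x < 1) : x * Real.exp (1-x) < 1 := by
  rcases eq_or_lt_of_le hx with h | h
  · rw [← h]; norm_num
  · have hne : x - 1 ≠ 0 := by intro hc; apply absurd h1; linarith [sub_eq_zero.mp hc]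
    have := Real.add_one_lt_exp hne
    -- x - 1 + 1 < exp (x-1), i.e. x < exp (x-1)
    have hx1 : x < Real.exp (x-1) := by linarith
    have hpos := Real.exp_pos (1-x)
    have hmul : x * Real.exp (1-x) < Real.exp (x-1) * Real.exp (1-x) :=
      mul_lt_mul_of_pos_right hx1 hpos
    rw [← Real.exp_add] at hmul
    simpa using hmul

lemma summable_shift_pow (c : ℕ) {q : ℝ} (hq0 : 0 < q) (hq : q < 1) :
    Summable (fun m : ℕ => ((m:ℝ)+1)^c * q^m) := by
  have h : Summable (fun n : ℕ => (n:ℝ)^c * q^n) := by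
    have := summable_pow_mul_geometric_of_norm_lt_one (R := ℝ) c
      (r := q) (by rwa [Real.norm_eq_abs, abs_of_pos hq0])
    exact this
  have h2 : Summable (fun m : ℕ => ((m+1:ℕ):ℝ)^c * q^(m+1)) := by
    exact (summable_nat_add_iff 1).2 h
  have h3 : Summable (fun m : ℕ => q⁻¹ * (((m+1:ℕ):ℝ)^c * q^(m+1))) := h2.mul_left _
  apply h3.congr
  intro m
  push_cast
  rw [pow_succ]
  field_simp

lemma bterm_zero (m : ℕ) : bterm 0 m = 0 := by
  unfold bterm
  rw [zero_pow (Nat.succ_ne_zero m)]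
  ring

lemma summable_g {lam : ℝ} (h0 : 0 ≤ lam) (h1 : lam < 1) (c : ℕ) :
    Summable (fun m : ℕ => ((m:ℝ)+1)^c * bterm lam m) := by
  rcases eq_or_lt_of_le h0 with hl | hl
  · apply summable_zero.congr
    intro m
    rw [← hl, bterm_zero]
    ring
  · set q := lam * Real.exp (1-lam) with hqdef
    have hq1 : q < 1 := qlt1 h0 h1
    have hq0 : 0 < q := by positivity
    have hs := summable_shift_pow c hq0 hq1
    have hs2 : Summable (fun m : ℕ => ((m:ℝ)+1)^c * q^(m+1)) := by
      apply (hs.mul_left q).congr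
      intro m
      rw [pow_succ]
      ring
    exact Summable.of_nonneg_of_le
      (fun m => mul_nonneg (by positivity) (bterm_nonneg h0 m))
      (fun m => mul_le_mul_of_nonneg_left (bterm_le h0 m) (by positivity)) hs2

lemma hasDerivAt_bterm (m : ℕ) (lam : ℝ) :
    HasDerivAt (fun x => bterm x m) (dbterm lam m) lam := by
  have h1 : HasDerivAt (fun x : ℝ => x^(m+1)) (((m+1:ℕ):ℝ) * lam^m) lam := by
    simpa using hasDerivAt_pow (m+1) lam
  have h2 : HasDerivAt (fun x : ℝ => Real.exp (-((m:ℝ)+1)*x))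
      (Real.exp (-((m:ℝ)+1)*lam) * (-((m:ℝ)+1))) lam := by
    have hlin : HasDerivAt (fun x : ℝ => -((m:ℝ)+1)*x) (-((m:ℝ)+1)) lam := by
      simpa using (hasDerivAt_id lam).const_mul (-((m:ℝ)+1))
    exact (Real.hasDerivAt_exp (-((m:ℝ)+1)*lam)).comp lam hlin
  have h3 := h1.mul h2
  have h4 := h3.const_mul (((m:ℝ)+1)^m / (Nat.factorial (m+1) : ℝ))
  have e : (fun x => bterm x m)
      = fun x => (((m:ℝ)+1)^m / (Nat.factorial (m+1) : ℝ))
          * (x^(m+1) * Real.exp (-((m:ℝ)+1)*x)) := by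
    funext z; unfold bterm; ring
  rw [e]
  refine h4.congr_deriv (Eq.symm ?_)
  unfold dbterm
  push_cast
  field_simp
  ring

lemma hasDerivAt_tsum_g (c : ℕ) {x0 : ℝ} (h0 : 0 < x0) (h1 : x0 < 1) :
    HasDerivAt (fun x => ∑' m : ℕ, ((m:ℝ)+1)^c * bterm x m)
      ((1-x0)/x0 * ∑' m : ℕ, ((m:ℝ)+1)^(c+1) * bterm x0 m) x0 := by
  set b := (1+x0)/2 with hbdef
  have hb1 : b < 1 := by rw [hbdef]; linarith
  have hb0 : 0 < b := by rw [hbdef]; linarith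
  have hx0b : x0 < b := by rw [hbdef]; linarith
  set qb := b * Real.exp (1-b) with hqbdef
  have hqb0 : 0 < qb := by positivity
  have hqb1 : qb < 1 := qlt1 hb0.le hb1
  have hu : Summable (fun m : ℕ => Real.exp 1 * (((m:ℝ)+1)^c * qb^m)) :=
    (summable_shift_pow c hqb0 hqb1).mul_left _
  have hg : ∀ (m : ℕ) (y : ℝ), y ∈ Set.Ioo (0:ℝ) b →
      HasDerivAt (fun x => ((m:ℝ)+1)^c * bterm x m) (((m:ℝ)+1)^c * dbterm y m) y :=
    fun m y _ => (hasDerivAt_bterm m y).const_mul _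
  have hg' : ∀ (m : ℕ) (y : ℝ), y ∈ Set.Ioo (0:ℝ) b →
      ‖((m:ℝ)+1)^c * dbterm y m‖ ≤ Real.exp 1 * (((m:ℝ)+1)^c * qb^m) := by
    intro m y hy
    obtain ⟨hy0, hyb⟩ := hy
    rw [Real.norm_eq_abs, abs_mul, abs_of_nonneg (by positivity : (0:ℝ) ≤ ((m:ℝ)+1)^c)]
    have hd := dbterm_le hy0.le (by linarith) m
    have hq : (y * Real.exp (1-y))^m ≤ qb^m := by
      apply pow_le_pow_left₀ (by positivity)
      exact qmono hy0.le hyb.le hb1.le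
    calc ((m:ℝ)+1)^c * |dbterm y m|
        ≤ ((m:ℝ)+1)^c * (Real.exp 1 * (y * Real.exp (1-y))^m) :=
          mul_le_mul_of_nonneg_left hd (by positivity)
      _ ≤ ((m:ℝ)+1)^c * (Real.exp 1 * qb^m) := by
          apply mul_le_mul_of_nonneg_left ?_ (by positivity)
          exact mul_le_mul_of_nonneg_left hq (Real.exp_pos 1).le
      _ = Real.exp 1 * (((m:ℝ)+1)^c * qb^m) := by ring
  have hx0mem : x0 ∈ Set.Ioo (0:ℝ) b := ⟨h0, hx0b⟩
  have hsum0 : Summable (fun m : ℕ => ((m:ℝ)+1)^c * bterm x0 m) := summable_g h0.le h1 c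
  have H := hasDerivAt_tsum_of_isPreconnected hu isOpen_Ioo isPreconnected_Ioo
    hg hg' hx0mem hsum0 hx0mem
  refine H.congr_deriv (Eq.symm ?_)
  rw [← tsum_mul_left]
  apply tsum_congr
  intro m
  unfold bterm dbterm
  have hne : x0 ≠ 0 := ne_of_gt h0
  have hfne : ((Nat.factorial (m+1) : ℕ) : ℝ) ≠ 0 := by positivity
  rw [pow_succ ((m:ℝ)+1) c, pow_succ ((m:ℝ)+1) m, pow_succ x0 m]
  field_simp

lemma summable_bterm {lam : ℝ} (h0 : 0 ≤ lam) (h1 : lam < 1) :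
    Summable (fun m : ℕ => bterm lam m) :=
  (summable_g h0 h1 0).congr (fun m => by rw [pow_zero, one_mul])

lemma summable_sneg {lam : ℝ} (h0 : 0 ≤ lam) (h1 : lam < 1) :
    Summable (fun m : ℕ => bterm lam m / ((m:ℝ)+1)) := by
  apply Summable.of_nonneg_of_le
    (fun m => div_nonneg (bterm_nonneg h0 m) (by positivity))
    (fun m => div_le_self (bterm_nonneg h0 m) (by linarith [Nat.cast_nonneg (α := ℝ) m]))
    (summable_bterm h0 h1)

lemma hasDerivAt_tsum_sneg {x0 : ℝ} (h0 : 0 < x0) (h1 : x0 < 1) :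
    HasDerivAt (fun x => ∑' m : ℕ, bterm x m / ((m:ℝ)+1))
      ((1-x0)/x0 * ∑' m : ℕ, bterm x0 m) x0 := by
  set b := (1+x0)/2 with hbdef
  have hb1 : b < 1 := by rw [hbdef]; linarith
  have hb0 : 0 < b := by rw [hbdef]; linarith
  have hx0b : x0 < b := by rw [hbdef]; linarith
  set qb := b * Real.exp (1-b) with hqbdef
  have hqb0 : 0 < qb := by positivity
  have hqb1 : qb < 1 := qlt1 hb0.le hb1
  have hu : Summable (fun m : ℕ => Real.exp 1 * (((m:ℝ)+1)^0 * qb^m)) :=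
    (summable_shift_pow 0 hqb0 hqb1).mul_left _
  have hg : ∀ (m : ℕ) (y : ℝ), y ∈ Set.Ioo (0:ℝ) b →
      HasDerivAt (fun x => bterm x m / ((m:ℝ)+1)) (dbterm y m / ((m:ℝ)+1)) y := by
    intro m y _
    simpa [div_eq_inv_mul] using (hasDerivAt_bterm m y).const_mul (((m:ℝ)+1)⁻¹)
  have hg' : ∀ (m : ℕ) (y : ℝ), y ∈ Set.Ioo (0:ℝ) b →
      ‖dbterm y m / ((m:ℝ)+1)‖ ≤ Real.exp 1 * (((m:ℝ)+1)^0 * qb^m) := by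
    intro m y hy
    obtain ⟨hy0, hyb⟩ := hy
    rw [Real.norm_eq_abs, abs_div, abs_of_nonneg (by positivity : (0:ℝ) ≤ (m:ℝ)+1)]
    have hd := dbterm_le hy0.le (by linarith) m
    have hq : (y * Real.exp (1-y))^m ≤ qb^m := by
      apply pow_le_pow_left₀ (by positivity)
      exact qmono hy0.le hyb.le hb1.le
    have h1' : |dbterm y m| / ((m:ℝ)+1) ≤ |dbterm y m| :=
      div_le_self (abs_nonneg _) (by linarith [Nat.cast_nonneg (α := ℝ) m])
    calc |dbterm y m| / ((m:ℝ)+1) ≤ |dbterm y m| := h1'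
      _ ≤ Real.exp 1 * (y * Real.exp (1-y))^m := hd
      _ ≤ Real.exp 1 * qb^m := mul_le_mul_of_nonneg_left hq (Real.exp_pos 1).le
      _ = Real.exp 1 * (((m:ℝ)+1)^0 * qb^m) := by rw [pow_zero, one_mul]
  have hx0mem : x0 ∈ Set.Ioo (0:ℝ) b := ⟨h0, hx0b⟩
  have hsum0 : Summable (fun m : ℕ => bterm x0 m / ((m:ℝ)+1)) := summable_sneg h0.le h1
  have H := hasDerivAt_tsum_of_isPreconnected hu isOpen_Ioo isPreconnected_Ioo
    hg hg' hx0mem hsum0 hx0mem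
  refine H.congr_deriv (Eq.symm ?_)
  rw [← tsum_mul_left]
  apply tsum_congr
  intro m
  unfold bterm dbterm
  have hne : x0 ≠ 0 := ne_of_gt h0
  have hfne : ((Nat.factorial (m+1) : ℕ) : ℝ) ≠ 0 := by positivity
  have hm1 : ((m:ℝ)+1) ≠ 0 := by positivity
  rw [pow_succ ((m:ℝ)+1) m, pow_succ x0 m]
  field_simp

lemma bterm_mul (lam : ℝ) {n k : ℕ} (hk : k ≤ n) :
    bterm lam k * bterm lam (n-k)
      = (((n+2).choose (k+1) : ℝ) * ((k:ℝ)+1)^k * (((n-k:ℕ):ℝ)+1)^(n-k))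
        * (lam^(n+2) * Real.exp (-((n:ℝ)+2)*lam) / (Nat.factorial (n+2))) := by
  unfold bterm
  have hexp : Real.exp (-((k:ℝ)+1)*lam) * Real.exp (-(((n-k:ℕ):ℝ)+1)*lam)
      = Real.exp (-((n:ℝ)+2)*lam) := by
    rw [← Real.exp_add]; congr 1; rw [Nat.cast_sub hk]; ring
  have hlam : lam^(k+1) * lam^((n-k)+1) = lam^(n+2) := by
    rw [← pow_add]; congr 1; omega
  have hfac : ((n+2).choose (k+1) : ℝ) * (Nat.factorial (k+1) : ℝ)
      * (Nat.factorial ((n-k)+1) : ℝ) = (Nat.factorial (n+2) : ℝ) := by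
    have h := Nat.choose_mul_factorial_mul_factorial (show k+1 ≤ n+2 by omega)
    have h2 : n+2-(k+1) = (n-k)+1 := by omega
    rw [h2] at h
    exact_mod_cast h
  have hf1 : (Nat.factorial (k+1) : ℝ) ≠ 0 := by positivity
  have hf2 : (Nat.factorial ((n-k)+1) : ℝ) ≠ 0 := by positivity
  have hchoose : ((n+2).choose (k+1) : ℝ) ≠ 0 := by
    have := Nat.choose_pos (show k+1 ≤ n+2 by omega)
    positivity
  calc ((k:ℝ)+1)^k * lam^(k+1) * Real.exp (-((k:ℝ)+1)*lam) / (Nat.factorial (k+1))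
        * ((((n-k:ℕ):ℝ)+1)^(n-k) * lam^((n-k)+1) * Real.exp (-(((n-k:ℕ):ℝ)+1)*lam)
            / (Nat.factorial ((n-k)+1)))
      = ((k:ℝ)+1)^k * (((n-k:ℕ):ℝ)+1)^(n-k) * (lam^(k+1) * lam^((n-k)+1))
          * (Real.exp (-((k:ℝ)+1)*lam) * Real.exp (-(((n-k:ℕ):ℝ)+1)*lam))
          / ((Nat.factorial (k+1) : ℝ) * (Nat.factorial ((n-k)+1) : ℝ)) := by
        ring
    _ = ((k:ℝ)+1)^k * (((n-k:ℕ):ℝ)+1)^(n-k) * lam^(n+2) * Real.exp (-((n:ℝ)+2)*lam)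
          / ((Nat.factorial (k+1) : ℝ) * (Nat.factorial ((n-k)+1) : ℝ)) := by
        rw [hlam, hexp]
    _ = (((n+2).choose (k+1) : ℝ) * ((k:ℝ)+1)^k * (((n-k:ℕ):ℝ)+1)^(n-k))
          * (lam^(n+2) * Real.exp (-((n:ℝ)+2)*lam) / (Nat.factorial (n+2))) := by
        rw [← hfac]
        field_simp

lemma conv_sum (lam : ℝ) (n : ℕ) :
    ∑ p ∈ Finset.HasAntidiagonal.antidiagonal n, bterm lam p.1 * bterm lam p.2
      = 2*((n:ℝ)+1)/((n:ℝ)+2) * bterm lam (n+1) := by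
  rw [Finset.Nat.sum_antidiagonal_eq_sum_range_succ_mk]
  have step : ∀ k ∈ range (n+1), bterm lam k * bterm lam (n-k)
      = (((n+2).choose (k+1) : ℝ) * ((k:ℝ)+1)^k * (((n:ℝ)+1)-(k:ℝ))^(n-k))
        * (lam^(n+2) * Real.exp (-((n:ℝ)+2)*lam) / (Nat.factorial (n+2))) := by
    intro k hk
    have hk' : k ≤ n := by have := Finset.mem_range.mp hk; omega
    rw [bterm_mul lam hk']
    have hb : (((n:ℝ)+1)-(k:ℝ)) = ((n-k:ℕ):ℝ)+1 := by rw [Nat.cast_sub hk']; ring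
    rw [hb]
  rw [Finset.sum_congr rfl step, ← Finset.sum_mul, key_identity n]
  unfold bterm
  have hne : ((n:ℝ)+2) ≠ 0 := by positivity
  have hfne : (Nat.factorial (n+2) : ℝ) ≠ 0 := by positivity
  push_cast
  rw [show (n:ℝ)+1+1 = (n:ℝ)+2 from by ring, show n+1+1 = n+2 from by omega,
    pow_succ ((n:ℝ)+2) n]
  field_simp

lemma sneg_rel {lam : ℝ} (h0 : 0 ≤ lam) (h1 : lam < 1) :
    (∑' m : ℕ, bterm lam m) * (∑' m : ℕ, bterm lam m)
      = 2 * (∑' m : ℕ, bterm lam m) - 2 * (∑' m : ℕ, bterm lam m / ((m:ℝ)+1)) := by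
  have hb := summable_bterm h0 h1
  have hsn := summable_sneg h0 h1
  have hnorm : Summable (fun m : ℕ => ‖bterm lam m‖) := by
    apply hb.congr
    intro m
    rw [Real.norm_eq_abs, abs_of_nonneg (bterm_nonneg h0 m)]
  have hC := tsum_mul_tsum_eq_tsum_sum_antidiagonal_of_summable_norm hnorm hnorm
  rw [hC]
  have hf : Summable (fun m : ℕ => 2 * bterm lam m - 2 * (bterm lam m / ((m:ℝ)+1))) :=
    (hb.mul_left 2).sub (hsn.mul_left 2)
  have e1 : ∑' m : ℕ, (2 * bterm lam m - 2 * (bterm lam m / ((m:ℝ)+1)))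
      = ∑' n : ℕ, ∑ p ∈ Finset.HasAntidiagonal.antidiagonal n, bterm lam p.1 * bterm lam p.2 := by
    rw [Summable.tsum_eq_zero_add hf]
    norm_num
    apply tsum_congr
    intro n
    rw [conv_sum lam n]
    push_cast
    have hne : ((n:ℝ)+2) ≠ 0 := by positivity
    field_simp
    ring
  rw [← e1, Summable.tsum_sub (hb.mul_left 2) (hsn.mul_left 2), tsum_mul_left, tsum_mul_left]

noncomputable def Fb (lam : ℝ) : ℝ := ∑' m : ℕ, bterm lam m
noncomputable def S1b (lam : ℝ) : ℝ := ∑' m : ℕ, ((m:ℝ)+1)^1 * bterm lam m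
noncomputable def S2b (lam : ℝ) : ℝ := ∑' m : ℕ, ((m:ℝ)+1)^2 * bterm lam m
noncomputable def Gb (lam : ℝ) : ℝ := ∑' m : ℕ, bterm lam m / ((m:ℝ)+1)

lemma hasDerivAt_Fb {x : ℝ} (h0 : 0 < x) (h1 : x < 1) :
    HasDerivAt Fb ((1-x)/x * S1b x) x := by
  have h := hasDerivAt_tsum_g 0 h0 h1
  have e : (fun y => ∑' m : ℕ, ((m:ℝ)+1)^0 * bterm y m) = Fb := by
    funext y; exact tsum_congr fun m => by rw [pow_zero, one_mul]
  have e2 : (∑' m : ℕ, ((m:ℝ)+1)^(0+1) * bterm x m) = S1b x := by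
    unfold S1b; norm_num
  rw [e, e2] at h
  exact h

lemma hasDerivAt_S1b {x : ℝ} (h0 : 0 < x) (h1 : x < 1) :
    HasDerivAt S1b ((1-x)/x * S2b x) x := by
  have h := hasDerivAt_tsum_g 1 h0 h1
  have e : (fun y => ∑' m : ℕ, ((m:ℝ)+1)^1 * bterm y m) = S1b := rfl
  have e2 : (∑' m : ℕ, ((m:ℝ)+1)^(1+1) * bterm x m) = S2b x := by
    unfold S2b; norm_num
  rw [e, e2] at h
  exact h

lemma hasDerivAt_Gb {x : ℝ} (h0 : 0 < x) (h1 : x < 1) :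
    HasDerivAt Gb ((1-x)/x * Fb x) x :=
  hasDerivAt_tsum_sneg h0 h1

lemma Gb_eq {lam : ℝ} (h0 : 0 ≤ lam) (h1 : lam < 1) :
    Gb lam = Fb lam - Fb lam^2/2 := by
  have h := sneg_rel h0 h1
  unfold Gb Fb
  unfold Fb at h  -- no-op safe
  nlinarith [h]

lemma deriv_rel {x : ℝ} (h0 : 0 < x) (h1 : x < 1) :
    Fb x = S1b x * (1 - Fb x) := by
  have hFb := hasDerivAt_Fb h0 h1
  have hGb := hasDerivAt_Gb h0 h1
  have hpow : HasDerivAt (fun y => Fb y^2) (2 * Fb x ^ 1 * ((1-x)/x * S1b x)) x :=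
    hFb.pow 2
  have hRHS : HasDerivAt (fun y => Fb y - Fb y^2/2)
      (((1-x)/x * S1b x) - (2 * Fb x ^ 1 * ((1-x)/x * S1b x))/2) x :=
    hFb.sub (hpow.div_const 2)
  have heq : Gb =ᶠ[nhds x] (fun y => Fb y - Fb y^2/2) := by
    filter_upwards [Ioo_mem_nhds h0 h1] with y hy
    exact Gb_eq hy.1.le hy.2
  have hde : deriv Gb x = deriv (fun y => Fb y - Fb y^2/2) x := heq.deriv_eq
  rw [hGb.deriv, hRHS.deriv] at hde
  -- (1-x)/x * Fb x = (1-x)/x * S1b x - Fb x * ((1-x)/x * S1b x)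
  have hne : (1-x)/x ≠ 0 := by
    apply div_ne_zero <;> [linarith; linarith]
  apply mul_left_cancel₀ hne
  rw [hde]
  ring

noncomputable def Hb (lam : ℝ) : ℝ := Fb lam * Real.exp (-Fb lam) - lam * Real.exp (-lam)

lemma hasDerivAt_Hb {x : ℝ} (h0 : 0 < x) (h1 : x < 1) :
    HasDerivAt Hb ((1-x)/x * Hb x) x := by
  have hxne : x ≠ 0 := ne_of_gt h0
  have hFb := hasDerivAt_Fb h0 h1
  have hexpF : HasDerivAt (fun y => Real.exp (-Fb y))
      (Real.exp (-Fb x) * (-((1-x)/x * S1b x))) x :=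
    by have := (Real.hasDerivAt_exp (-Fb x)).comp x hFb.neg; exact this
  have h1' : HasDerivAt (fun y => Fb y * Real.exp (-Fb y))
      (((1-x)/x * S1b x) * Real.exp (-Fb x)
        + Fb x * (Real.exp (-Fb x) * (-((1-x)/x * S1b x)))) x := hFb.mul hexpF
  have hexpx : HasDerivAt (fun y : ℝ => Real.exp (-y)) (Real.exp (-x) * (-1)) x :=
    (Real.hasDerivAt_exp (-x)).comp x (hasDerivAt_id x).neg
  have h2' : HasDerivAt (fun y : ℝ => y * Real.exp (-y))
      (1 * Real.exp (-x) + x * (Real.exp (-x) * (-1))) x := (hasDerivAt_id x).mul hexpx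
  have h3 := h1'.sub h2'
  have e : Hb = fun y => Fb y * Real.exp (-Fb y) - y * Real.exp (-y) := rfl
  rw [e]
  refine h3.congr_deriv (Eq.symm ?_)
  have hrel := deriv_rel h0 h1
  have hinv : x⁻¹ * x = 1 := inv_mul_cancel₀ hxne
  simp only
  linear_combination ((1-x)/x * Real.exp (-Fb x)) * hrel
    + (-((1-x)*Real.exp (-x))) * hinv

noncomputable def GG (lam : ℝ) : ℝ := Hb lam * Real.exp lam / lam

lemma hasDerivAt_GG {x : ℝ} (h0 : 0 < x) (h1 : x < 1) : HasDerivAt GG 0 x := by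
  have hxne : x ≠ 0 := ne_of_gt h0
  have hH := hasDerivAt_Hb h0 h1
  have hnum : HasDerivAt (fun y => Hb y * Real.exp y)
      ((1-x)/x * Hb x * Real.exp x + Hb x * Real.exp x) x := hH.mul (Real.hasDerivAt_exp x)
  have h := hnum.div (hasDerivAt_id x) hxne
  have e : GG = fun y => Hb y * Real.exp y / y := rfl
  rw [e]
  refine h.congr_deriv (Eq.symm ?_)
  have hinv : x⁻¹ * x = 1 := inv_mul_cancel₀ hxne
  simp only [id_eq]
  rw [eq_comm, div_eq_zero_iff]
  left
  linear_combination ((1-x) * Hb x * Real.exp x) * hinv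

lemma GG_eq_of_le {x y : ℝ} (hx : x ∈ Set.Ioo (0:ℝ) 1) (hy : y ∈ Set.Ioo (0:ℝ) 1)
    (hxy : x ≤ y) : GG y = GG x := by
  have hsub : Set.Icc x y ⊆ Set.Ioo (0:ℝ) 1 := fun z hz =>
    ⟨lt_of_lt_of_le hx.1 hz.1, lt_of_le_of_lt hz.2 hy.2⟩
  have hcont : ContinuousOn GG (Set.Icc x y) := fun z hz =>
    ((hasDerivAt_GG (hsub hz).1 (hsub hz).2).differentiableAt.continuousAt).continuousWithinAt
  have hderiv : ∀ z ∈ Set.Ico x y, HasDerivWithinAt GG 0 (Set.Ici z) z := by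
    intro z hz
    have hz' : z ∈ Set.Ioo (0:ℝ) 1 := hsub ⟨hz.1, hz.2.le⟩
    exact (hasDerivAt_GG hz'.1 hz'.2).hasDerivWithinAt
  exact constant_of_has_deriv_right_zero hcont hderiv y ⟨hxy, le_refl y⟩

lemma bterm_zero_idx (lam : ℝ) : bterm lam 0 = lam * Real.exp (-lam) := by
  unfold bterm
  norm_num

lemma Fb_lower {lam : ℝ} (h0 : 0 ≤ lam) (h1 : lam < 1) :
    lam * Real.exp (-lam) ≤ Fb lam := by
  rw [← bterm_zero_idx lam]
  exact Summable.le_tsum (summable_bterm h0 h1) 0 (fun m _ => bterm_nonneg h0 m)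

lemma Fb_nonneg {lam : ℝ} (h0 : 0 ≤ lam) (h1 : lam < 1) : 0 ≤ Fb lam := by
  have := Fb_lower h0 h1
  nlinarith [Real.exp_pos (-lam)]

lemma Fb_upper {lam : ℝ} (h0 : 0 < lam) (h4 : lam ≤ 1/4) :
    Fb lam ≤ lam * Real.exp (-lam) + 4*(lam * Real.exp (1-lam))^2 := by
  have h1 : lam < 1 := lt_of_le_of_lt h4 (by norm_num)
  have hb := summable_bterm h0.le h1
  set q := lam * Real.exp (1-lam) with hq
  have hq0 : 0 < q := by positivity
  have hq34 : q ≤ 3/4 := by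
    have hm : q ≤ (1/4) * Real.exp (1-(1/4)) := qmono h0.le h4 (by norm_num)
    have : Real.exp (1-(1/4:ℝ)) ≤ Real.exp 1 := by
      apply Real.exp_le_exp.mpr; norm_num
    have he : Real.exp 1 < 3 := by
      have := Real.exp_one_lt_d9
      linarith
    nlinarith
  have hq1 : q < 1 := by linarith
  rw [Fb, Summable.tsum_eq_zero_add hb, bterm_zero_idx]
  have htail : ∑' m : ℕ, bterm lam (m+1) ≤ ∑' m : ℕ, q^(m+2) := by
    apply Summable.tsum_le_tsum
    · intro m
      have := bterm_le h0.le (m+1)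
      simpa using this
    · exact (summable_nat_add_iff 1).2 hb
    · have : Summable (fun m : ℕ => q^m) := summable_geometric_of_lt_one hq0.le hq1
      exact ((this.mul_left (q^2)).congr (fun m => by rw [← pow_add]; ring_nf))
  have hgeo : ∑' m : ℕ, q^(m+2) = q^2 * (1-q)⁻¹ := by
    have h1' : ∑' m : ℕ, q^(m+2) = ∑' m : ℕ, q^2 * q^m := by
      apply tsum_congr; intro m; rw [← pow_add]; ring_nf
    rw [h1', tsum_mul_left, tsum_geometric_of_lt_one hq0.le hq1]
  have hfin : q^2 * (1-q)⁻¹ ≤ 4*q^2 := by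
    have h14 : (1:ℝ)/4 ≤ 1 - q := by linarith
    have : (1-q)⁻¹ ≤ 4 := by
      rw [inv_le_comm₀ (by linarith) (by norm_num)]
      linarith
    nlinarith
  have := htail.trans (le_of_eq hgeo)
  nlinarith [this, hfin]

lemma Fb_tendsto : Filter.Tendsto Fb (nhdsWithin 0 (Set.Ioi 0)) (nhds 0) := by
  have hU : Filter.Tendsto (fun lam : ℝ => lam * Real.exp (-lam) + 4*(lam * Real.exp (1-lam))^2)
      (nhdsWithin 0 (Set.Ioi 0)) (nhds 0) := by
    have hc : Continuous (fun lam : ℝ => lam * Real.exp (-lam) + 4*(lam * Real.exp (1-lam))^2) := by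
      continuity
    have := (hc.tendsto 0).mono_left (nhdsWithin_le_nhds (s := Set.Ioi (0:ℝ)))
    simpa using this
  have hmem : Set.Ioo (0:ℝ) (1/4) ∈ nhdsWithin (0:ℝ) (Set.Ioi 0) :=
    Ioo_mem_nhdsGT_of_mem ⟨le_refl 0, by norm_num⟩
  apply tendsto_of_tendsto_of_tendsto_of_le_of_le' tendsto_const_nhds hU
  · filter_upwards [hmem] with lam hlam
    exact Fb_nonneg hlam.1.le (by linarith [hlam.2])
  · filter_upwards [hmem] with lam hlam
    exact Fb_upper hlam.1 hlam.2.le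

lemma Fbdiv_tendsto : Filter.Tendsto (fun lam => Fb lam / lam)
    (nhdsWithin 0 (Set.Ioi 0)) (nhds 1) := by
  have hL : Filter.Tendsto (fun lam : ℝ => Real.exp (-lam))
      (nhdsWithin 0 (Set.Ioi 0)) (nhds 1) := by
    have hc : Continuous (fun lam : ℝ => Real.exp (-lam)) := by continuity
    have := (hc.tendsto 0).mono_left (nhdsWithin_le_nhds (s := Set.Ioi (0:ℝ)))
    simpa using this
  have hU : Filter.Tendsto (fun lam : ℝ => Real.exp (-lam) + 4*lam*(Real.exp (1-lam))^2)
      (nhdsWithin 0 (Set.Ioi 0)) (nhds 1) := by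
    have hc : Continuous (fun lam : ℝ => Real.exp (-lam) + 4*lam*(Real.exp (1-lam))^2) := by
      continuity
    have := (hc.tendsto 0).mono_left (nhdsWithin_le_nhds (s := Set.Ioi (0:ℝ)))
    simpa using this
  have hmem : Set.Ioo (0:ℝ) (1/4) ∈ nhdsWithin (0:ℝ) (Set.Ioi 0) :=
    Ioo_mem_nhdsGT_of_mem ⟨le_refl 0, by norm_num⟩
  apply tendsto_of_tendsto_of_tendsto_of_le_of_le' hL hU
  · filter_upwards [hmem] with lam hlam
    rw [le_div_iff₀ hlam.1]
    have := Fb_lower hlam.1.le (by linarith [hlam.2])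
    linarith
  · filter_upwards [hmem] with lam hlam
    rw [div_le_iff₀ hlam.1]
    have := Fb_upper hlam.1 hlam.2.le
    nlinarith [this]

lemma GG_tendsto : Filter.Tendsto GG (nhdsWithin 0 (Set.Ioi 0)) (nhds 0) := by
  have hexpF : Filter.Tendsto (fun lam => Real.exp (-Fb lam))
      (nhdsWithin 0 (Set.Ioi 0)) (nhds 1) := by
    have hc : Continuous (fun t : ℝ => Real.exp (-t)) := by continuity
    have := (hc.tendsto 0).comp Fb_tendsto
    simpa [Function.comp_def] using this
  have hexpl : Filter.Tendsto (fun lam : ℝ => Real.exp lam)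
      (nhdsWithin 0 (Set.Ioi 0)) (nhds 1) := by
    have := (Real.continuous_exp.tendsto 0).mono_left
      (nhdsWithin_le_nhds (s := Set.Ioi (0:ℝ)))
    simpa using this
  have hexpnl : Filter.Tendsto (fun lam : ℝ => Real.exp (-lam))
      (nhdsWithin 0 (Set.Ioi 0)) (nhds 1) := by
    have hc : Continuous (fun lam : ℝ => Real.exp (-lam)) := by continuity
    have := (hc.tendsto 0).mono_left (nhdsWithin_le_nhds (s := Set.Ioi (0:ℝ)))
    simpa using this
  have hmain : Filter.Tendsto
      (fun lam => ((Fb lam / lam) * Real.exp (-Fb lam) - Real.exp (-lam)) * Real.exp lam)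
      (nhdsWithin 0 (Set.Ioi 0)) (nhds 0) := by
    have := ((Fbdiv_tendsto.mul hexpF).sub hexpnl).mul hexpl
    simpa using this
  apply hmain.congr'
  filter_upwards [self_mem_nhdsWithin] with lam hlam
  have hne : lam ≠ 0 := ne_of_gt hlam
  unfold GG Hb
  field_simp

lemma GG_zero {x : ℝ} (hx : x ∈ Set.Ioo (0:ℝ) 1) : GG x = 0 := by
  have hconst : Filter.Tendsto GG (nhdsWithin 0 (Set.Ioi 0)) (nhds (GG x)) := by
    apply Filter.Tendsto.congr' ?_ (tendsto_const_nhds (x := GG x))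
    filter_upwards [Ioo_mem_nhdsGT_of_mem ⟨le_refl (0:ℝ), hx.1⟩] with y hy
    exact GG_eq_of_le ⟨hy.1, lt_trans hy.2 hx.2⟩ hx hy.2.le
  exact tendsto_nhds_unique hconst GG_tendsto

lemma Hb_zero {x : ℝ} (hx : x ∈ Set.Ioo (0:ℝ) 1) :
    Fb x * Real.exp (-Fb x) = x * Real.exp (-x) := by
  have h := GG_zero hx
  unfold GG at h
  rcases div_eq_zero_iff.mp h with h' | h'
  · rcases mul_eq_zero.mp h' with h'' | h''
    · unfold Hb at h''; linarith
    · exact absurd h'' (Real.exp_ne_zero x)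
  · exact absurd h' (ne_of_gt hx.1)

lemma gmono : StrictMonoOn (fun t : ℝ => t * Real.exp (-t)) (Set.Icc 0 1) := by
  apply strictMonoOn_of_deriv_pos (convex_Icc 0 1)
  · have : Continuous (fun t : ℝ => t * Real.exp (-t)) := by continuity
    exact this.continuousOn
  · intro t ht
    rw [interior_Icc] at ht
    have hg : HasDerivAt (fun t : ℝ => t * Real.exp (-t))
        (1 * Real.exp (-t) + t * (Real.exp (-t) * (-1))) t :=
      (hasDerivAt_id t).mul ((Real.hasDerivAt_exp (-t)).comp t (hasDerivAt_id t).neg)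
    rw [hg.deriv]
    have := Real.exp_pos (-t)
    nlinarith [ht.1, ht.2]

lemma Fb_small {lam : ℝ} (h0 : 0 < lam) (hs : lam ≤ 1/100) : Fb lam < 1 := by
  have h4 : lam ≤ 1/4 := by linarith
  have hup := Fb_upper h0 h4
  have he : Real.exp (1-lam) ≤ 3 := by
    calc Real.exp (1-lam) ≤ Real.exp 1 := Real.exp_le_exp.mpr (by linarith)
      _ ≤ 3 := by linarith [Real.exp_one_lt_d9]
  have h3 : lam * Real.exp (1-lam) ≤ lam * 3 := mul_le_mul_of_nonneg_left he h0.le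
  have hq0 : (0:ℝ) ≤ lam * Real.exp (1-lam) := by positivity
  have h9 : (lam * Real.exp (1-lam))^2 ≤ (lam * 3)^2 := by
    exact pow_le_pow_left₀ hq0 h3 2
  have hll : lam * Real.exp (-lam) ≤ lam := by
    have := Real.exp_le_one_iff.mpr (by linarith : -lam ≤ 0)
    nlinarith
  nlinarith [h9, hll, hup]

lemma Fb_ne_one {x : ℝ} (hx : x ∈ Set.Ioo (0:ℝ) 1) : Fb x ≠ 1 := by
  intro h
  have hz := Hb_zero hx
  rw [h] at hz
  have hlt := gmono (Set.mem_Icc.mpr ⟨hx.1.le, hx.2.le⟩)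
    (Set.mem_Icc.mpr ⟨zero_le_one, le_refl 1⟩) hx.2
  simp only at hlt
  rw [← hz] at hlt
  simp at hlt

lemma Fb_lt_one {x : ℝ} (hx : x ∈ Set.Ioo (0:ℝ) 1) : Fb x < 1 := by
  rcases le_or_gt x (1/100) with hc | hc
  · exact Fb_small hx.1 hc
  · by_contra hge
    push_neg at hge
    have hne := Fb_ne_one hx
    have hcont : ContinuousOn Fb (Set.Icc (1/100) x) := by
      intro z hz
      have hz' : z ∈ Set.Ioo (0:ℝ) 1 := ⟨by linarith [hz.1], lt_of_le_of_lt hz.2 hx.2⟩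
      exact ((hasDerivAt_Fb hz'.1 hz'.2).differentiableAt.continuousAt).continuousWithinAt
    have hsub := intermediate_value_Icc (by linarith : (1/100:ℝ) ≤ x) hcont
    have h1mem : (1:ℝ) ∈ Set.Icc (Fb (1/100)) (Fb x) :=
      ⟨(Fb_small (by norm_num) le_rfl).le, hge⟩
    obtain ⟨c, hc1, hc2⟩ := hsub h1mem
    have hcio : c ∈ Set.Ioo (0:ℝ) 1 := ⟨by linarith [hc1.1], lt_of_le_of_lt hc1.2 hx.2⟩
    exact Fb_ne_one hcio hc2

lemma Fb_eq_id {x : ℝ} (hx : x ∈ Set.Ioo (0:ℝ) 1) : Fb x = x := by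
  apply gmono.injOn (Set.mem_Icc.mpr ⟨Fb_nonneg hx.1.le hx.2, (Fb_lt_one hx).le⟩)
    (Set.mem_Icc.mpr ⟨hx.1.le, hx.2.le⟩)
  exact Hb_zero hx

lemma S1b_eq {x : ℝ} (hx : x ∈ Set.Ioo (0:ℝ) 1) : S1b x = x / (1-x) := by
  have hFd := hasDerivAt_Fb hx.1 hx.2
  have heq : Fb =ᶠ[nhds x] id := by
    filter_upwards [Ioo_mem_nhds hx.1 hx.2] with y hy
    exact Fb_eq_id hy
  have h1 : deriv Fb x = 1 := by
    rw [heq.deriv_eq, deriv_id]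
  rw [hFd.deriv] at h1
  have hne1 : (1:ℝ) - x ≠ 0 := by have := hx.2; intro hc; linarith [sub_eq_zero.mp hc]
  have hne0 : x ≠ 0 := ne_of_gt hx.1
  field_simp at h1 ⊢
  linarith [h1]

lemma S2b_eq {x : ℝ} (hx : x ∈ Set.Ioo (0:ℝ) 1) : S2b x = x / (1-x)^3 := by
  have hSd := hasDerivAt_S1b hx.1 hx.2
  have hne1 : (1:ℝ) - x ≠ 0 := by have := hx.2; intro hc; linarith [sub_eq_zero.mp hc]
  have hne0 : x ≠ 0 := ne_of_gt hx.1
  have heq : S1b =ᶠ[nhds x] (fun y => y / (1-y)) := by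
    filter_upwards [Ioo_mem_nhds hx.1 hx.2] with y hy
    exact S1b_eq hy
  have hq : HasDerivAt (fun y : ℝ => y/(1-y))
      ((1*(1-x) - x*(0-1))/(1-x)^2) x := by
    exact (hasDerivAt_id x).div ((hasDerivAt_const x 1).sub (hasDerivAt_id x)) hne1
  have h1 : deriv S1b x = (1*(1-x) - x*(0-1))/(1-x)^2 := by
    rw [heq.deriv_eq, hq.deriv]
  rw [hSd.deriv] at h1
  field_simp at h1 ⊢
  nlinarith [h1]

noncomputable def uterm (lam : ℝ) (m : ℕ) : ℝ :=
  ((m:ℝ)+1) * (m:ℝ)^m * lam^m * Real.exp (-(m:ℝ)*lam) / (Nat.factorial m)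

lemma uterm_succ (lam : ℝ) (m : ℕ) :
    uterm lam (m+1) = ((m:ℝ)+1)^2 * bterm lam m + ((m:ℝ)+1)^1 * bterm lam m := by
  unfold uterm bterm
  have hfac : ((Nat.factorial (m+1) : ℕ):ℝ) = ((m:ℝ)+1) * ((Nat.factorial m : ℕ):ℝ) := by
    rw [Nat.factorial_succ]; push_cast; ring
  push_cast
  rw [hfac]
  have hm1 : ((m:ℝ)+1) ≠ 0 := by positivity
  have hfm : ((Nat.factorial m : ℕ):ℝ) ≠ 0 := by positivity
  field_simp
  ring

lemma summable_uterm {lam : ℝ} (h0 : 0 ≤ lam) (h1 : lam < 1) : Summable (uterm lam) := by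
  rw [← summable_nat_add_iff 1]
  apply ((summable_g h0 h1 2).add (summable_g h0 h1 1)).congr
  intro m
  exact (uterm_succ lam m).symm

lemma tsum_uterm {lam : ℝ} (hmem : lam ∈ Set.Ioo (0:ℝ) 1) :
    ∑' m : ℕ, uterm lam m = 1 + (lam/(1-lam)^3 + lam/(1-lam)) := by
  have h0 := hmem.1
  have h1 := hmem.2
  rw [Summable.tsum_eq_zero_add (summable_uterm h0.le h1)]
  have hu0 : uterm lam 0 = 1 := by simp [uterm]
  rw [hu0]
  congr 1
  calc ∑' m : ℕ, uterm lam (m+1)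
      = ∑' m : ℕ, (((m:ℝ)+1)^2 * bterm lam m + ((m:ℝ)+1)^1 * bterm lam m) :=
        tsum_congr (uterm_succ lam)
    _ = S2b lam + S1b lam := by
        rw [Summable.tsum_add (summable_g h0.le h1 2) (summable_g h0.le h1 1)]; rfl
    _ = lam/(1-lam)^3 + lam/(1-lam) := by rw [S2b_eq hmem, S1b_eq hmem]

/-- Second moment of the inter-decode-time distribution:
`E[X²] = ((1-λ+λ²)/(1-λ)²) E[X] = ((1-λ+λ²)/(1-λ)³) λ e^{-λ}`. -/
theorem stmt3 (lam : ℝ) (h0 : 0 < lam) (h1 : lam < 1) :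
    ∑' x : ℕ, (x : ℝ) ^ 2 *
      (if x = 0 then Real.exp (-lam)
       else if x = 1 then lam * Real.exp (-lam)
       else (((x - 1 : ℕ) ^ (x - 2) : ℕ) : ℝ) / ((x : ℝ) * (Nat.factorial (x - 2)))
            * lam ^ x * Real.exp (-(x : ℝ) * lam))
      = ((1 - lam + lam ^ 2) / (1 - lam) ^ 2) * ((lam / (1 - lam)) * Real.exp (-lam)) ∧
    ((1 - lam + lam ^ 2) / (1 - lam) ^ 2) * ((lam / (1 - lam)) * Real.exp (-lam))
      = ((1 - lam + lam ^ 2) / (1 - lam) ^ 3) * (lam * Real.exp (-lam)) := by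
  have hne1 : (1:ℝ) - lam ≠ 0 := by
    intro hc
    have := sub_eq_zero.mp hc
    linarith
  have hmem : lam ∈ Set.Ioo (0:ℝ) 1 := ⟨h0, h1⟩
  constructor
  · set f : ℕ → ℝ := fun x => (x : ℝ) ^ 2 *
      (if x = 0 then Real.exp (-lam)
       else if x = 1 then lam * Real.exp (-lam)
       else (((x - 1 : ℕ) ^ (x - 2) : ℕ) : ℝ) / ((x : ℝ) * (Nat.factorial (x - 2)))
            * lam ^ x * Real.exp (-(x : ℝ) * lam)) with hfdef
    have hterm : ∀ m : ℕ, f (m+1) = lam * Real.exp (-lam) * uterm lam m := by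
      intro m
      match m with
      | 0 =>
        rw [hfdef]
        norm_num [uterm]
      | (j+1) =>
        rw [hfdef]
        simp only
        have hne02 : j+1+1 ≠ 0 := by omega
        have hne12 : j+1+1 ≠ 1 := by omega
        rw [if_neg hne02, if_neg hne12]
        have hsub1 : (j+1+1) - 1 = j+1 := by omega
        have hsub2 : (j+1+1) - 2 = j := by omega
        rw [hsub1, hsub2]
        unfold uterm
        have hfac : ((Nat.factorial (j+1) : ℕ):ℝ) = ((j:ℝ)+1) * ((Nat.factorial j : ℕ):ℝ) := by
          rw [Nat.factorial_succ]; push_cast; ring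
        push_cast
        have hexp : Real.exp (-((j:ℝ)+1+1)*lam)
            = Real.exp (-lam) * Real.exp (-((j:ℝ)+1)*lam) := by
          rw [← Real.exp_add]; congr 1; ring
        rw [hexp, hfac]
        have hj2 : ((j:ℝ)+1+1) ≠ 0 := by positivity
        have hj1 : ((j:ℝ)+1) ≠ 0 := by positivity
        have hfj : ((Nat.factorial j : ℕ):ℝ) ≠ 0 := by positivity
        field_simp
        ring
    have hshift : Summable (fun m : ℕ => f (m+1)) := by
      apply (((summable_uterm h0.le h1).mul_left (lam * Real.exp (-lam)))).congr
      intro m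
      exact (hterm m).symm
    have hsum : Summable f := (summable_nat_add_iff 1).mp hshift
    rw [Summable.tsum_eq_zero_add hsum]
    have hf0 : f 0 = 0 := by rw [hfdef]; norm_num
    rw [hf0, zero_add]
    calc ∑' m : ℕ, f (m+1) = ∑' m : ℕ, lam * Real.exp (-lam) * uterm lam m :=
          tsum_congr hterm
      _ = lam * Real.exp (-lam) * ∑' m : ℕ, uterm lam m := tsum_mul_left
      _ = lam * Real.exp (-lam) * (1 + (lam/(1-lam)^3 + lam/(1-lam))) := by
          rw [tsum_uterm hmem]
      _ = ((1 - lam + lam ^ 2) / (1 - lam) ^ 2) * ((lam / (1 - lam)) * Real.exp (-lam)) := by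
          field_simp
          ring
  · field_simp
end

section
/- Let λ ∈ (0,1), let X have pmf P(X=0) = e^{-λ}, P(X=1) = λe^{-λ}, P(X=x) = ((x-1)^{x-2}/(x(x-2)!)) λ^x e^{-xλ} for x ≥ 2, and let W = max(X, 1). Then E[W] = E[X]/λ = e^{-λ}/(1-λ). -/
open Finset

/-- alternating-sign finite differences of `(k+1)^j`. -/
lemma alt_sum : ∀ m : ℕ, ∀ j ≤ m,
    ∑ k ∈ range (m+1), (-1:ℝ)^k * (m.choose k) * ((k:ℝ)+1)^j
      = if j = m then (-1:ℝ)^m * (m.factorial : ℝ) else 0 := by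
  intro m
  induction m with
  | zero =>
    intro j hj
    interval_cases j
    simp
  | succ m ih =>
    intro j hj
    -- peel first term and use Pascal
    have step1 : ∑ k ∈ range (m+2), (-1:ℝ)^k * ((m+1).choose k) * ((k:ℝ)+1)^j
        = -(∑ i ∈ range (m+1), (-1:ℝ)^i * (m.choose i) * (((i:ℝ)+1)+1)^j)
          - (∑ i ∈ range (m+1), (-1:ℝ)^i * (m.choose (i+1)) * (((i:ℝ)+1)+1)^j) + 1 := by
      rw [Finset.sum_range_succ' (fun k => (-1:ℝ)^k * ((m+1).choose k) * ((k:ℝ)+1)^j) (m+1)]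
      have : ∀ i ∈ range (m+1),
          (-1:ℝ)^(i+1) * ((m+1).choose (i+1)) * (((i+1:ℕ):ℝ)+1)^j
          = -((-1:ℝ)^i * (m.choose i) * (((i:ℝ)+1)+1)^j)
            - ((-1:ℝ)^i * (m.choose (i+1)) * (((i:ℝ)+1)+1)^j) := by
        intro i _
        rw [Nat.choose_succ_succ]
        push_cast
        ring
      rw [Finset.sum_congr rfl this, Finset.sum_sub_distrib, Finset.sum_neg_distrib]
      norm_num
    -- second sum equals 1 - T j
    have step2 : ∑ i ∈ range (m+1), (-1:ℝ)^i * (m.choose (i+1)) * (((i:ℝ)+1)+1)^j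
        = 1 - ∑ k ∈ range (m+1), (-1:ℝ)^k * (m.choose k) * ((k:ℝ)+1)^j := by
      have h1 : ∑ k ∈ range (m+1), (-1:ℝ)^k * (m.choose k) * ((k:ℝ)+1)^j
          = ∑ i ∈ range m, (-1:ℝ)^(i+1) * (m.choose (i+1)) * (((i+1:ℕ):ℝ)+1)^j + 1 := by
        rw [Finset.sum_range_succ' (fun k => (-1:ℝ)^k * (m.choose k) * ((k:ℝ)+1)^j) m]
        norm_num
      have h2 : ∑ i ∈ range (m+1), (-1:ℝ)^i * (m.choose (i+1)) * (((i:ℝ)+1)+1)^j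
          = ∑ i ∈ range m, (-1:ℝ)^i * (m.choose (i+1)) * (((i:ℝ)+1)+1)^j := by
        rw [Finset.sum_range_succ]
        simp [Nat.choose_succ_self]
      have h3 : ∀ i ∈ range m, (-1:ℝ)^(i+1) * (m.choose (i+1)) * (((i+1:ℕ):ℝ)+1)^j
          = -((-1:ℝ)^i * (m.choose (i+1)) * (((i:ℝ)+1)+1)^j) := by
        intro i _
        push_cast
        ring
      rw [h2, h1, Finset.sum_congr rfl h3, Finset.sum_neg_distrib]
      ring
    -- first sum: binomial expansion
    have step3 : ∑ i ∈ range (m+1), (-1:ℝ)^i * (m.choose i) * (((i:ℝ)+1)+1)^j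
        = (∑ t ∈ range j, (j.choose t : ℝ) *
            ∑ k ∈ range (m+1), (-1:ℝ)^k * (m.choose k) * ((k:ℝ)+1)^t)
          + ∑ k ∈ range (m+1), (-1:ℝ)^k * (m.choose k) * ((k:ℝ)+1)^j := by
      have expand : ∀ i ∈ range (m+1), (-1:ℝ)^i * (m.choose i) * (((i:ℝ)+1)+1)^j
          = ∑ t ∈ range (j+1), (j.choose t : ℝ) * ((-1:ℝ)^i * (m.choose i) * ((i:ℝ)+1)^t) := by
        intro i _
        rw [add_pow]
        rw [Finset.mul_sum]
        refine Finset.sum_congr rfl fun t _ => ?_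
        ring
      rw [Finset.sum_congr rfl expand, Finset.sum_comm]
      rw [Finset.sum_range_succ]
      simp only [Nat.choose_self, Nat.cast_one, one_mul]
      congr 1
      exact Finset.sum_congr rfl fun t _ => (Finset.mul_sum _ _ _).symm
    rw [step1, step2, step3]
    have tless : ∀ t ∈ range j, (j.choose t : ℝ) *
        (∑ k ∈ range (m+1), (-1:ℝ)^k * (m.choose k) * ((k:ℝ)+1)^t)
        = if t = m then (j.choose t : ℝ) * ((-1:ℝ)^m * (m.factorial : ℝ)) else 0 := by
      intro t ht
      have ht' := Finset.mem_range.1 ht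
      rw [ih t (by omega)]
      split <;> simp
    rw [Finset.sum_congr rfl tless, Finset.sum_ite_eq' (range j) m
      (fun t => (j.choose t : ℝ) * ((-1:ℝ)^m * (m.factorial : ℝ)))]
    by_cases hj' : j = m + 1
    · subst hj'
      have hm : m ∈ range (m+1) := by simp
      rw [if_pos hm, if_pos rfl]
      rw [Nat.choose_succ_self_right]
      rw [Nat.factorial_succ]
      push_cast
      ring
    · have hj'' : j ≤ m := by omega
      have hm : m ∉ range j := by simp; omega
      rw [if_neg hm, if_neg hj']
      ring


noncomputable def bA (k : ℕ) : ℝ := ((k:ℝ)+1)^k / (k.factorial : ℝ)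

lemma bA_pos (k : ℕ) : 0 < bA k := by
  unfold bA; positivity

lemma bA_le (k : ℕ) : bA k ≤ Real.exp ((k:ℝ)+1) := by
  have h := Real.pow_div_factorial_le_exp (x := (k:ℝ)+1) (by positivity) k
  simpa [bA] using h

lemma alt_sum2 (m : ℕ) :
    ∑ k ∈ range (m+1), (-1:ℝ)^(m-k) * (m.choose k) * ((k:ℝ)+1)^m
      = (m.factorial : ℝ) := by
  have h := alt_sum m m le_rfl
  rw [if_pos rfl] at h
  have hsign : ∀ k ∈ range (m+1), (-1:ℝ)^(m-k) * (m.choose k) * ((k:ℝ)+1)^m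
      = (-1:ℝ)^m * ((-1:ℝ)^k * (m.choose k) * ((k:ℝ)+1)^m) := by
    intro k hk
    have hk' : k ≤ m := by simpa using Nat.lt_succ_iff.1 (Finset.mem_range.1 hk)
    obtain ⟨d, rfl⟩ := Nat.exists_eq_add_of_le hk'
    have : k + d - k = d := by omega
    rw [this, pow_add]
    have h2 : ((-1:ℝ)^(k*2)) = 1 := Even.neg_one_pow ⟨k, by omega⟩
    ring_nf
    rw [h2]
    ring
  rw [Finset.sum_congr rfl hsign, ← Finset.mul_sum, h, ← mul_assoc, ← pow_add]
  rw [Even.neg_one_pow ⟨m, rfl⟩, one_mul]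

/-- the coefficient of `x^m` in the rearranged double series equals 1 -/
lemma coeff_eq (m : ℕ) :
    ∑ k ∈ range (m+1),
      bA k * ((-((k:ℝ)+1))^(m-k) / (((m-k).factorial : ℝ))) = 1 := by
  have key := alt_sum2 m
  have hfac : (m.factorial : ℝ) ≠ 0 := Nat.cast_ne_zero.2 m.factorial_ne_zero
  have congr1 : ∀ k ∈ range (m+1),
      bA k * ((-((k:ℝ)+1))^(m-k) / (((m-k).factorial : ℝ)))
      = ((-1:ℝ)^(m-k) * (m.choose k) * ((k:ℝ)+1)^m) / (m.factorial : ℝ) := by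
    intro k hk
    have hk' : k ≤ m := by simpa using Nat.lt_succ_iff.1 (Finset.mem_range.1 hk)
    have hchoose : (m.choose k : ℝ) = (m.factorial : ℝ) /
        ((k.factorial : ℝ) * (((m-k).factorial : ℝ))) := Nat.cast_choose ℝ hk'
    have hkf : (k.factorial : ℝ) ≠ 0 := Nat.cast_ne_zero.2 k.factorial_ne_zero
    have hmkf : (((m-k).factorial : ℝ)) ≠ 0 := Nat.cast_ne_zero.2 (m-k).factorial_ne_zero
    have hpow : (-((k:ℝ)+1))^(m-k) = (-1:ℝ)^(m-k) * ((k:ℝ)+1)^(m-k) := by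
      rw [neg_pow]
    have hsplit : ((k:ℝ)+1)^k * ((k:ℝ)+1)^(m-k) = ((k:ℝ)+1)^m := by
      rw [← pow_add, Nat.add_sub_cancel' hk']
    rw [hpow, hchoose, ← hsplit]
    unfold bA
    field_simp
  rw [Finset.sum_congr rfl congr1, ← Finset.sum_div, key, div_self hfac]


lemma exp_series (y : ℝ) : Real.exp y = ∑' j : ℕ, y^j / (j.factorial : ℝ) := by
  rw [Real.exp_eq_exp_ℝ, NormedSpace.exp_eq_tsum_div]

lemma tsum_antidiag (f : ℕ × ℕ → ℝ) (hsum : Summable f) :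
    ∑' p : ℕ × ℕ, f p = ∑' n : ℕ, ∑ p ∈ antidiagonal n, f p := by
  have hs : Summable (f ∘ Finset.HasAntidiagonal.sigmaAntidiagonalEquivProd) :=
    Finset.HasAntidiagonal.sigmaAntidiagonalEquivProd.summable_iff.2 hsum
  calc ∑' p : ℕ × ℕ, f p
      = ∑' c, (f ∘ Finset.HasAntidiagonal.sigmaAntidiagonalEquivProd) c :=
        (Finset.HasAntidiagonal.sigmaAntidiagonalEquivProd.tsum_eq f).symm
    _ = ∑' (n : ℕ) (c : {x // x ∈ antidiagonal n}),
          (f ∘ Finset.HasAntidiagonal.sigmaAntidiagonalEquivProd) ⟨n, c⟩ := Summable.tsum_sigma hs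
    _ = ∑' n : ℕ, ∑ p ∈ antidiagonal n, f p :=
        tsum_congr fun n => Finset.tsum_subtype (antidiagonal n) f

lemma exp_term_bound {x : ℝ} (hx0 : 0 ≤ x) (s : ℝ) (k : ℕ) :
    bA k * x^k * Real.exp (((k:ℝ)+1) * s) ≤ Real.exp (1+s) * (x * Real.exp (1+s))^k := by
  have h1 : bA k ≤ Real.exp ((k:ℝ)+1) := bA_le k
  have e1 : Real.exp ((k:ℝ)+1) * Real.exp (((k:ℝ)+1)*s) = Real.exp (((k:ℝ)+1)*(1+s)) := by
    rw [← Real.exp_add]; congr 1; ring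
  have e2 : Real.exp (1+s) * Real.exp ((k:ℝ)*(1+s)) = Real.exp (((k:ℝ)+1)*(1+s)) := by
    rw [← Real.exp_add]; congr 1; ring
  have key : Real.exp ((k:ℝ)+1) * x^k * Real.exp (((k:ℝ)+1)*s)
      = Real.exp (1+s) * (x * Real.exp (1+s))^k := by
    rw [mul_pow, ← Real.exp_nat_mul, mul_right_comm, e1,
      show Real.exp (1+s) * (x^k * Real.exp ((k:ℝ)*(1+s)))
        = Real.exp (1+s) * Real.exp ((k:ℝ)*(1+s)) * x^k from by ring, e2,
      mul_comm]
  rw [← key]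
  have := mul_le_mul_of_nonneg_right h1 (pow_nonneg hx0 k)
  exact mul_le_mul_of_nonneg_right this (Real.exp_pos _).le

lemma summable_major {x : ℝ} (hx0 : 0 ≤ x) (s : ℝ) (hr : x * Real.exp (1+s) < 1) :
    Summable (fun k : ℕ => bA k * x^k * Real.exp (((k:ℝ)+1) * s)) := by
  refine Summable.of_nonneg_of_le
    (fun k => by have := bA_pos k; positivity)
    (fun k => exp_term_bound hx0 s k) ?_
  exact (summable_geometric_of_lt_one
    (mul_nonneg hx0 (Real.exp_pos _).le) hr).mul_left _

lemma ratio_small {x : ℝ} (hx0 : 0 ≤ x) (hx1 : x < 1/8) : x * Real.exp (1+x) < 1 := by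
  have he2 : Real.exp 2 < 8 := by
    have h := Real.exp_one_lt_d9
    have h2 : Real.exp 2 = Real.exp 1 * Real.exp 1 := by
      rw [← Real.exp_add]; norm_num
    rw [h2]
    nlinarith [Real.exp_pos 1]
  have h1 : Real.exp (1+x) ≤ Real.exp 2 := Real.exp_le_exp.2 (by linarith)
  calc x * Real.exp (1+x) ≤ x * Real.exp 2 :=
        mul_le_mul_of_nonneg_left h1 hx0
    _ < 1 := by nlinarith [Real.exp_pos 2]

lemma ratio_one {x : ℝ} (hx0 : 0 ≤ x) (hx1 : x < 1) : x * Real.exp (1+(-x)) < 1 := by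
  rcases eq_or_lt_of_le hx0 with h|h
  · rw [← h]; norm_num
  · have hlog := Real.log_lt_sub_one_of_pos h (ne_of_lt hx1)
    have key : Real.exp (Real.log x + (1 + (-x))) = x * Real.exp (1+(-x)) := by
      rw [Real.exp_add, Real.exp_log h]
    rw [← key]
    have h2 : Real.exp (Real.log x + (1 + (-x))) < Real.exp 0 :=
      Real.exp_lt_exp.2 (by linarith)
    simpa using h2

lemma summable_H {x : ℝ} (hx0 : 0 ≤ x) (hx1 : x < 1) :
    Summable (fun k : ℕ => bA k * x^k * Real.exp (-((k:ℝ)+1) * x)) := by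
  have h := summable_major hx0 (-x) (ratio_one hx0 hx1)
  refine (summable_congr fun k => ?_).2 h
  congr 1
  ring_nf

/-- the summand of the double series -/
noncomputable def dbl (x : ℝ) (p : ℕ × ℕ) : ℝ :=
  bA p.1 * x^p.1 * ((-((p.1:ℝ)+1) * x)^p.2 / (p.2.factorial : ℝ))

lemma dbl_abs {x : ℝ} (hx0 : 0 < x) (k j : ℕ) :
    |dbl x (k, j)| = bA k * x^k * ((((k:ℝ)+1) * x)^j / (j.factorial : ℝ)) := by
  unfold dbl
  simp only [abs_mul, abs_div, abs_pow, abs_neg]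
  rw [abs_of_pos (bA_pos k), abs_of_pos hx0, Nat.abs_cast,
    abs_of_nonneg (show (0:ℝ) ≤ (k:ℝ)+1 by positivity)]

lemma dbl_summable {x : ℝ} (hx0 : 0 < x) (hx1 : x < 1/8) : Summable (dbl x) := by
  have row : ∀ k : ℕ, Summable (fun j : ℕ => |dbl x (k, j)|) := by
    intro k
    refine (summable_congr fun j => (dbl_abs hx0 k j).symm).1 ?_
    exact (Real.summable_pow_div_factorial _).mul_left _
  have col : Summable (fun k : ℕ => ∑' j : ℕ, |dbl x (k, j)|) := by
    refine (summable_congr fun k => ?_).2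
      (summable_major hx0.le x (ratio_small hx0.le hx1))
    calc (∑' j, |dbl x (k, j)|)
        = ∑' j, (bA k * x^k) * ((((k:ℝ)+1) * x)^j / (j.factorial : ℝ)) :=
          tsum_congr fun j => dbl_abs hx0 k j
      _ = bA k * x^k * Real.exp (((k:ℝ)+1) * x) := by
          rw [tsum_mul_left, ← exp_series]
  exact Summable.of_abs
    ((summable_prod_of_nonneg (fun p => abs_nonneg _)).2 ⟨row, col⟩)

lemma dbl_rows {x : ℝ} (k : ℕ) :
    bA k * x^k * Real.exp (-((k:ℝ)+1) * x) = ∑' j, dbl x (k, j) := by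
  have hco : ∀ j : ℕ, dbl x (k, j)
      = (bA k * x^k) * ((-((k:ℝ)+1) * x)^j / (j.factorial : ℝ)) := fun j => rfl
  rw [exp_series, tsum_congr hco, tsum_mul_left]

lemma dbl_diag {x : ℝ} (hx0 : 0 < x) (n : ℕ) :
    ∑ p ∈ antidiagonal n, dbl x p = x^n := by
  rw [Finset.Nat.sum_antidiagonal_eq_sum_range_succ_mk]
  have hterm : ∀ k ∈ range (n+1),
      dbl x (k, n - k)
        = (bA k * ((-((k:ℝ)+1))^(n-k) / (((n-k).factorial : ℝ)))) * x^n := by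
    intro k hk
    have hk' : k ≤ n := by simpa using Nat.lt_succ_iff.1 (Finset.mem_range.1 hk)
    have hxs : x^k * x^(n-k) = x^n := by rw [← pow_add, Nat.add_sub_cancel' hk']
    unfold dbl
    rw [mul_pow, ← hxs]
    have hf : (((n-k).factorial : ℝ)) ≠ 0 := Nat.cast_ne_zero.2 (n-k).factorial_ne_zero
    field_simp
  rw [Finset.sum_congr rfl hterm, ← Finset.sum_mul, coeff_eq, one_mul]

/-- key small-x identity -/
lemma small_eq {x : ℝ} (hx0 : 0 < x) (hx1 : x < 1/8) :
    ∑' k : ℕ, bA k * x^k * Real.exp (-((k:ℝ)+1) * x) = 1/(1-x) := by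
  have hsum := dbl_summable hx0 hx1
  calc ∑' k : ℕ, bA k * x^k * Real.exp (-((k:ℝ)+1) * x)
      = ∑' (k : ℕ) (j : ℕ), dbl x (k, j) := tsum_congr fun k => dbl_rows k
    _ = ∑' p : ℕ × ℕ, dbl x p := (Summable.tsum_prod hsum).symm
    _ = ∑' n : ℕ, ∑ p ∈ antidiagonal n, dbl x p := tsum_antidiag _ hsum
    _ = ∑' n : ℕ, x^n := tsum_congr fun n => dbl_diag hx0 n
    _ = (1-x)⁻¹ := tsum_geometric_of_lt_one hx0.le (by linarith)
    _ = 1/(1-x) := (one_div _).symm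


noncomputable def Spow : ℝ → ℝ := fun y => ∑' k : ℕ, bA k * y^k

noncomputable def Hfun : ℝ → ℝ := fun x => Spow (x * Real.exp (-x)) * Real.exp (-x)

lemma Hfun_eq (x : ℝ) :
    Hfun x = ∑' k : ℕ, bA k * x^k * Real.exp (-((k:ℝ)+1) * x) := by
  unfold Hfun Spow
  rw [← tsum_mul_right]
  refine tsum_congr fun k => ?_
  have hexp : Real.exp ((k:ℝ) * (-x)) * Real.exp (-x) = Real.exp (-((k:ℝ)+1) * x) := by
    rw [← Real.exp_add]; congr 1; ring
  rw [mul_pow, ← Real.exp_nat_mul, mul_assoc, mul_assoc, hexp, ← mul_assoc]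

lemma Spow_analytic {y : ℝ} (hy : |y| < (Real.exp 1)⁻¹) : AnalyticAt ℝ Spow y := by
  set p := FormalMultilinearSeries.ofScalars ℝ (fun k => bA k) with hp
  have hepos : (0:ℝ) < (Real.exp 1)⁻¹ := by positivity
  set rr : ℝ := (|y| + (Real.exp 1)⁻¹) / 2 with hrr
  have hrr0 : 0 < rr := by positivity
  have hylt : |y| < rr := by rw [hrr]; linarith [abs_nonneg y]
  have hrlt : rr < (Real.exp 1)⁻¹ := by rw [hrr]; linarith
  set r : NNReal := ⟨rr, hrr0.le⟩ with hr
  -- norm bound on p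
  have hnorm : ∀ n : ℕ, ‖p n‖ = bA n := by
    intro n
    show ‖bA n • ContinuousMultilinearMap.mkPiAlgebraFin ℝ n ℝ‖ = bA n
    rw [norm_smul (bA n) (ContinuousMultilinearMap.mkPiAlgebraFin ℝ n ℝ),
      ContinuousMultilinearMap.norm_mkPiAlgebraFin, mul_one,
      Real.norm_eq_abs, abs_of_pos (bA_pos n)]
  -- summability of ‖p n‖ * r^n
  have hsummable : Summable (fun n : ℕ => ‖p n‖ * (r:ℝ)^n) := by
    have hbound : ∀ n : ℕ, ‖p n‖ * (r:ℝ)^n ≤ Real.exp 1 * (Real.exp 1 * rr)^n := by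
      intro n
      rw [hnorm n]
      have h1 : bA n ≤ Real.exp ((n:ℝ)+1) := bA_le n
      have h2 : Real.exp ((n:ℝ)+1) = Real.exp 1 * (Real.exp 1)^n := by
        rw [← Real.exp_nat_mul, ← Real.exp_add]; congr 1; ring
      have h3 : (r:ℝ)^n = rr^n := rfl
      rw [h3, mul_pow]
      calc bA n * rr^n ≤ Real.exp ((n:ℝ)+1) * rr^n :=
            mul_le_mul_of_nonneg_right h1 (pow_nonneg hrr0.le n)
        _ = Real.exp 1 * ((Real.exp 1)^n * rr^n) := by rw [h2]; ring
    refine Summable.of_nonneg_of_le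
      (fun n => mul_nonneg (norm_nonneg _) (pow_nonneg (NNReal.coe_nonneg r) n))
      hbound ?_
    refine Summable.mul_left _ (summable_geometric_of_lt_one ?_ ?_)
    · positivity
    · calc Real.exp 1 * rr < Real.exp 1 * (Real.exp 1)⁻¹ :=
            mul_lt_mul_of_pos_left hrlt (Real.exp_pos 1)
        _ = 1 := mul_inv_cancel₀ (Real.exp_pos 1).ne'
  have hradius : (r : ENNReal) ≤ p.radius := p.le_radius_of_summable hsummable
  have hrpos : (0 : ENNReal) < p.radius :=
    lt_of_lt_of_le (by exact_mod_cast hrr0) hradius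
  have hball := p.hasFPowerSeriesOnBall hrpos
  have hmem : y ∈ Metric.eball (0:ℝ) p.radius := by
    rw [EMetric.mem_ball, edist_dist, Real.dist_eq, sub_zero]
    calc ENNReal.ofReal |y| < (r : ENNReal) := by
          rw [show ((r:ENNReal)) = ENNReal.ofReal rr from (ENNReal.ofReal_eq_coe_nnreal hrr0.le).symm]
          exact ENNReal.ofReal_lt_ofReal_iff_of_nonneg (abs_nonneg _) |>.2 hylt
      _ ≤ p.radius := hradius
  have hAA : AnalyticAt ℝ p.sum y := hball.analyticAt_of_mem hmem
  have heq : Spow = p.sum := by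
    funext z
    unfold Spow
    rw [hp, FormalMultilinearSeries.sum]
    refine tsum_congr fun n => ?_
    rw [FormalMultilinearSeries.ofScalars_apply_eq, smul_eq_mul]
  rw [heq]
  exact hAA

lemma uxe_lt {x : ℝ} (hx0 : 0 < x) (hx1 : x < 1) :
    |x * Real.exp (-x)| < (Real.exp 1)⁻¹ := by
  have h := ratio_one hx0.le hx1
  have hxe : 0 < x * Real.exp (-x) := by positivity
  rw [abs_of_pos hxe]
  rw [show (Real.exp 1)⁻¹ = 1 / Real.exp 1 from (one_div _).symm,
    lt_div_iff₀ (Real.exp_pos 1)]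
  have e : x * Real.exp (-x) * Real.exp 1 = x * Real.exp (1 + -x) := by
    rw [Real.exp_add]; ring
  rw [e]
  exact h

lemma Hfun_analytic : AnalyticOnNhd ℝ Hfun (Set.Ioo (0:ℝ) 1) := by
  intro x hx
  have h1 : AnalyticAt ℝ (fun z : ℝ => z * Real.exp (-z)) x :=
    analyticAt_id.mul (analyticAt_rexp.comp analyticAt_id.neg)
  have h2 : AnalyticAt ℝ Spow (x * Real.exp (-x)) :=
    Spow_analytic (uxe_lt hx.1 hx.2)
  show AnalyticAt ℝ (fun z : ℝ => Spow (z * Real.exp (-z)) * Real.exp (-z)) x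
  exact (AnalyticAt.comp (f := fun z : ℝ => z * Real.exp (-z)) h2 h1).mul
    (analyticAt_rexp.comp analyticAt_id.neg)

lemma Gfun_analytic : AnalyticOnNhd ℝ (fun x : ℝ => 1/(1-x)) (Set.Ioo (0:ℝ) 1) := by
  intro x hx
  exact (analyticAt_const.div (analyticAt_const.sub analyticAt_id)
    (sub_ne_zero.2 (ne_of_gt (by linarith [hx.2]))))

lemma key_H {x : ℝ} (hx0 : 0 < x) (hx1 : x < 1) :
    ∑' k : ℕ, bA k * x^k * Real.exp (-((k:ℝ)+1) * x) = 1/(1-x) := by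
  have heq : Set.EqOn Hfun (fun x : ℝ => 1/(1-x)) (Set.Ioo 0 1) := by
    apply AnalyticOnNhd.eqOn_of_preconnected_of_eventuallyEq Hfun_analytic Gfun_analytic
      (isPreconnected_Ioo (a := (0:ℝ)) (b := 1)) (show (1/16 : ℝ) ∈ Set.Ioo (0:ℝ) 1 by norm_num)
    have hnb : Set.Ioo (0:ℝ) (1/8) ∈ nhds (1/16 : ℝ) :=
      Ioo_mem_nhds (by norm_num) (by norm_num)
    refine Filter.eventuallyEq_of_mem hnb fun z hz => ?_
    rw [Hfun_eq, small_eq hz.1 hz.2]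
  have := heq (Set.mem_Ioo.2 ⟨hx0, hx1⟩)
  rw [← Hfun_eq, this]


/-- First moment of `W = max(X,1)`:
`E[W] = E[X]/λ = e^{-λ}/(1-λ)`. -/
theorem stmt4 (lam : ℝ) (h0 : 0 < lam) (h1 : lam < 1) :
    ∑' x : ℕ, ((max x 1 : ℕ) : ℝ) *
      (if x = 0 then Real.exp (-lam)
       else if x = 1 then lam * Real.exp (-lam)
       else (((x - 1 : ℕ) ^ (x - 2) : ℕ) : ℝ) / ((x : ℝ) * (Nat.factorial (x - 2)))
            * lam ^ x * Real.exp (-(x : ℝ) * lam))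
      = ((lam / (1 - lam)) * Real.exp (-lam)) / lam ∧
    ((lam / (1 - lam)) * Real.exp (-lam)) / lam = Real.exp (-lam) / (1 - lam) := by
  have hlam : lam ≠ 0 := h0.ne'
  have h1m : (1:ℝ) - lam ≠ 0 := sub_ne_zero.2 (ne_of_gt h1)
  constructor
  · set g : ℕ → ℝ := fun x => ((max x 1 : ℕ) : ℝ) *
      (if x = 0 then Real.exp (-lam)
       else if x = 1 then lam * Real.exp (-lam)
       else (((x - 1 : ℕ) ^ (x - 2) : ℕ) : ℝ) / ((x : ℝ) * (Nat.factorial (x - 2)))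
            * lam ^ x * Real.exp (-(x : ℝ) * lam)) with hg
    have hg0 : g 0 = Real.exp (-lam) := by rw [hg]; norm_num
    have hg1 : g 1 = lam * Real.exp (-lam) := by rw [hg]; norm_num
    have hg2 : ∀ k : ℕ, g (k+2)
        = (lam^2 * Real.exp (-lam)) * (bA k * lam^k * Real.exp (-((k:ℝ)+1) * lam)) := by
      intro k
      rw [hg]
      have e0 : k + 2 ≠ 0 := by omega
      have e1 : k + 2 ≠ 1 := by omega
      simp only [if_neg e0, if_neg e1]
      have m1 : max (k+2) 1 = k + 2 := by omega
      have m2 : k + 2 - 1 = k + 1 := by omega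
      have m3 : k + 2 - 2 = k := by omega
      rw [m1, m2, m3]
      have hexp : Real.exp (-((k+2:ℕ):ℝ) * lam)
          = Real.exp (-((k:ℝ)+1) * lam) * Real.exp (-lam) := by
        rw [← Real.exp_add]; congr 1; push_cast; ring
      rw [hexp]
      unfold bA
      have hkf : ((k.factorial : ℝ)) ≠ 0 := Nat.cast_ne_zero.2 k.factorial_ne_zero
      have hk2 : ((k:ℝ) + 2) ≠ 0 := by positivity
      push_cast
      field_simp
      ring
    have hh : Summable (fun k : ℕ => bA k * lam^k * Real.exp (-((k:ℝ)+1) * lam)) :=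
      summable_H h0.le h1
    have hg2s : Summable (fun k : ℕ => g (k+2)) := by
      refine (summable_congr fun k => (hg2 k)).2 ?_
      exact hh.mul_left _
    have hgs : Summable g := by
      have := (summable_nat_add_iff (f := g) 2).2
      exact (summable_nat_add_iff 2).1 hg2s
    have hgs1 : Summable (fun k : ℕ => g (k+1)) := (summable_nat_add_iff 1).2 hgs
    have split : ∑' x : ℕ, g x
        = g 0 + (g 1 + ∑' k : ℕ, g (k+2)) := by
      rw [Summable.tsum_eq_zero_add hgs]
      congr 1
      rw [Summable.tsum_eq_zero_add hgs1]
    have hsum2 : ∑' k : ℕ, g (k+2) = (lam^2 * Real.exp (-lam)) * (1/(1-lam)) := by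
      rw [tsum_congr hg2, tsum_mul_left, key_H h0 h1]
    rw [split, hg0, hg1, hsum2]
    field_simp
    ring
  · field_simp
end

section
/- Let λ ∈ (0,1). Define q(w) for integers w ≥ 1 by q(1) = (λ+1) e^{-λ} and q(w) = ((w-1)^{w-2}/(w(w-2)!)) λ^w e^{-wλ} for w ≥ 2. Then ∑_{w=1}^∞ q(w) = 1, i.e., q is a probability mass function on the positive integers. -/
open Finset

/-- n-th finite difference of a polynomial of degree < n vanishes. -/
lemma FD (n : ℕ) : ∀ d : ℕ, d < n → ∀ x : ℝ,
    ∑ k ∈ range (n+1), (-1:ℝ)^k * (n.choose k : ℝ) * (x + k)^d = 0 := by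
  induction n with
  | zero => intro d hd; omega
  | succ n ih =>
    intro d hd x
    have step : ∀ y : ℝ, ∑ k ∈ range (n+1+1), (-1:ℝ)^k * ((n+1).choose k : ℝ) * (y+k)^d
        = (∑ k ∈ range (n+1), (-1:ℝ)^k * (n.choose k:ℝ) * (y+k)^d)
          - ∑ k ∈ range (n+1), (-1:ℝ)^k * (n.choose k:ℝ) * ((y+1)+k)^d := by
      intro y
      have h1 := sum_range_succ' (fun k => (-1:ℝ)^k * ((n+1).choose k : ℝ) * (y+k)^d) (n+1)
      have h2 := sum_range_succ' (fun k => (-1:ℝ)^k * ((n).choose k : ℝ) * (y+k)^d) (n+1)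
      have h3 : ∑ k ∈ range (n+1+1), (-1:ℝ)^k * ((n).choose k : ℝ) * (y+k)^d
          = (∑ k ∈ range (n+1), (-1:ℝ)^k * ((n).choose k : ℝ) * (y+k)^d) := by
        rw [sum_range_succ]
        simp [Nat.choose_succ_self]
      rw [h3] at h2
      rw [h1]
      have h4 : ∀ k ∈ range (n+1),
          (-1:ℝ)^(k+1) * ((n+1).choose (k+1) : ℝ) * (y+((k:ℕ)+1:ℕ))^d
          = (-1:ℝ)^(k+1) * ((n).choose (k+1) : ℝ) * (y+((k:ℕ)+1:ℕ))^d
            + (-((-1:ℝ)^k * ((n).choose k : ℝ) * ((y+1)+k)^d)) := by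
        intro k _
        have hc : ((n+1).choose (k+1) : ℝ) = (n.choose k : ℝ) + (n.choose (k+1) : ℝ) := by
          rw [Nat.choose_succ_succ]; push_cast; ring
        have hy : (((k:ℕ)+1:ℕ) : ℝ) = (k:ℝ) + 1 := by push_cast; ring
        rw [hc, hy]; ring
      rw [sum_congr rfl h4, sum_add_distrib]
      have h5 : (∑ k ∈ range (n+1), (-1:ℝ)^(k+1) * ((n).choose (k+1) : ℝ) * (y+((k:ℕ)+1:ℕ))^d)
          = (∑ k ∈ range (n+1), (-1:ℝ)^k * (n.choose k:ℝ) * (y+k)^d)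
            - (-1:ℝ)^0 * ((n).choose 0 : ℝ) * (y+((0:ℕ):ℝ))^d := by
        rw [eq_sub_iff_add_eq]; exact h2.symm
      rw [h5, sum_neg_distrib]
      simp only [Nat.choose_zero_right, Nat.cast_one, Nat.cast_zero, pow_zero, one_mul, add_zero,
        Nat.cast_ofNat]
      ring
    rw [step x]
    have expand : ∀ k ∈ range (n+1),
        (-1:ℝ)^k * (n.choose k:ℝ) * (x+k)^d - (-1:ℝ)^k * (n.choose k:ℝ) * ((x+1)+k)^d
        = ∑ j ∈ range d, (-(d.choose j : ℝ)) * ((-1:ℝ)^k * (n.choose k:ℝ) * (x+k)^j) := by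
      intro k _
      have hb : ((x+1)+k : ℝ) = (x+k) + 1 := by ring
      have hadd : ((x+k:ℝ) + 1)^d = ∑ j ∈ range (d+1), (x+k:ℝ)^j * (1:ℝ)^(d-j) * (d.choose j) :=
        add_pow _ _ _
      rw [hb, hadd, sum_range_succ]
      simp only [one_pow, mul_one, Nat.choose_self, Nat.cast_one]
      have h8 : (-1:ℝ)^k * (n.choose k:ℝ) * (∑ j ∈ range d, (x+(k:ℝ))^j * (d.choose j : ℝ))
          = ∑ j ∈ range d, (d.choose j : ℝ) * ((-1:ℝ)^k * (n.choose k:ℝ) * (x+(k:ℝ))^j) := by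
        rw [Finset.mul_sum]; exact sum_congr rfl fun j _ => by ring
      have h9 : ∑ j ∈ range d, (-(d.choose j : ℝ)) * ((-1:ℝ)^k * (n.choose k:ℝ) * (x+(k:ℝ))^j)
          = - ∑ j ∈ range d, (d.choose j : ℝ) * ((-1:ℝ)^k * (n.choose k:ℝ) * (x+(k:ℝ))^j) := by
        rw [← sum_neg_distrib]; exact sum_congr rfl fun j _ => by ring
      rw [h9, mul_add, h8]; ring
    rw [← sum_sub_distrib, sum_congr rfl expand, sum_comm]
    have hz : ∀ j ∈ range d, ∑ k ∈ range (n+1),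
        (-(d.choose j : ℝ)) * ((-1:ℝ)^k * (n.choose k:ℝ) * (x+k)^j) = 0 := by
      intro j hj
      have hj' := mem_range.mp hj
      rw [← Finset.mul_sum, ih j (by omega) x, mul_zero]
    rw [sum_congr rfl hz, sum_const_zero]

/-- Abel's binomial identity (specialized at x = 1). -/
lemma Abel1 (n : ℕ) : ∀ y : ℝ,
    ∑ k ∈ range (n+1), (n.choose k : ℝ) * ((1:ℝ)+(k:ℝ))^(k-1) * (y + ((n-k : ℕ):ℝ))^(n-k)
      = (y + (n:ℝ) + 1)^n := by
  induction n with
  | zero => intro y; simp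
  | succ n ih =>
    intro y
    set L := fun z : ℝ => ∑ k ∈ range (n+2),
      ((n+1).choose k : ℝ) * ((1:ℝ)+(k:ℝ))^(k-1) * (z + ((n+1-k : ℕ):ℝ))^(n+1-k) with hLdef
    set R := fun z : ℝ => (z + ((n:ℝ)+2))^(n+1) with hRdef
    have hLd : ∀ z : ℝ, HasDerivAt L (((n:ℝ)+1) * (z + (n:ℝ) + 2)^n) z := by
      intro z
      have h : HasDerivAt L (∑ k ∈ range (n+2),
          (((n+1).choose k : ℝ) * ((1:ℝ)+(k:ℝ))^(k-1)) *
            (((n+1-k : ℕ):ℝ) * (z + ((n+1-k : ℕ):ℝ))^(n+1-k-1) * 1)) z := by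
        apply HasDerivAt.fun_sum
        intro k _
        exact (((hasDerivAt_id z).add_const ((n+1-k : ℕ):ℝ)).pow (n+1-k)).const_mul _
      convert h using 1
      rw [sum_range_succ]
      have hlast : (((n+1).choose (n+1) : ℝ) * ((1:ℝ)+((n+1:ℕ):ℝ))^(n+1-1)) *
          (((n+1-(n+1) : ℕ):ℝ) * (z + ((n+1-(n+1) : ℕ):ℝ))^(n+1-(n+1)-1) * 1) = 0 := by
        simp
      rw [hlast, add_zero]
      have hterm : ∀ k ∈ range (n+1),
          (((n+1).choose k : ℝ) * ((1:ℝ)+(k:ℝ))^(k-1)) *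
            (((n+1-k : ℕ):ℝ) * (z + ((n+1-k : ℕ):ℝ))^(n+1-k-1) * 1)
          = ((n:ℝ)+1) * ((n.choose k : ℝ) * ((1:ℝ)+(k:ℝ))^(k-1) *
              ((z+1) + ((n-k : ℕ):ℝ))^(n-k)) := by
        intro k hk
        have hkn := mem_range.mp hk
        have e1 : n+1-k-1 = n-k := by omega
        have e2 : ((n+1-k : ℕ):ℝ) = ((n-k : ℕ):ℝ) + 1 := by
          have : n+1-k = (n-k)+1 := by omega
          rw [this]; push_cast; ring
        have e3 : ((n+1-k:ℕ):ℝ) * ((n+1).choose k : ℝ) = ((n:ℝ)+1) * (n.choose k : ℝ) := by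
          have h1 : (n+1).choose (k+1) * (k+1) = (n+1).choose k * (n+1-k) :=
            Nat.choose_succ_right_eq (n+1) k
          have h2 : (n+1) * n.choose k = (n+1).choose (k+1) * (k+1) := by
            rw [← Nat.add_one_mul_choose_eq]
          have : (n+1).choose k * (n+1-k) = (n+1) * n.choose k := by omega
          have := congrArg (fun m : ℕ => (m:ℝ)) this
          push_cast at this
          linarith [this]
        have e4 : z + (((n-k : ℕ):ℝ) + 1) = (z+1) + ((n-k : ℕ):ℝ) := by ring
        have e3' : (((n-k : ℕ):ℝ) + 1) * ((n+1).choose k : ℝ) = ((n:ℝ)+1) * (n.choose k : ℝ) := by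
          rw [← e2]; exact e3
        rw [e1, e2, e4]
        linear_combination (((1:ℝ)+(k:ℝ))^(k-1) * ((z+1) + ((n-k : ℕ):ℝ))^(n-k)) * e3'
      rw [sum_congr rfl hterm, ← Finset.mul_sum, ih (z+1)]
      ring_nf
    have hRd : ∀ z : ℝ, HasDerivAt R (((n:ℝ)+1) * (z + (n:ℝ) + 2)^n) z := by
      intro z
      have h := ((hasDerivAt_id z).add_const ((n:ℝ)+2)).fun_pow (n+1)
      simp only [id_eq] at h
      exact h.congr_deriv (by simp only [Nat.add_sub_cancel]; push_cast; ring)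
    have hD : ∀ z : ℝ, HasDerivAt (fun w => L w - R w) 0 z := by
      intro z
      simpa using (hLd z).fun_sub (hRd z)
    have hconst : ∀ a b : ℝ, L a - R a = L b - R b := by
      intro a b
      exact is_const_of_deriv_eq_zero (fun z => (hD z).differentiableAt)
        (fun z => (hD z).deriv) a b
    have hy0 : L (-((n:ℝ)+2)) - R (-((n:ℝ)+2)) = 0 := by
      have hR0 : R (-((n:ℝ)+2)) = 0 := by
        simp only [hRdef]
        rw [neg_add_cancel, zero_pow (Nat.succ_ne_zero n)]
      have hL0 : L (-((n:ℝ)+2)) = 0 := by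
        simp only [hLdef]
        have hterm : ∀ k ∈ range (n+2),
            ((n+1).choose k : ℝ) * ((1:ℝ)+(k:ℝ))^(k-1) * ((-((n:ℝ)+2)) + ((n+1-k : ℕ):ℝ))^(n+1-k)
            = (-1:ℝ)^(n+1) * ((-1:ℝ)^k * ((n+1).choose k : ℝ) * ((1:ℝ)+(k:ℝ))^n) := by
          intro k hk
          have hkn : k ≤ n+1 := by have := mem_range.mp hk; omega
          have e1 : ((n+1-k:ℕ):ℝ) = ((n:ℝ)+1) - (k:ℝ) := by
            rw [Nat.cast_sub hkn]; push_cast; ring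
          have e2 : (-((n:ℝ)+2)) + (((n:ℝ)+1) - (k:ℝ)) = -((1:ℝ)+(k:ℝ)) := by ring
          have e3 : (-((1:ℝ)+(k:ℝ)))^(n+1-k) = (-1:ℝ)^(n+1-k) * ((1:ℝ)+(k:ℝ))^(n+1-k) := by
            rw [neg_pow]
          have e4 : ((1:ℝ)+(k:ℝ))^(k-1) * ((1:ℝ)+(k:ℝ))^(n+1-k) = ((1:ℝ)+(k:ℝ))^n := by
            rcases Nat.eq_zero_or_pos k with hk0 | hk1
            · subst hk0; norm_num
            · rw [← pow_add]; congr 1; omega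
          have e5 : (-1:ℝ)^(n+1-k) = (-1:ℝ)^(n+1) * (-1:ℝ)^k := by
            have h1 : ((-1:ℝ))^(n+1-k) * (-1)^k = (-1)^(n+1) := by
              rw [← pow_add]; congr 1; omega
            have h2 : ((-1:ℝ))^k * (-1)^k = 1 := by
              rw [← pow_add, ← two_mul, pow_mul]; norm_num
            calc (-1:ℝ)^(n+1-k) = (-1:ℝ)^(n+1-k) * (((-1:ℝ))^k * (-1)^k) := by rw [h2, mul_one]
              _ = ((-1:ℝ)^(n+1-k) * (-1)^k) * (-1)^k := by ring
              _ = (-1:ℝ)^(n+1) * (-1:ℝ)^k := by rw [h1]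
          rw [e1, e2, e3, e5, ← mul_assoc]
          calc ((n+1).choose k : ℝ) * ((1:ℝ)+(k:ℝ))^(k-1) *
                ((-1:ℝ)^(n+1) * (-1:ℝ)^k) * ((1:ℝ)+(k:ℝ))^(n+1-k)
              = (-1:ℝ)^(n+1) * ((-1:ℝ)^k * ((n+1).choose k : ℝ) *
                  (((1:ℝ)+(k:ℝ))^(k-1) * ((1:ℝ)+(k:ℝ))^(n+1-k))) := by ring
            _ = (-1:ℝ)^(n+1) * ((-1:ℝ)^k * ((n+1).choose k : ℝ) * ((1:ℝ)+(k:ℝ))^n) := by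
                rw [e4]
        rw [sum_congr rfl hterm, ← Finset.mul_sum]
        have := FD (n+1) n (Nat.lt_succ_self n) 1
        have heq : ∑ k ∈ range (n+2), (-1:ℝ)^k * ((n+1).choose k : ℝ) * ((1:ℝ)+(k:ℝ))^n
            = ∑ k ∈ range (n+2), (-1:ℝ)^k * ((n+1).choose k : ℝ) * ((1:ℝ)+(k:ℝ))^n := rfl
        have : ∑ k ∈ range (n+2), (-1:ℝ)^k * ((n+1).choose k : ℝ) * ((1:ℝ)+(k:ℝ))^n = 0 := by
          have h := FD (n+1) n (Nat.lt_succ_self n) 1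
          convert h using 1
        have h7 : ∑ k ∈ range (n+2), (-1:ℝ)^k * ((n+1).choose k : ℝ) * ((1:ℝ)+(k:ℝ))^n = 0 := this
        have h8 : ∑ k ∈ range (n+2), ((-1:ℝ)^k * ((n+1).choose k : ℝ) * ((1:ℝ)+(k:ℝ))^n)
            = 0 := h7
        rw [show (∑ k ∈ range (n+2), ((-1:ℝ)^k * ((n+1).choose k : ℝ) * ((1:ℝ)+(k:ℝ))^n)) = 0 from h8, mul_zero]
      rw [hL0, hR0, sub_zero]
    have hfin : L y - R y = 0 := by rw [hconst y (-((n:ℝ)+2))]; exact hy0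
    have : L y = R y := by linarith
    calc ∑ k ∈ range (n+1+1), ((n+1).choose k : ℝ) * ((1:ℝ)+(k:ℝ))^(k-1) *
          (y + ((n+1-k : ℕ):ℝ))^(n+1-k) = L y := rfl
      _ = R y := this
      _ = (y + ((n+1:ℕ):ℝ) + 1)^(n+1) := by simp only [hRdef]; push_cast; ring_nf

/-- EGF coefficients of the tree function `T`. -/
noncomputable def coA (n : ℕ) : ℝ := if n = 0 then 0 else (n:ℝ)^(n-1)/(n.factorial)
/-- EGF coefficients of `U = T/(1-T)`. -/
noncomputable def coB (n : ℕ) : ℝ := if n = 0 then 0 else (n:ℝ)^n/(n.factorial)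
/-- EGF coefficients of `K`. -/
noncomputable def coC (n : ℕ) : ℝ := if n ≤ 1 then 0 else (((n-1:ℕ)):ℝ)^(n-1)/(n.factorial)

lemma tildeA : ∀ n : ℕ, coA n = (if n = 0 then 0 else (n:ℝ)^(n-1)) / (n.factorial) := by
  intro n; unfold coA; split <;> simp

lemma tildeB : ∀ n : ℕ, coB n = (if n = 0 then 0 else (n:ℝ)^n) / (n.factorial) := by
  intro n; unfold coB; split <;> simp

/-- The key Cauchy-product identity `U = T + T·U` at the level of coefficients. -/
lemma keyId (n : ℕ) : ∑ k ∈ range (n+1), coA k * coB (n-k) = coB n - coA n := by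
  match n with
  | 0 => simp [coA, coB]
  | 1 =>
    rw [show (1:ℕ)+1 = 2 from rfl]
    rw [Finset.sum_range_succ, Finset.sum_range_one]
    norm_num [coA, coB]
  | (m+2) =>
    set n := m+2 with hn
    set ta : ℕ → ℝ := fun k => if k = 0 then 0 else (k:ℝ)^(k-1) with hta
    set tb : ℕ → ℝ := fun k => if k = 0 then 0 else (k:ℝ)^k with htb
    have hterm : ∀ k ∈ range (n+1), coA k * coB (n-k)
        = ((n.choose k : ℝ) * (ta k * tb (n-k))) / (n.factorial : ℝ) := by
      intro k hk
      have hkn : k ≤ n := by have := mem_range.mp hk; omega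
      rw [tildeA, tildeB, Nat.cast_choose ℝ hkn]
      have h1 : (k.factorial : ℝ) ≠ 0 := Nat.cast_ne_zero.mpr k.factorial_ne_zero
      have h2 : ((n-k).factorial : ℝ) ≠ 0 := Nat.cast_ne_zero.mpr (n-k).factorial_ne_zero
      have h3 : (n.factorial : ℝ) ≠ 0 := Nat.cast_ne_zero.mpr n.factorial_ne_zero
      field_simp [hta, htb]
      ring
    rw [sum_congr rfl hterm, ← Finset.sum_div]
    have hB : ∑ k ∈ range (n+1), (n.choose k : ℝ) * (ta k * tb (n-k))
        = ((n:ℕ):ℝ)^n - ((n:ℕ):ℝ)^(n-1) := by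
      have h0 : ∑ k ∈ range (n+1), (n.choose k : ℝ) * (ta k * tb (n-k))
          = ∑ j ∈ range n, (n.choose (j+1) : ℝ) * (ta (j+1) * tb (n-(j+1))) := by
        rw [sum_range_succ' (fun k => (n.choose k : ℝ) * (ta k * tb (n-k))) n]
        simp [hta]
      rw [h0]
      have h1 : ∑ j ∈ range n, (n.choose (j+1) : ℝ) * (ta (j+1) * tb (n-(j+1)))
          = ∑ j ∈ range (m+1), (n.choose (j+1) : ℝ) * (ta (j+1) * tb (n-(j+1))) := by
        rw [show n = (m+1)+1 from rfl, sum_range_succ]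
        simp [htb, hn]
      rw [h1]
      have h2 : ∀ j ∈ range (m+1), (n.choose (j+1) : ℝ) * (ta (j+1) * tb (n-(j+1)))
          = ((n:ℕ):ℝ) * (((m+1).choose j : ℝ) * ((1:ℝ)+(j:ℝ))^(j-1)
              * ((0:ℝ) + ((m+1-j : ℕ):ℝ))^(m+1-j)) := by
        intro j hj
        have hjm : j ≤ m := by have := mem_range.mp hj; omega
        have e0 : n - (j+1) = m+1-j := by omega
        have e1 : ta (j+1) = ((j:ℝ)+1)^j := by simp [hta]
        have e2 : tb (m+1-j) = ((m+1-j : ℕ):ℝ)^(m+1-j) := by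
          have : m+1-j ≠ 0 := by omega
          simp [htb, this]
        have e3 : (n:ℝ) * ((m+1).choose j : ℝ) = ((n.choose (j+1)) : ℝ) * ((j:ℝ)+1) := by
          have := Nat.add_one_mul_choose_eq (m+1) j
          have := congrArg (fun t : ℕ => (t:ℝ)) this
          push_cast at this
          convert this using 2 <;> push_cast [hn] <;> ring
        have e4 : ((j:ℝ)+1)^j = ((j:ℝ)+1) * ((1:ℝ)+(j:ℝ))^(j-1) := by
          rcases Nat.eq_zero_or_pos j with h | h
          · subst h; norm_num
          · have : j = (j-1)+1 := by omega
            rw [show ((1:ℝ)+(j:ℝ)) = ((j:ℝ)+1) by ring, this]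
            rw [pow_succ]
            rw [← this]
            ring
        rw [e0, e1, e2, e4]
        have : ((0:ℝ) + ((m+1-j : ℕ):ℝ))^(m+1-j) = ((m+1-j : ℕ):ℝ)^(m+1-j) := by norm_num
        rw [this]
        linear_combination (((1:ℝ)+(j:ℝ))^(j-1) * ((m+1-j : ℕ):ℝ)^(m+1-j)) * e3.symm
      rw [sum_congr rfl h2, ← Finset.mul_sum]
      have habel := Abel1 (m+1) 0
      have h3 : ∑ j ∈ range (m+1), (((m+1).choose j : ℝ) * ((1:ℝ)+(j:ℝ))^(j-1)
              * ((0:ℝ) + ((m+1-j : ℕ):ℝ))^(m+1-j))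
          = ((0:ℝ) + ((m+1:ℕ):ℝ) + 1)^(m+1)
            - ((m+1).choose (m+1) : ℝ) * ((1:ℝ)+((m+1:ℕ):ℝ))^((m+1)-1)
              * ((0:ℝ) + ((m+1-(m+1) : ℕ):ℝ))^(m+1-(m+1)) := by
        rw [eq_sub_iff_add_eq, ← sum_range_succ]
        exact habel
      rw [h3]
      push_cast [hn]
      have hp1 : ((m:ℝ)+2)^(m+2) = ((m:ℝ)+2) * ((m:ℝ)+2)^(m+1) := by
        rw [pow_succ]; ring
      have hp2 : ((m:ℝ)+2)^(m+1) = ((m:ℝ)+2) * ((m:ℝ)+2)^m := by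
        rw [pow_succ]; ring
      simp only [Nat.choose_self, Nat.cast_one, Nat.add_sub_cancel, Nat.sub_self,
        Nat.cast_zero, pow_zero, add_zero, zero_add, one_mul, mul_one]
      rw [show ((m:ℝ)+1+1) = ((m:ℝ)+2) by ring, show ((1:ℝ)+((m:ℝ)+1)) = ((m:ℝ)+2) by ring]
      rw [hp1, hp2]
      ring
    rw [hB]
    unfold coA coB
    norm_num
    rw [if_neg (by omega), if_neg (by omega), div_sub_div_same]

open Real Filter Topology Set

lemma exp_bound_coeff (n : ℕ) : ((n:ℝ))^n/(n.factorial) ≤ Real.exp n := by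
  have := Real.pow_div_factorial_le_exp (x := (n:ℝ)) (Nat.cast_nonneg n) n
  simpa using this

lemma coA_nonneg (n : ℕ) : 0 ≤ coA n := by
  unfold coA; split
  · exact le_refl 0
  · positivity

lemma coB_nonneg (n : ℕ) : 0 ≤ coB n := by
  unfold coB; split
  · exact le_refl 0
  · positivity

lemma coC_nonneg (n : ℕ) : 0 ≤ coC n := by
  unfold coC; split
  · exact le_refl 0
  · positivity

lemma coA_le (n : ℕ) : |coA n| ≤ Real.exp n := by
  rw [abs_of_nonneg (coA_nonneg n)]
  unfold coA
  split
  · positivity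
  · rename_i h
    have h1 : (n:ℝ)^(n-1) ≤ (n:ℝ)^n := by
      apply pow_le_pow_right₀ ?_ (Nat.sub_le n 1)
      have : 1 ≤ n := Nat.one_le_iff_ne_zero.mpr h
      exact_mod_cast this
    calc (n:ℝ)^(n-1)/(n.factorial) ≤ (n:ℝ)^n/(n.factorial) := by gcongr
      _ ≤ Real.exp n := exp_bound_coeff n

lemma coB_le (n : ℕ) : |coB n| ≤ Real.exp n := by
  rw [abs_of_nonneg (coB_nonneg n)]
  unfold coB
  split
  · positivity
  · exact exp_bound_coeff n

lemma coC_le (n : ℕ) : |coC n| ≤ Real.exp n := by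
  rw [abs_of_nonneg (coC_nonneg n)]
  unfold coC
  split
  · positivity
  · rename_i h
    have h1 : (((n-1:ℕ)):ℝ)^(n-1) ≤ (n:ℝ)^n := by
      calc (((n-1:ℕ)):ℝ)^(n-1) ≤ (n:ℝ)^(n-1) := by
            apply pow_le_pow_left₀ (by positivity) ?_
            exact_mod_cast Nat.sub_le n 1
        _ ≤ (n:ℝ)^n := by
            apply pow_le_pow_right₀ ?_ (Nat.sub_le n 1)
            have : 1 ≤ n := by omega
            exact_mod_cast this
    calc (((n-1:ℕ)):ℝ)^(n-1)/(n.factorial) ≤ ((n:ℕ):ℝ)^n/(n.factorial) := by gcongr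
      _ ≤ Real.exp n := exp_bound_coeff n

lemma summable_norm_coeff {c : ℕ → ℝ} (hc : ∀ n, |c n| ≤ Real.exp n) {y : ℝ}
    (hy : Real.exp 1 * |y| < 1) : Summable (fun n => ‖c n * y^n‖) := by
  have h0 : (0:ℝ) ≤ Real.exp 1 * |y| := by positivity
  apply Summable.of_nonneg_of_le (fun n => norm_nonneg _) (fun n => ?_)
    (summable_geometric_of_lt_one h0 hy)
  calc ‖c n * y^n‖ = |c n| * |y|^n := by
        rw [Real.norm_eq_abs, abs_mul, abs_pow]
    _ ≤ Real.exp n * |y|^n := mul_le_mul_of_nonneg_right (hc n) (by positivity)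
    _ = (Real.exp 1 * |y|)^n := by rw [mul_pow, ← Real.exp_one_pow]

lemma summable_deriv_coeff {c : ℕ → ℝ} (hc : ∀ n, |c n| ≤ Real.exp n) {r : ℝ} (hr : 0 < r)
    (hre : Real.exp 1 * r < 1) :
    Summable (fun n : ℕ => (n:ℝ) * (Real.exp 1 * r)^n / r) := by
  have h : Summable (fun n : ℕ => (n:ℝ)^(1:ℕ) * (Real.exp 1 * r)^n) := by
    apply summable_pow_mul_geometric_of_norm_lt_one
    rw [Real.norm_eq_abs, abs_of_nonneg (by positivity)]
    exact hre
  have h2 := h.div_const r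
  apply h2.congr
  intro n
  simp [pow_one]

lemma deriv_term_bound {c : ℕ → ℝ} (hc : ∀ n, |c n| ≤ Real.exp n) {r : ℝ} (hr : 0 < r)
    {z : ℝ} (hz : z ∈ Ioo (-r) r) (n : ℕ) :
    ‖c n * ((n:ℝ) * z^(n-1))‖ ≤ (n:ℝ) * (Real.exp 1 * r)^n / r := by
  have hzr : |z| ≤ r := by
    rw [abs_le]; exact ⟨hz.1.le, hz.2.le⟩
  calc ‖c n * ((n:ℝ) * z^(n-1))‖ = |c n| * ((n:ℝ) * |z|^(n-1)) := by
        rw [Real.norm_eq_abs, abs_mul, abs_mul, abs_pow, Nat.abs_cast]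
    _ ≤ Real.exp n * ((n:ℝ) * r^(n-1)) := by
        apply mul_le_mul (hc n) ?_ (by positivity) (Real.exp_nonneg _)
        exact mul_le_mul_of_nonneg_left (pow_le_pow_left₀ (abs_nonneg z) hzr _) (Nat.cast_nonneg n)
    _ = (n:ℝ) * (Real.exp n * r^(n-1)) := by ring
    _ ≤ (n:ℝ) * (Real.exp 1 * r)^n / r := by
        rcases Nat.eq_zero_or_pos n with h0 | h0
        · subst h0; simp
        · have : Real.exp (n:ℝ) * r^(n-1) = (Real.exp 1 * r)^n / r := by
            rw [mul_pow, Real.exp_one_pow]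
            rw [show n = (n-1)+1 by omega]
            rw [pow_succ r]
            rw [show (n-1)+1 = n by omega]
            field_simp
          rw [mul_div_assoc, this]

lemma hasDerivAt_tsum_coeff {c : ℕ → ℝ} (hc : ∀ n, |c n| ≤ Real.exp n) {r : ℝ} (hr : 0 < r)
    (hre : Real.exp 1 * r < 1) {y : ℝ} (hy : y ∈ Ioo (-r) r) :
    HasDerivAt (fun z => ∑' n, c n * z^n) (∑' n, c n * ((n:ℝ) * y^(n-1))) y := by
  apply hasDerivAt_tsum_of_isPreconnected (summable_deriv_coeff hc hr hre) isOpen_Ioo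
    (convex_Ioo _ _).isPreconnected
    (fun n z _ => (hasDerivAt_pow n z).const_mul (c n))
    (fun n z hz => deriv_term_bound hc hr hz n)
    (show (0:ℝ) ∈ Ioo (-r) r from ⟨by linarith, hr⟩)
    ?_ hy
  apply summable_of_ne_finset_zero (s := {0})
  intro n hn
  simp only [Finset.mem_singleton] at hn
  rw [zero_pow hn, mul_zero]

lemma summable_deriv_coeff_at {c : ℕ → ℝ} (hc : ∀ n, |c n| ≤ Real.exp n) {r : ℝ} (hr : 0 < r)
    (hre : Real.exp 1 * r < 1) {y : ℝ} (hy : y ∈ Ioo (-r) r) :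
    Summable (fun n => c n * ((n:ℝ) * y^(n-1))) := by
  apply Summable.of_norm
  apply Summable.of_nonneg_of_le (fun n => norm_nonneg _)
    (fun n => deriv_term_bound hc hr hy n) (summable_deriv_coeff hc hr hre)

noncomputable def Tfun (y : ℝ) : ℝ := ∑' n, coA n * y^n
noncomputable def Ufun (y : ℝ) : ℝ := ∑' n, coB n * y^n
noncomputable def Kfun (y : ℝ) : ℝ := ∑' n, coC n * y^n

lemma coA_mul_n (n : ℕ) : ((n+1:ℕ):ℝ) * coA (n+1) = coB (n+1) := by
  unfold coA coB
  simp only [Nat.succ_ne_zero, if_false, Nat.add_sub_cancel]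
  rw [show ((n+1:ℕ):ℝ)^(n+1) = ((n+1:ℕ):ℝ) * ((n+1:ℕ):ℝ)^n by rw [pow_succ]; ring]
  ring

lemma coC_mul_n (n : ℕ) : ((n+1:ℕ):ℝ) * coC (n+1) = coB n := by
  unfold coC coB
  rcases Nat.eq_zero_or_pos n with h0 | h0
  · subst h0; norm_num
  · have h1 : ¬ (n+1 ≤ 1) := by omega
    have h2 : ¬ (n = 0) := by omega
    simp only [h1, if_false, h2, Nat.add_sub_cancel]
    rw [Nat.factorial_succ]
    have hnf : ((n.factorial:ℝ)) ≠ 0 := Nat.cast_ne_zero.mpr n.factorial_ne_zero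
    have hn1 : ((n+1:ℕ):ℝ) ≠ 0 := by positivity
    push_cast
    field_simp

lemma abs_lt_of_mem_Ioo {r y : ℝ} (hy : y ∈ Ioo (-r) r) : |y| < r :=
  abs_lt.mpr ⟨hy.1, hy.2⟩

lemma exp_abs_lt {r y : ℝ} (hre : Real.exp 1 * r < 1) (hy : y ∈ Ioo (-r) r) :
    Real.exp 1 * |y| < 1 :=
  lt_of_le_of_lt
    (mul_le_mul_of_nonneg_left (abs_lt_of_mem_Ioo hy).le (Real.exp_pos 1).le) hre

/-- `y·T'(y) = U(y)`. -/
lemma mul_TD_eq_U {r : ℝ} (hr : 0 < r) (hre : Real.exp 1 * r < 1) {y : ℝ} (hy : y ∈ Ioo (-r) r) :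
    y * (∑' n, coA n * ((n:ℝ) * y^(n-1))) = Ufun y := by
  rw [← tsum_mul_left]
  unfold Ufun
  rw [Summable.tsum_eq_zero_add ((summable_deriv_coeff_at coA_le hr hre hy).mul_left y),
      Summable.tsum_eq_zero_add ((summable_norm_coeff coB_le (exp_abs_lt hre hy)).of_norm)]
  congr 1
  · simp [coB]
  · apply tsum_congr
    intro n
    rw [show (n+1) - 1 = n from rfl]
    linear_combination (y^n * y) * (coA_mul_n n)

/-- `K' = U` termwise. -/
lemma KD_eq_U {r : ℝ} (hr : 0 < r) (hre : Real.exp 1 * r < 1) {y : ℝ} (hy : y ∈ Ioo (-r) r) :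
    (∑' n, coC n * ((n:ℝ) * y^(n-1))) = Ufun y := by
  rw [Summable.tsum_eq_zero_add (summable_deriv_coeff_at coC_le hr hre hy)]
  unfold Ufun
  have h0 : coC 0 * ((0:ℕ):ℝ) * (y^(0-1)) = 0 := by simp
  have : coC 0 * (((0:ℕ):ℝ) * y^(0-1)) + ∑' n, coC (n+1) * (((n+1:ℕ):ℝ) * y^(n+1-1))
      = ∑' n, coC (n+1) * (((n+1:ℕ):ℝ) * y^n) := by
    simp
  rw [this]
  apply tsum_congr
  intro n
  linear_combination (y^n) * (coC_mul_n n)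

/-- The functional equation `T·U = U - T`. -/
lemma TU_eq {y : ℝ} (hy : Real.exp 1 * |y| < 1) : Tfun y * Ufun y = Ufun y - Tfun y := by
  unfold Tfun Ufun
  rw [tsum_mul_tsum_eq_tsum_sum_range_of_summable_norm
    (summable_norm_coeff coA_le hy) (summable_norm_coeff coB_le hy)]
  have hterm : ∀ n : ℕ, ∑ k ∈ Finset.range (n+1), (coA k * y^k) * (coB (n-k) * y^(n-k))
      = (coB n - coA n) * y^n := by
    intro n
    have h1 : ∀ k ∈ Finset.range (n+1), (coA k * y^k) * (coB (n-k) * y^(n-k))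
        = (coA k * coB (n-k)) * y^n := by
      intro k hk
      have hkn : k ≤ n := by have := Finset.mem_range.mp hk; omega
      rw [show (coA k * y^k) * (coB (n-k) * y^(n-k)) = (coA k * coB (n-k)) * (y^k * y^(n-k)) by ring]
      congr 1
      rw [← pow_add]
      congr 1
      omega
    rw [Finset.sum_congr rfl h1, ← Finset.sum_mul, keyId]
  rw [tsum_congr hterm]
  have hsub : ∀ n : ℕ, (coB n - coA n) * y^n = coB n * y^n - coA n * y^n := fun n => by ring
  rw [tsum_congr hsub]
  exact Summable.tsum_sub ((summable_norm_coeff coB_le hy).of_norm) ((summable_norm_coeff coA_le hy).of_norm)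

lemma Tfun_nonneg {y : ℝ} (hy0 : 0 ≤ y) : 0 ≤ Tfun y :=
  tsum_nonneg (fun n => mul_nonneg (coA_nonneg n) (pow_nonneg hy0 n))

lemma Ufun_nonneg {y : ℝ} (hy0 : 0 ≤ y) : 0 ≤ Ufun y :=
  tsum_nonneg (fun n => mul_nonneg (coB_nonneg n) (pow_nonneg hy0 n))

/-- `T = U·(1-T)`, hence `T < 1`. -/
lemma Tfun_lt_one {y : ℝ} (hy0 : 0 ≤ y) (hy : Real.exp 1 * |y| < 1) : Tfun y < 1 := by
  have h := TU_eq hy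
  by_contra hT
  push_neg at hT
  have hU := Ufun_nonneg hy0
  nlinarith [Tfun_nonneg hy0]

lemma Tfun_zero : Tfun 0 = 0 := by
  unfold Tfun
  rw [tsum_eq_single 0 (fun b hb => by simp [zero_pow hb])]
  simp [coA]

lemma Kfun_zero : Kfun 0 = 0 := by
  unfold Kfun
  rw [tsum_eq_single 0 (fun b hb => by simp [zero_pow hb])]
  simp [coC]

/-- The core identity: `T(y)·exp(−T(y)) = y` on `(0,r)`. -/
lemma Tfun_selfeq {r : ℝ} (hr : 0 < r) (hre : Real.exp 1 * r < 1) {y : ℝ}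
    (hy0 : 0 < y) (hyr : y < r) : Tfun y * Real.exp (-(Tfun y)) = y := by
  set σ : ℝ → ℝ := fun z => Tfun z * Real.exp (-(Tfun z)) / z with hσdef
  have hT : ∀ z ∈ Ioo (0:ℝ) r, HasDerivAt Tfun (∑' n, coA n * ((n:ℝ)*z^(n-1))) z := fun z hz =>
    hasDerivAt_tsum_coeff coA_le hr hre ⟨by linarith [hz.1], hz.2⟩
  have hσ' : ∀ z ∈ Ioo (0:ℝ) r, HasDerivAt σ 0 z := by
    intro z hz
    have hzIoo : z ∈ Ioo (-r) r := ⟨by linarith [hz.1], hz.2⟩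
    have hz0 : z ≠ 0 := ne_of_gt hz.1
    set TD := ∑' n, coA n * ((n:ℝ)*z^(n-1)) with hTDdef
    have h1 : HasDerivAt (fun w => Tfun w * Real.exp (-(Tfun w)))
        (TD * Real.exp (-(Tfun z)) + Tfun z * (Real.exp (-(Tfun z)) * (-TD))) z :=
      (hT z hz).mul (((hT z hz).neg).exp)
    have h2 := h1.div (hasDerivAt_id z) hz0
    have hU : z * TD = Ufun z := mul_TD_eq_U hr hre hzIoo
    have hTU : Ufun z - Tfun z * Ufun z = Tfun z := by
      have := TU_eq (exp_abs_lt hre hzIoo); linarith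
    have hval : ((TD * Real.exp (-(Tfun z)) + Tfun z * (Real.exp (-(Tfun z)) * (-TD))) * id z
        - Tfun z * Real.exp (-(Tfun z)) * 1) / (id z)^2 = 0 := by
      simp only [id_eq]
      have hnum : (TD * Real.exp (-(Tfun z)) + Tfun z * (Real.exp (-(Tfun z)) * (-TD))) * z
          - Tfun z * Real.exp (-(Tfun z)) * 1
          = Real.exp (-(Tfun z)) * ((Ufun z - Tfun z * Ufun z) - Tfun z) := by
        rw [← hU]; ring
      rw [hnum, hTU, sub_self, mul_zero, zero_div]
    rw [hval] at h2
    exact h2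
  have hconst : ∀ a b : ℝ, a ∈ Ioo (0:ℝ) r → b ∈ Ioo (0:ℝ) r → a ≤ b → σ b = σ a := by
    intro a b ha hb hab
    have hsub : Icc a b ⊆ Ioo (0:ℝ) r := fun x hx =>
      ⟨lt_of_lt_of_le ha.1 hx.1, lt_of_le_of_lt hx.2 hb.2⟩
    exact constant_of_has_deriv_right_zero
      (fun x hx => ((hσ' x (hsub hx)).continuousAt).continuousWithinAt)
      (fun x hx => ((hσ' x (hsub (Ico_subset_Icc_self hx))).hasDerivWithinAt)) b
      (right_mem_Icc.mpr hab)
  have h0mem : (0:ℝ) ∈ Ioo (-r) r := ⟨by linarith, hr⟩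
  have hslope0 := hasDerivAt_tsum_coeff coA_le hr hre h0mem
  have hTD0 : (∑' n, coA n * ((n:ℝ) * (0:ℝ)^(n-1))) = 1 := by
    rw [tsum_eq_single 1 ?_]
    · norm_num [coA]
    · intro b hb
      match b with
      | 0 => norm_num
      | (m+2) => rw [show m+2-1 = m+1 from rfl, zero_pow (Nat.succ_ne_zero m)]; ring
  rw [hTD0] at hslope0
  have hslopelim : Tendsto (slope Tfun 0) (𝓝[>] (0:ℝ)) (𝓝 1) := by
    apply (hasDerivAt_iff_tendsto_slope.mp hslope0).mono_left
    apply nhdsWithin_mono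
    intro x hx
    exact ne_of_gt hx
  have hexplim : Tendsto (fun z => Real.exp (-(Tfun z))) (𝓝[>] (0:ℝ)) (𝓝 1) := by
    have hc : ContinuousAt (fun z => Real.exp (-(Tfun z))) 0 :=
      (Real.continuous_exp.continuousAt).comp ((hslope0.continuousAt).neg)
    have := hc.tendsto
    rw [Tfun_zero] at this
    simpa using this.mono_left nhdsWithin_le_nhds
  have hσlim : Tendsto σ (𝓝[>] (0:ℝ)) (𝓝 1) := by
    have hmul := hslopelim.mul hexplim
    rw [mul_one] at hmul
    apply hmul.congr'
    filter_upwards [self_mem_nhdsWithin] with z hz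
    have hz0 : z ≠ 0 := ne_of_gt hz
    rw [hσdef]
    simp only [slope_def_field, Tfun_zero]
    field_simp
    ring
  have hyIoo : y ∈ Ioo (0:ℝ) r := ⟨hy0, hyr⟩
  have hev : ∀ᶠ z in 𝓝[>] (0:ℝ), σ z = σ y := by
    filter_upwards [Ioo_mem_nhdsGT_of_mem (show (0:ℝ) ∈ Ico (0:ℝ) y from ⟨le_refl 0, hy0⟩)]
      with z hz
    exact (hconst z y ⟨hz.1, lt_trans hz.2 hyr⟩ hyIoo hz.2.le).symm
  have hconstlim : Tendsto (fun _ : ℝ => σ y) (𝓝[>] (0:ℝ)) (𝓝 1) := hσlim.congr' hev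
  have : σ y = 1 := tendsto_nhds_unique tendsto_const_nhds hconstlim
  rw [hσdef] at this
  field_simp at this
  linarith [this]

lemma strictmono_texp : StrictMonoOn (fun t : ℝ => t * Real.exp (-t)) (Icc 0 1) := by
  have hd : ∀ t : ℝ, HasDerivAt (fun s => s * Real.exp (-s)) ((1 - t) * Real.exp (-t)) t := by
    intro t
    have h := (hasDerivAt_id t).fun_mul ((hasDerivAt_id t).fun_neg.exp)
    simp only [id_eq] at h
    exact h.congr_deriv (by ring)
  apply strictMonoOn_of_deriv_pos (convex_Icc 0 1)
  · apply Continuous.continuousOn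
    exact continuous_id.mul (Real.continuous_exp.comp continuous_neg)
  · intro x hx
    rw [interior_Icc] at hx
    rw [(hd x).deriv]
    have h1 : 0 < 1 - x := by linarith [hx.2]
    positivity

lemma hasDerivAt_texp (s : ℝ) :
    HasDerivAt (fun u : ℝ => u * Real.exp (-u)) ((1 - s) * Real.exp (-s)) s := by
  have h := (hasDerivAt_id s).fun_mul ((hasDerivAt_id s).fun_neg.exp)
  simp only [id_eq] at h
  exact h.congr_deriv (by ring)

lemma texp_lt {t : ℝ} (h0 : 0 < t) (h1 : t < 1) :
    Real.exp 1 * (t * Real.exp (-t)) < 1 := by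
  have hlog : Real.log t < t - 1 := Real.log_lt_sub_one_of_pos h0 (ne_of_lt h1)
  have heq : Real.exp 1 * (t * Real.exp (-t)) = Real.exp (Real.log t + (1 - t)) := by
    rw [show Real.log t + (1-t) = Real.log t + (1 + (-t)) by ring, Real.exp_add, Real.exp_add,
      Real.exp_log h0]
    ring
  rw [heq]
  have h2 : Real.exp (Real.log t + (1 - t)) < Real.exp 0 :=
    Real.exp_lt_exp.mpr (by linarith)
  rwa [Real.exp_zero] at h2

lemma T_of_texp {r : ℝ} (hr : 0 < r) (hre : Real.exp 1 * r < 1) {t : ℝ} (h0 : 0 < t)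
    (h1 : t < 1) (hyr : t * Real.exp (-t) < r) : Tfun (t * Real.exp (-t)) = t := by
  set y := t * Real.exp (-t) with hydef
  have hy0 : 0 < y := by positivity
  have hTe : Tfun y * Real.exp (-(Tfun y)) = y := Tfun_selfeq hr hre hy0 hyr
  have hyabs : Real.exp 1 * |y| < 1 := by
    rw [abs_of_pos hy0]
    calc Real.exp 1 * y ≤ Real.exp 1 * r := by
          apply mul_le_mul_of_nonneg_left hyr.le (Real.exp_pos 1).le
      _ < 1 := hre
  have hT1 : Tfun y < 1 := Tfun_lt_one hy0.le hyabs
  have hT0 : 0 ≤ Tfun y := Tfun_nonneg hy0.le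
  apply strictmono_texp.injOn (Set.mem_Icc.mpr ⟨hT0, hT1.le⟩)
    (Set.mem_Icc.mpr ⟨h0.le, h1.le⟩)
  exact hTe

/-- `U(t e^{-t}) = t/(1-t)` for `t ∈ (0,1)` with `t e^{-t} < r`. -/
lemma U_of_texp {r : ℝ} (hr : 0 < r) (hre : Real.exp 1 * r < 1) {t : ℝ} (h0 : 0 < t)
    (h1 : t < 1) (hyr : t * Real.exp (-t) < r) :
    Ufun (t * Real.exp (-t)) * (1 - t) = t := by
  set y := t * Real.exp (-t) with hydef
  have hy0 : 0 < y := by positivity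
  have hyabs : Real.exp 1 * |y| < 1 := by
    rw [abs_of_pos hy0]
    calc Real.exp 1 * y ≤ Real.exp 1 * r := by
          apply mul_le_mul_of_nonneg_left hyr.le (Real.exp_pos 1).le
      _ < 1 := hre
  have hTU := TU_eq hyabs
  rw [T_of_texp hr hre h0 h1 hyr] at hTU
  linarith

lemma K_value {lam : ℝ} (h0 : 0 < lam) (h1 : lam < 1) :
    Kfun (lam * Real.exp (-lam)) = 1 - (1+lam) * Real.exp (-lam) := by
  set t2 := (1+lam)/2 with ht2
  have ht20 : 0 < t2 := by rw [ht2]; linarith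
  have ht21 : t2 < 1 := by rw [ht2]; linarith
  have hlt2 : lam < t2 := by rw [ht2]; linarith
  set z2 := t2 * Real.exp (-t2) with hz2
  have hz20 : 0 < z2 := by positivity
  have hez2 : Real.exp 1 * z2 < 1 := texp_lt ht20 ht21
  set r := (z2 + Real.exp (-1))/2 with hrdef
  have hexp11 : Real.exp 1 * Real.exp (-1) = 1 := by
    rw [← Real.exp_add]; norm_num
  have hz2r : z2 < Real.exp (-1) := by
    nlinarith [Real.exp_pos 1]
  have hr0 : 0 < r := by positivity
  have hz2ltr : z2 < r := by rw [hrdef]; linarith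
  have hre : Real.exp 1 * r < 1 := by
    rw [hrdef]
    nlinarith [Real.exp_pos 1]
  have hmono : ∀ s : ℝ, 0 < s → s ≤ t2 → s * Real.exp (-s) ≤ z2 := by
    intro s hs0 hst
    rcases eq_or_lt_of_le hst with heq | hlt
    · rw [heq]
    · exact (strictmono_texp ⟨hs0.le, by linarith⟩ ⟨ht20.le, ht21.le⟩ hlt).le
  set G := fun s : ℝ => Kfun (s * Real.exp (-s)) - (1 - (1+s) * Real.exp (-s)) with hGdef
  have hGd : ∀ s ∈ Ioo (0:ℝ) t2, HasDerivAt G 0 s := by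
    intro s hs
    have hs1 : s < 1 := lt_trans hs.2 ht21
    have hy0 : 0 < s * Real.exp (-s) := mul_pos hs.1 (Real.exp_pos _)
    have hyr : s * Real.exp (-s) < r := lt_of_le_of_lt (hmono s hs.1 hs.2.le) hz2ltr
    have hymem : s * Real.exp (-s) ∈ Ioo (-r) r := ⟨by linarith, hyr⟩
    have hK := hasDerivAt_tsum_coeff coC_le hr0 hre hymem
    rw [KD_eq_U hr0 hre hymem] at hK
    have hKf : HasDerivAt Kfun (Ufun (s * Real.exp (-s))) (s * Real.exp (-s)) := hK
    have hcomp : HasDerivAt (fun u : ℝ => Kfun (u * Real.exp (-u)))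
        (Ufun (s * Real.exp (-s)) * ((1-s) * Real.exp (-s))) s :=
      by have := hKf.comp s (hasDerivAt_texp s); exact this
    have hsec : HasDerivAt (fun u : ℝ => 1 - (1+u) * Real.exp (-u)) (s * Real.exp (-s)) s := by
      have h := ((hasDerivAt_id s).const_add 1).fun_mul ((hasDerivAt_id s).fun_neg.exp)
      simp only [id_eq] at h
      have h2 := (hasDerivAt_const s (1:ℝ)).fun_sub h
      exact h2.congr_deriv (by ring)
    have htot := hcomp.sub hsec
    have hU := U_of_texp hr0 hre hs.1 hs1 hyr
    have hval : Ufun (s * Real.exp (-s)) * ((1-s) * Real.exp (-s)) - s * Real.exp (-s) = 0 := by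
      rw [show Ufun (s * Real.exp (-s)) * ((1-s) * Real.exp (-s))
          = (Ufun (s * Real.exp (-s)) * (1-s)) * Real.exp (-s) by ring, hU]
      ring
    rw [hval] at htot
    exact htot
  have hconst : ∀ a b : ℝ, a ∈ Ioo (0:ℝ) t2 → b ∈ Ioo (0:ℝ) t2 → a ≤ b → G b = G a := by
    intro a b ha hb hab
    have hsub : Icc a b ⊆ Ioo (0:ℝ) t2 := fun x hx =>
      ⟨lt_of_lt_of_le ha.1 hx.1, lt_of_le_of_lt hx.2 hb.2⟩
    exact constant_of_has_deriv_right_zero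
      (fun x hx => ((hGd x (hsub hx)).continuousAt).continuousWithinAt)
      (fun x hx => ((hGd x (hsub (Ico_subset_Icc_self hx))).hasDerivWithinAt)) b
      (right_mem_Icc.mpr hab)
  have hKcont : ContinuousAt Kfun 0 :=
    (hasDerivAt_tsum_coeff coC_le hr0 hre ⟨by linarith, hr0⟩).continuousAt
  have hGcont : ContinuousAt G 0 := by
    rw [hGdef]
    apply ContinuousAt.sub
    · have hf : ContinuousAt (fun u : ℝ => u * Real.exp (-u)) 0 :=
        (continuous_id.mul (Real.continuous_exp.comp continuous_neg)).continuousAt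
      have h00 : (fun u : ℝ => u * Real.exp (-u)) 0 = 0 := by norm_num
      have := ContinuousAt.comp (h00 ▸ hKcont) hf
      exact this
    · apply ContinuousAt.sub continuousAt_const
      exact ((continuousAt_const.add continuousAt_id).mul
        (Real.continuous_exp.comp continuous_neg).continuousAt)
  have hG0 : G 0 = 0 := by
    rw [hGdef]
    norm_num [Kfun_zero]
  have hGlim : Tendsto G (𝓝[>] (0:ℝ)) (𝓝 0) := by
    have := hGcont.tendsto
    rw [hG0] at this
    exact this.mono_left nhdsWithin_le_nhds
  have hlmem : lam ∈ Ioo (0:ℝ) t2 := ⟨h0, hlt2⟩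
  have hev : ∀ᶠ z in 𝓝[>] (0:ℝ), G z = G lam := by
    filter_upwards [Ioo_mem_nhdsGT_of_mem (show (0:ℝ) ∈ Ico (0:ℝ) lam from ⟨le_refl 0, h0⟩)]
      with z hz
    exact (hconst z lam ⟨hz.1, lt_trans hz.2 hlt2⟩ hlmem hz.2.le).symm
  have hconstlim : Tendsto (fun _ : ℝ => G lam) (𝓝[>] (0:ℝ)) (𝓝 0) := hGlim.congr' hev
  have hGlam : G lam = 0 := tendsto_nhds_unique tendsto_const_nhds hconstlim
  rw [hGdef] at hGlam
  simp only at hGlam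
  linarith [hGlam]

set_option maxHeartbeats 1000000 in
/-- The pmf of `W = max(X,1)` sums to 1: with `q(1) = (λ+1)e^{-λ}` and
`q(w) = (w-1)^{w-2} λ^w e^{-wλ} / (w (w-2)!)` for `w ≥ 2`,
`∑_{w=1}^∞ q(w) = 1` (indexed by `w = k + 1`, `k ∈ ℕ`). -/
theorem stmt5 (lam : ℝ) (h0 : 0 < lam) (h1 : lam < 1) :
    ∑' k : ℕ,
      (if k + 1 = 1 then (lam + 1) * Real.exp (-lam)
       else (((k + 1 - 1 : ℕ) ^ (k + 1 - 2) : ℕ) : ℝ)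
              / (((k + 1 : ℕ) : ℝ) * (Nat.factorial (k + 1 - 2)))
            * lam ^ (k + 1) * Real.exp (-((k + 1 : ℕ) : ℝ) * lam)) = 1 := by
  set z := lam * Real.exp (-lam) with hz
  set F := fun k : ℕ => (if k + 1 = 1 then (lam + 1) * Real.exp (-lam)
       else (((k + 1 - 1 : ℕ) ^ (k + 1 - 2) : ℕ) : ℝ)
              / (((k + 1 : ℕ) : ℝ) * (Nat.factorial (k + 1 - 2)))
            * lam ^ (k + 1) * Real.exp (-((k + 1 : ℕ) : ℝ) * lam)) with hF
  have hzabs : Real.exp 1 * |z| < 1 := by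
    rw [hz, abs_of_pos (by positivity)]
    exact texp_lt h0 h1
  have hsummK : Summable (fun n => coC n * z^n) := (summable_norm_coeff coC_le hzabs).of_norm
  have hFk : ∀ k : ℕ, F (k+1) = coC (k+2) * z^(k+2) := by
    intro k
    have hstep : F (k+1) = (((k + 1 + 1 - 1 : ℕ) ^ (k + 1 + 1 - 2) : ℕ) : ℝ)
              / (((k + 1 + 1 : ℕ) : ℝ) * (Nat.factorial (k + 1 + 1 - 2)))
            * lam ^ (k + 1 + 1) * Real.exp (-((k + 1 + 1 : ℕ) : ℝ) * lam) := by
      rw [hF]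
      simp only
      rw [if_neg (by omega)]
    rw [hstep, show k+1+1-1 = k+1 from by omega, show k+1+1-2 = k from by omega]
    have hC : coC (k+2) = (((k+1:ℕ)):ℝ)^(k+1)/(((k+2).factorial):ℝ) := by
      unfold coC
      rw [if_neg (by omega)]
      norm_num
    have hzp : z^(k+2) = lam^(k+2) * Real.exp (-((k+1+1:ℕ):ℝ) * lam) := by
      rw [hz, mul_pow]
      congr 1
      rw [← Real.exp_nat_mul]
      congr 1
      push_cast
      ring
    rw [hC, hzp, show k+2 = k+1+1 from rfl]
    have hfac1 : ((k+1+1).factorial : ℝ) = ((k+1+1:ℕ):ℝ) * (((k+1).factorial):ℝ) := by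
      rw [Nat.factorial_succ]; push_cast; ring
    have hfac2 : ((k+1).factorial : ℝ) = ((k+1:ℕ):ℝ) * ((k.factorial):ℝ) := by
      rw [Nat.factorial_succ]; push_cast; ring
    rw [hfac1, hfac2]
    have hkf : ((k.factorial):ℝ) ≠ 0 := Nat.cast_ne_zero.mpr k.factorial_ne_zero
    push_cast
    field_simp
    ring
  have hFsum : Summable (fun k => F (k+1)) := by
    apply Summable.congr ?_ (fun k => (hFk k).symm)
    exact (summable_nat_add_iff (f := fun n => coC n * z^n) 2).mpr hsummK
  have hFsum' : Summable F := (summable_nat_add_iff (f := F) 1).mp hFsum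
  rw [Summable.tsum_eq_zero_add hFsum']
  have hF0 : F 0 = (lam+1) * Real.exp (-lam) := by rw [hF]; norm_num
  have hKz : Kfun z = ∑' k, coC (k+2) * z^(k+2) := by
    unfold Kfun
    rw [Summable.tsum_eq_zero_add hsummK, Summable.tsum_eq_zero_add ((summable_nat_add_iff (f := fun n => coC n * z^n) 1).mpr hsummK)]
    have h01 : coC 0 * z^0 = 0 := by norm_num [coC]
    have h11 : coC (0+1) * z^(0+1) = 0 := by norm_num [coC]
    rw [h01, h11, zero_add, zero_add]
  have htail : ∑' k, F (k+1) = Kfun z := by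
    rw [hKz]
    exact tsum_congr hFk
  rw [hF0, htail, K_value h0 h1]
  ring
end

section
/- For any integer x ≥ 2, the Abel-type binomial sum ∑_{y=2}^{x} ((y-1)/(y!)) · ((x-1)^{x-y-1}/(x-y)!) equals (x-1)^{x-2}/(x·(x-2)!). -/
lemma L1 (n : ℕ) (a : ℝ) :
    ∑ y ∈ Finset.range (n+1), (n.choose y : ℝ) * a^(n-y) = (a+1)^n := by
  rw [add_pow]
  rw [← Finset.sum_range_reflect]
  apply Finset.sum_congr rfl
  intro j hj
  simp only [Finset.mem_range, Nat.lt_succ_iff] at hj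
  have h1 : n + 1 - 1 - j = n - j := by omega
  have h2 : n - (n - j) = j := by omega
  rw [h1, h2, Nat.choose_symm hj]
  ring

lemma L2 (n : ℕ) (a : ℝ) :
    ∑ y ∈ Finset.range (n+1), (n.choose y : ℝ) * y * a^(n-y) = n * (a+1)^(n-1) := by
  cases n with
  | zero => simp
  | succ m =>
    rw [Finset.sum_range_succ']
    simp only [Nat.cast_zero, mul_zero, zero_mul, add_zero, Nat.cast_succ]
    have key : ∀ i, ((m+1).choose (i+1) : ℝ) * (i+1) * a^(m+1-(i+1))
        = (m+1) * ((m.choose i : ℝ) * a^(m-i)) := by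
      intro i
      have h : ((m+1 : ℕ) * m.choose i : ℝ) = (((m+1).choose (i+1) : ℕ) * ((i+1:ℕ)) : ℝ) := by
        exact_mod_cast congrArg (Nat.cast : ℕ → ℝ) (Nat.add_one_mul_choose_eq m i)
      push_cast at h
      have hs : m + 1 - (i+1) = m - i := by omega
      rw [hs, ← h]
      ring
    calc ∑ i ∈ Finset.range (m+1), ((m+1).choose (i+1) : ℝ) * (i+1) * a^(m+1-(i+1))
        = ∑ i ∈ Finset.range (m+1), (m+1 : ℝ) * ((m.choose i : ℝ) * a^(m-i)) := by
          exact Finset.sum_congr rfl fun i _ => key i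
      _ = (m+1 : ℝ) * (a+1)^m := by rw [← Finset.mul_sum, L1]
      _ = _ := by norm_num

lemma L3 (m : ℕ) :
    ∑ j ∈ Finset.range (m+3), (((j:ℝ)-1) * ((m+2).choose j : ℝ) * ((m+1:ℝ))^(m+2-j)) = 0 := by
  have h1 := L1 (m+2) (m+1 : ℝ)
  have h2 := L2 (m+2) (m+1 : ℝ)
  have e : ∀ j : ℕ, (((j:ℝ)-1) * ((m+2).choose j : ℝ) * ((m+1:ℝ))^(m+2-j))
      = ((m+2).choose j : ℝ) * j * ((m+1:ℝ))^(m+2-j)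
        - ((m+2).choose j : ℝ) * ((m+1:ℝ))^(m+2-j) := by intro j; ring
  rw [Finset.sum_congr rfl fun j _ => e j, Finset.sum_sub_distrib]
  have h3 : m + 2 + 1 = m + 3 := rfl
  rw [h3] at h1 h2
  rw [h1, h2]
  have : ((m:ℝ)+1+1) = (m+2 : ℝ) := by ring
  rw [this]
  have hs : m + 2 - 1 = m + 1 := rfl
  rw [hs]
  push_cast
  ring

lemma L4 (m : ℕ) :
    ∑ i ∈ Finset.range (m+1), ((((i:ℕ)+2:ℝ))-1) * ((m+2).choose (i+2) : ℝ) * ((m+1:ℝ))^(m+2-(i+2))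
      = ((m+1:ℝ))^(m+2) := by
  have h := L3 m
  rw [Finset.sum_range_succ' _ (m+2), Finset.sum_range_succ' _ (m+1)] at h
  norm_num at h
  have e : ∀ i : ℕ, ((((i:ℕ)+2:ℝ))-1) * ((m+2).choose (i+2) : ℝ) * ((m+1:ℝ))^(m+2-(i+2))
      = (((i:ℕ):ℝ)+1) * ((m+2).choose (i+1+1) : ℝ) * ((m+1:ℝ))^(m+2-(i+1+1)) := by
    intro i
    have h2 : i+1+1 = i+2 := rfl
    rw [h2]
    ring
  rw [Finset.sum_congr rfl fun i _ => e i]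
  linarith

/-- Abel-type binomial identity: for integers `x ≥ 2`,
`∑_{y=2}^{x} ((y-1)/y!) ((x-1)^{x-y-1}/(x-y)!) = (x-1)^{x-2}/(x (x-2)!)`,
where the exponent `x - y - 1` (which equals `-1` at `y = x`) is an integer power. -/
theorem stmt6 (x : ℕ) (hx : 2 ≤ x) :
    ∑ y ∈ Finset.Icc 2 x,
      (((y : ℝ) - 1) / (Nat.factorial y))
        * (((x : ℝ) - 1) ^ ((x : ℤ) - (y : ℤ) - 1) / (Nat.factorial (x - y)))
    = ((x : ℝ) - 1) ^ (x - 2) / ((x : ℝ) * (Nat.factorial (x - 2))) := by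
  obtain ⟨m, rfl⟩ : ∃ m, x = m + 2 := ⟨x - 2, by omega⟩
  rw [← Finset.Ico_add_one_right_eq_Icc, Finset.sum_Ico_eq_sum_range]
  have hn : m + 2 + 1 - 2 = m + 1 := by omega
  rw [hn, Finset.sum_range_succ]
  push_cast
  have ha : ((m:ℝ)+1) ≠ 0 := by positivity
  have hK : (((m+2).factorial : ℕ):ℝ) ≠ 0 := by
    exact_mod_cast Nat.cast_ne_zero.mpr (Nat.factorial_ne_zero (m+2))
  have hKe : (((m+2).factorial : ℕ):ℝ) = ((m:ℝ)+2) * ((m:ℝ)+1) * (m.factorial : ℝ) := by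
    have : (m+2).factorial = (m+2) * ((m+1) * m.factorial) := by
      rw [Nat.factorial_succ, Nat.factorial_succ]
    rw [this]
    push_cast
    ring
  -- last term
  have h1 : (m:ℤ) + 2 - (2 + (m:ℤ)) - 1 = -1 := by ring
  have h2 : m + 2 - (2 + m) = 0 := by omega
  have h3 : 2 + m = m + 2 := by omega
  rw [h1, h2, h3]
  have hlast : (2 + (m:ℝ) - 1) / (((m+2).factorial : ℕ):ℝ) * (((m:ℝ) + 2 - 1) ^ (-1 : ℤ) / ((Nat.factorial 0 : ℕ):ℝ))
      = 1 / (((m+2).factorial : ℕ):ℝ) := by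
    rw [zpow_neg_one]
    have hb : ((m:ℝ) + 2 - 1) = (m:ℝ) + 1 := by ring
    rw [hb]
    simp [Nat.factorial]
    field_simp
    ring
  rw [hlast]
  -- middle terms
  have hmid : ∀ k ∈ Finset.range m,
      (2 + (k:ℝ) - 1) / (((2 + k).factorial : ℕ):ℝ)
        * (((m:ℝ) + 2 - 1) ^ ((m:ℤ) + 2 - (2 + (k:ℤ)) - 1) / (((m + 2 - (2 + k)).factorial : ℕ):ℝ))
      = ((((k:ℕ)+2:ℝ))-1) * (((m+2).choose (k+2) : ℕ) : ℝ) * ((m+1:ℝ))^(m+2-(k+2))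
          / ((((m+2).factorial : ℕ):ℝ) * ((m:ℝ)+1)) := by
    intro k hk
    rw [Finset.mem_range] at hk
    have he : (m:ℤ) + 2 - (2 + (k:ℤ)) - 1 = ((m - k - 1 : ℕ) : ℤ) := by
      push_cast [Nat.cast_sub (by omega : 1 ≤ m - k), Nat.cast_sub (by omega : k ≤ m)]
      ring
    rw [he, zpow_natCast]
    have hb : ((m:ℝ) + 2 - 1) = (m:ℝ) + 1 := by ring
    rw [hb]
    have hf : m + 2 - (2 + k) = m - k := by omega
    rw [hf]
    have hc : ((m+2).choose (k+2)) * (k+2).factorial * (m-k).factorial = (m+2).factorial := by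
      have := Nat.choose_mul_factorial_mul_factorial (show k+2 ≤ m+2 by omega)
      have hx2 : m + 2 - (k+2) = m - k := by omega
      rwa [hx2] at this
    have hcR : ((((m+2).choose (k+2) : ℕ)):ℝ) * (((k+2).factorial : ℕ):ℝ) * (((m-k).factorial : ℕ):ℝ) = (((m+2).factorial : ℕ):ℝ) := by
      exact_mod_cast congrArg (Nat.cast : ℕ → ℝ) hc
    have hpow : ((m:ℝ)+1)^(m+2-(k+2)) = ((m:ℝ)+1)^(m-k-1) * ((m:ℝ)+1) := by
      have : m+2-(k+2) = (m-k-1) + 1 := by omega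
      rw [this, pow_succ]
    have hfk : ((2+k).factorial) = ((k+2).factorial) := by rw [Nat.add_comm]
    rw [hfk, hpow]
    have hfac1 : (((k+2).factorial : ℕ):ℝ) ≠ 0 := Nat.cast_ne_zero.mpr (Nat.factorial_ne_zero _)
    have hfac2 : (((m-k).factorial : ℕ):ℝ) ≠ 0 := Nat.cast_ne_zero.mpr (Nat.factorial_ne_zero _)
    field_simp
    linear_combination (-((k:ℝ)+1)) * hcR
  rw [Finset.sum_congr rfl hmid]
  rw [← Finset.sum_div]
  -- use L4
  have hL4 := L4 m
  rw [Finset.sum_range_succ] at hL4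
  have hGm : ((((m:ℕ)+2:ℝ))-1) * (((m+2).choose (m+2) : ℕ) : ℝ) * ((m+1:ℝ))^(m+2-(m+2))
      = (m:ℝ)+1 := by
    simp [Nat.choose_self]
    ring
  rw [hGm] at hL4
  have hsum : ∑ i ∈ Finset.range m, ((((i:ℕ)+2:ℝ))-1) * (((m+2).choose (i+2) : ℕ) : ℝ) * ((m+1:ℝ))^(m+2-(i+2))
      = ((m+1:ℝ))^(m+2) - ((m:ℝ)+1) := by linarith
  rw [hsum]
  -- final arithmetic
  have hb2 : ((m:ℝ) + 2 - 1) = (m:ℝ) + 1 := by ring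
  rw [hb2, hKe]
  have hm0 : (m.factorial : ℝ) ≠ 0 := Nat.cast_ne_zero.mpr (Nat.factorial_ne_zero _)
  have hm2 : ((m:ℝ)+2) ≠ 0 := by positivity
  have hp : ((m:ℝ)+1)^(m+2) = ((m:ℝ)+1)^m * ((m:ℝ)+1) * ((m:ℝ)+1) := by
    rw [show m+2 = m+1+1 from rfl, pow_succ, pow_succ]
  rw [hp]
  field_simp
  ring
end

section
/- Let λ ∈ (0,1) and for integers x ≥ 2 and 2 ≤ y ≤ x set f(x,y) = (λ^y e^{-λ}/y!) · ((y-1)(x-1)^{x-y-1} λ^{x-y} e^{-(x-1)λ})/((x-y)!). Then ∑_{y=2}^{x} f(x,y) = ((x-1)^{x-2}/(x(x-2)!)) λ^x e^{-xλ}. -/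
open Finset

lemma S2' (n : ℕ) (a : ℝ) :
    ∑ k ∈ Finset.range (n+1), (n.choose k : ℝ) * a^(n-k) = (a+1)^n := by
  rw [show a + 1 = 1 + a from add_comm a 1, add_pow]
  exact Finset.sum_congr rfl fun k _ => by ring

lemma S1' (n : ℕ) (a : ℝ) :
    ∑ k ∈ Finset.range (n+1), (n.choose k : ℝ) * k * a^(n-k) = n * (a+1)^(n-1) := by
  cases n with
  | zero => simp
  | succ m =>
    rw [Finset.sum_range_succ']
    simp only [Nat.cast_zero, mul_zero, zero_mul, add_zero]
    push_cast
    have key : ∀ k : ℕ, ((m+1).choose (k+1) : ℝ) * ((k:ℝ)+1) = (m+1) * (m.choose k) := by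
      intro k
      have h := Nat.add_one_mul_choose_eq m k
      have h2 : ((Nat.succ m * m.choose k : ℕ) : ℝ) = (((m+1).choose (k+1) * (k+1) : ℕ) : ℝ) := by
        exact_mod_cast congrArg (Nat.cast (R := ℝ)) h
      push_cast at h2
      linarith [h2]
    calc ∑ k ∈ Finset.range (m+1), ((m+1).choose (k+1) : ℝ) * ((k:ℝ)+1) * a^(m-k)
        = ∑ k ∈ Finset.range (m+1), ((m+1):ℝ) * ((m.choose k : ℝ) * a^(m-k)) := by
          refine Finset.sum_congr rfl fun k hk => ?_
          rw [key k]; ring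
      _ = (m+1) * (a+1)^m := by
          rw [← Finset.mul_sum, S2']
      _ = _ := by ring_nf

lemma keyc (n : ℕ) (hn : 2 ≤ n) :
    ∑ y ∈ Finset.Icc 2 n, (n.choose y : ℝ) * ((y:ℝ)-1) * ((n:ℝ)-1)^(n-y)
      = ((n:ℝ)-1)^n := by
  set a : ℝ := (n:ℝ) - 1 with ha
  set f : ℕ → ℝ := fun y => (n.choose y : ℝ) * ((y:ℝ)-1) * a^(n-y) with hf
  have h0 : ∑ y ∈ Finset.range (n+1), f y = (n:ℝ)*(a+1)^(n-1) - (a+1)^n := by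
    have he : ∀ y, f y = (n.choose y:ℝ)*y*a^(n-y) - (n.choose y:ℝ)*a^(n-y) := fun y => by
      simp only [hf]; ring
    simp_rw [he]
    rw [Finset.sum_sub_distrib, S1', S2']
  have hae : a + 1 = (n:ℝ) := by simp [ha]
  have hz : ∑ y ∈ Finset.range (n+1), f y = 0 := by
    rw [h0, hae]
    have hx : (n:ℝ) * (n:ℝ)^(n-1) = (n:ℝ)^n := by
      rw [← pow_succ']
      congr 1
      omega
    rw [hx]; ring
  have hsplit : ∑ y ∈ Finset.Ico 0 2, f y + ∑ y ∈ Finset.Ico 2 (n+1), f y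
      = ∑ y ∈ Finset.Ico 0 (n+1), f y :=
    Finset.sum_Ico_consecutive f (by omega) (by omega)
  have h01 : ∑ y ∈ Finset.Ico 0 2, f y = -a^n := by
    have : Finset.Ico 0 2 = {0, 1} := rfl
    rw [this]
    simp [hf]
  have hIcc : Finset.Icc 2 n = Finset.Ico 2 (n+1) := by
    rw [Finset.Ico_add_one_right_eq_Icc]
  rw [hIcc]
  have hrange : ∑ y ∈ Finset.Ico 0 (n+1), f y = 0 := by
    rw [← Finset.range_eq_Ico]; exact hz
  have := hsplit.trans hrange
  rw [h01] at this
  linarith [this]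

/-- Convolution of Poisson with Borel–Tanner: for `0 < λ < 1` and `x ≥ 2`,
`∑_{y=2}^{x} (λ^y e^{-λ}/y!) ((y-1)(x-1)^{x-y-1} λ^{x-y} e^{-(x-1)λ}/(x-y)!)
  = ((x-1)^{x-2}/(x (x-2)!)) λ^x e^{-xλ}`,
where the exponent `x - y - 1` is an integer power. -/
theorem stmt7 (lam : ℝ) (h0 : 0 < lam) (h1 : lam < 1) (x : ℕ) (hx : 2 ≤ x) :
    ∑ y ∈ Finset.Icc 2 x,
      (lam ^ y * Real.exp (-lam) / (Nat.factorial y))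
        * (((y : ℝ) - 1) * ((x : ℝ) - 1) ^ ((x : ℤ) - (y : ℤ) - 1)
            * lam ^ (x - y) * Real.exp (-((x : ℝ) - 1) * lam) / (Nat.factorial (x - y)))
    = (((x : ℝ) - 1) ^ (x - 2) / ((x : ℝ) * (Nat.factorial (x - 2))))
        * lam ^ x * Real.exp (-(x : ℝ) * lam) := by
  have hx1 : (1:ℝ) ≤ (x:ℝ) - 1 := by
    have : (2:ℝ) ≤ (x:ℝ) := by exact_mod_cast hx
    linarith
  have hxa : ((x:ℝ) - 1) ≠ 0 := by linarith
  have hterm : ∀ y ∈ Finset.Icc 2 x,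
      (lam ^ y * Real.exp (-lam) / (Nat.factorial y))
        * (((y : ℝ) - 1) * ((x : ℝ) - 1) ^ ((x : ℤ) - (y : ℤ) - 1)
            * lam ^ (x - y) * Real.exp (-((x : ℝ) - 1) * lam) / (Nat.factorial (x - y)))
      = (lam ^ x * Real.exp (-(x:ℝ)*lam) / (Nat.factorial x * ((x:ℝ)-1)))
          * ((x.choose y : ℝ) * ((y:ℝ)-1) * ((x:ℝ)-1)^(x-y)) := by
    intro y hy
    obtain ⟨hy2, hyx⟩ := Finset.mem_Icc.mp hy
    have hzp : ((x:ℝ)-1) ^ ((x : ℤ) - (y : ℤ) - 1) = ((x:ℝ)-1)^(x-y) / ((x:ℝ)-1) := by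
      rw [eq_div_iff hxa, ← zpow_natCast ((x:ℝ)-1) (x-y),
        show ((x-y:ℕ):ℤ) = (x:ℤ) - y by omega, ← zpow_add_one₀ hxa]
      congr 1; ring
    have hpow : lam^y * lam^(x-y) = lam^x := by rw [← pow_add]; congr 1; omega
    have hexp : Real.exp (-lam) * Real.exp (-((x:ℝ)-1)*lam) = Real.exp (-(x:ℝ)*lam) := by
      rw [← Real.exp_add]; congr 1; ring
    have hch : (x.choose y : ℝ) * (Nat.factorial y) * (Nat.factorial (x-y)) = Nat.factorial x := by
      exact_mod_cast congrArg (Nat.cast (R := ℝ)) (Nat.choose_mul_factorial_mul_factorial hyx)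
    have hfy : (Nat.factorial y : ℝ) ≠ 0 := by positivity
    have hfxy : (Nat.factorial (x-y) : ℝ) ≠ 0 := by positivity
    have hfx : (Nat.factorial x : ℝ) ≠ 0 := by positivity
    set A : ℝ := (x:ℝ) - 1 with hA
    rw [hzp, ← hch, ← hpow, ← hexp]
    have hC : (x.choose y : ℝ) ≠ 0 := by
      exact_mod_cast Nat.cast_ne_zero.mpr (Nat.choose_pos hyx).ne'
    field_simp
  rw [Finset.sum_congr rfl hterm, ← Finset.mul_sum, keyc x hx]
  -- final algebra
  obtain ⟨m, rfl⟩ : ∃ m, x = m + 2 := ⟨x - 2, by omega⟩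
  have hfac : (Nat.factorial (m+2) : ℝ) = (m+2) * (m+1) * (Nat.factorial m) := by
    push_cast [Nat.factorial_succ]
    ring
  have hfx : (Nat.factorial m : ℝ) ≠ 0 := by positivity
  have hxr : ((m:ℝ)+2) ≠ 0 := by positivity
  have hm1 : ((m+2:ℕ):ℝ) - 1 = (m:ℝ) + 1 := by push_cast; ring
  simp only [Nat.add_sub_cancel, hm1] at *
  rw [hfac]
  have hp : ((m:ℝ)+1)^(m+2) = ((m:ℝ)+1)^m * ((m:ℝ)+1) * ((m:ℝ)+1) := by
    rw [pow_succ, pow_succ]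
  push_cast
  rw [hp]
  field_simp
end

section
/- Let λ ∈ (0,1). Then ∑_{x=2}^∞ ((x-1)^{x-2}/(x-2)!) λ^x e^{-xλ} = λ e^{-λ}/(1-λ) − λ e^{-λ}. -/
open Finset fwdDiff Nat FormalMultilinearSeries

lemma fwd_pow (N : ℕ) : ∀ d ≤ N, ∀ y : ℕ,
    (fwdDiff 1)^[N] (fun x : ℕ => (x : ℝ) ^ d) y = if d = N then (N ! : ℝ) else 0 := by
  induction N with
  | zero =>
    intro d hd y
    interval_cases d
    simp
  | succ N IH =>
    intro d hd y
    rw [Function.iterate_succ_apply]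
    have hΔ : fwdDiff 1 (fun x : ℕ => (x : ℝ) ^ d)
        = ∑ i ∈ range d, (d.choose i : ℝ) • (fun x : ℕ => (x : ℝ) ^ i) := by
      ext x
      have h1 : ((x + 1 : ℕ) : ℝ) ^ d = ∑ i ∈ range (d + 1), (x : ℝ) ^ i * (d.choose i : ℝ) := by
        push_cast
        rw [add_pow]
        simp
      simp only [fwdDiff, h1, Finset.sum_apply, Pi.smul_apply, smul_eq_mul,
        Finset.sum_range_succ, Nat.choose_self, Nat.cast_one, mul_one, add_sub_cancel_right]
      exact Finset.sum_congr rfl fun i _ => by ring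
    rw [hΔ, fwdDiff_iter_finset_sum]
    simp only [fwdDiff_iter_const_smul, Finset.sum_apply, Pi.smul_apply, smul_eq_mul]
    rcases eq_or_lt_of_le hd with h | h
    · subst h
      rw [Finset.sum_congr rfl (fun i hi =>
        by rw [IH i (Nat.lt_succ_iff.mp (mem_range.mp hi)) y])]
      simp only [mul_ite, mul_zero, Finset.sum_ite_eq' (range (N + 1))]
      simp only [mem_range, lt_add_iff_pos_right, zero_lt_one, if_pos rfl, if_true,
        Nat.choose_succ_self_right, Nat.factorial_succ]
      push_cast
      ring
    · have hd' : d ≤ N := by omega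
      rw [if_neg (by omega)]
      refine Finset.sum_eq_zero fun i hi => ?_
      rw [IH i (by have := mem_range.mp hi; omega) y,
        if_neg (by have := mem_range.mp hi; omega), mul_zero]

lemma stirling_id (N : ℕ) :
    ∑ k ∈ range (N + 1), (-1 : ℝ) ^ (N - k) * (N.choose k : ℝ) * (k : ℝ) ^ N = (N ! : ℝ) := by
  have h := fwdDiff_iter_eq_sum_shift (1 : ℕ) (fun x : ℕ => (x : ℝ) ^ N) N 0
  rw [fwd_pow N N le_rfl 0, if_pos rfl] at h
  rw [h]
  refine Finset.sum_congr rfl fun k hk => ?_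
  simp only [zero_add, smul_eq_mul, mul_one, zsmul_eq_mul]
  push_cast
  ring

lemma exp_tsum (x : ℝ) : Real.exp x = ∑' m : ℕ, x ^ m / m ! := by
  rw [Real.exp_eq_exp_ℝ, NormedSpace.exp_eq_tsum_div]

lemma c_le_exp (n : ℕ) : (n : ℝ) ^ n / n ! ≤ Real.exp 1 ^ n := by
  calc (n : ℝ) ^ n / n ! ≤ Real.exp n := Real.pow_div_factorial_le_exp (n : ℝ) (by positivity) n
  _ = Real.exp 1 ^ n := by rw [← Real.exp_nat_mul, mul_one]

lemma summable_c {x : ℝ} (hx : |x| * Real.exp 1 < 1) :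
    Summable (fun n : ℕ => (n : ℝ) ^ n / n ! * x ^ n) := by
  refine Summable.of_norm_bounded (g := fun n => (|x| * Real.exp 1) ^ n)
    (summable_geometric_of_lt_one (by positivity) hx) (fun n => ?_)
  rw [norm_mul, norm_pow, Real.norm_eq_abs, Real.norm_eq_abs,
    abs_of_nonneg (by positivity : (0:ℝ) ≤ (n : ℝ) ^ n / n !)]
  calc (n : ℝ) ^ n / n ! * |x| ^ n ≤ Real.exp 1 ^ n * |x| ^ n :=
        mul_le_mul_of_nonneg_right (c_le_exp n) (by positivity)
  _ = (|x| * Real.exp 1) ^ n := by rw [mul_pow]; ring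

lemma small_eq_s10 (lam : ℝ) (h0 : 0 < lam) (h1 : lam < 1 / 10) :
    ∑' n : ℕ, (n : ℝ) ^ n / n ! * (lam * Real.exp (-lam)) ^ n = (1 - lam)⁻¹ := by
  set f : ℕ × ℕ → ℝ :=
    fun p => (p.1 : ℝ) ^ p.1 / p.1 ! * lam ^ p.1 * ((-(p.1 : ℝ) * lam) ^ p.2 / p.2 !) with hfdef
  have hexp2 : Real.exp 1 < 2.7182818286 := Real.exp_one_lt_d9
  have hr : lam * (Real.exp 1 * Real.exp lam) < 1 := by
    have h2 : Real.exp lam ≤ Real.exp 1 := Real.exp_le_exp.mpr (by linarith)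
    have h3 : 0 < Real.exp lam := Real.exp_pos _
    have h4 : 0 < Real.exp 1 := Real.exp_pos _
    have h5 : Real.exp 1 * Real.exp lam ≤ Real.exp 1 * Real.exp 1 := by nlinarith
    have h6 : Real.exp 1 * Real.exp 1 < 7.39 := by nlinarith
    nlinarith [mul_lt_mul_of_pos_left h6 h0]
  have habs_eval : ∀ n m : ℕ,
      |f (n, m)| = (n : ℝ) ^ n / n ! * lam ^ n * (((n : ℝ) * lam) ^ m / m !) := by
    intro n m
    rw [hfdef]
    simp only []
    rw [abs_mul, abs_mul, abs_div, abs_div]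
    rw [abs_pow, abs_pow, abs_pow, abs_mul, abs_neg, Nat.abs_cast, Nat.abs_cast, Nat.abs_cast,
      abs_of_nonneg h0.le]
  have habs : Summable (fun p => |f p|) := by
    rw [summable_prod_of_nonneg (fun p => abs_nonneg _)]
    constructor
    · intro n
      have h5 : (fun m => |f (n, m)|)
          = fun m => (n : ℝ) ^ n / n ! * lam ^ n * (((n : ℝ) * lam) ^ m / m !) :=
        funext fun m => habs_eval n m
      rw [h5]
      exact ((Real.summable_pow_div_factorial _).mul_left _)
    · have heval : ∀ n : ℕ, ∑' m, |f (n, m)|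
          = (n : ℝ) ^ n / n ! * lam ^ n * Real.exp ((n : ℝ) * lam) := by
        intro n
        rw [funext (habs_eval n), tsum_mul_left, ← exp_tsum]
      rw [funext heval]
      refine Summable.of_nonneg_of_le (fun n => by positivity)
        (fun n => ?_) (summable_geometric_of_lt_one (by positivity) hr)
      calc (n : ℝ) ^ n / n ! * lam ^ n * Real.exp ((n : ℝ) * lam)
          ≤ Real.exp 1 ^ n * lam ^ n * Real.exp lam ^ n := by
            rw [Real.exp_nat_mul]
            exact mul_le_mul_of_nonneg_right
              (mul_le_mul_of_nonneg_right (c_le_exp n) (by positivity)) (by positivity)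
      _ = (lam * (Real.exp 1 * Real.exp lam)) ^ n := by rw [mul_pow, mul_pow]; ring
  have hf : Summable f := summable_abs_iff.mp habs
  have h1' : ∑' p : ℕ × ℕ, f p
      = ∑' n : ℕ, (n : ℝ) ^ n / n ! * (lam * Real.exp (-lam)) ^ n := by
    rw [Summable.tsum_prod hf]
    refine tsum_congr fun n => ?_
    have h6 : (fun m => f (n, m))
        = fun m => ((n : ℝ) ^ n / n ! * lam ^ n) * ((-(n : ℝ) * lam) ^ m / m !) := rfl
    rw [h6, tsum_mul_left, ← exp_tsum]
    rw [show -(n : ℝ) * lam = (n : ℝ) * (-lam) by ring, Real.exp_nat_mul, mul_pow]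
    ring
  have hs : Summable (f ∘ Finset.HasAntidiagonal.sigmaAntidiagonalEquivProd) :=
    Finset.HasAntidiagonal.sigmaAntidiagonalEquivProd.summable_iff.mpr hf
  have h2' : ∑' p : ℕ × ℕ, f p = ∑' N : ℕ, lam ^ N := by
    calc ∑' p : ℕ × ℕ, f p
        = ∑' c : (Σ N : ℕ, (Finset.HasAntidiagonal.antidiagonal N : Finset (ℕ × ℕ))),
            (f ∘ Finset.HasAntidiagonal.sigmaAntidiagonalEquivProd) c :=
          (Finset.HasAntidiagonal.sigmaAntidiagonalEquivProd.tsum_eq f).symm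
      _ = ∑' (N : ℕ) (x : (Finset.HasAntidiagonal.antidiagonal N : Finset (ℕ × ℕ))),
            (f ∘ Finset.HasAntidiagonal.sigmaAntidiagonalEquivProd) ⟨N, x⟩ := Summable.tsum_sigma hs
      _ = ∑' N : ℕ, lam ^ N := by
          refine tsum_congr fun N => ?_
          have h7 : ∀ x : (Finset.HasAntidiagonal.antidiagonal N : Finset (ℕ × ℕ)),
              (f ∘ Finset.HasAntidiagonal.sigmaAntidiagonalEquivProd) ⟨N, x⟩ = f x.1 := fun x => rfl
          rw [tsum_congr h7, Finset.tsum_subtype (Finset.HasAntidiagonal.antidiagonal N) f,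
            Finset.Nat.sum_antidiagonal_eq_sum_range_succ_mk]
          have hterm : ∀ k ∈ range (N + 1), f (k, N - k)
              = ((-1 : ℝ) ^ (N - k) * (N.choose k : ℝ) * (k : ℝ) ^ N) * (lam ^ N / N !) := by
            intro k hk
            have hkN : k ≤ N := by have := mem_range.mp hk; omega
            have hfac : ((N.choose k : ℝ)) * (k ! : ℝ) * (((N - k)! : ℕ) : ℝ) = (N ! : ℝ) := by
              exact_mod_cast congrArg (Nat.cast : ℕ → ℝ)
                (Nat.choose_mul_factorial_mul_factorial hkN)
            have hpow : (k : ℝ) ^ k * (k : ℝ) ^ (N - k) = (k : ℝ) ^ N := by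
              rw [← pow_add]; congr 1; omega
            have hlam : lam ^ k * lam ^ (N - k) = lam ^ N := by
              rw [← pow_add]; congr 1; omega
            have hk0 : (k ! : ℝ) ≠ 0 := by positivity
            have hNk0 : (((N - k)! : ℕ) : ℝ) ≠ 0 := by positivity
            have hN0 : ((N ! : ℕ) : ℝ) ≠ 0 := by positivity
            rw [hfdef]
            simp only []
            rw [show -(k : ℝ) * lam = (-1) * ((k : ℝ) * lam) by ring, mul_pow, mul_pow]
            field_simp
            rw [← hpow, ← hlam, ← hfac]
            ring
          rw [Finset.sum_congr rfl hterm, ← Finset.sum_mul, stirling_id]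
          have hN0 : ((N ! : ℕ) : ℝ) ≠ 0 := by positivity
          field_simp
  rw [← h1', h2', tsum_geometric_of_lt_one h0.le (by linarith)]

noncomputable def pp : FormalMultilinearSeries ℝ ℝ ℝ :=
  FormalMultilinearSeries.ofScalars ℝ (fun n => (n : ℝ) ^ n / n !)

lemma pp_sum_eq (y : ℝ) : pp.sum y = ∑' n : ℕ, (n : ℝ) ^ n / n ! * y ^ n := by
  rw [show pp.sum y = ofScalarsSum (fun n => (n : ℝ) ^ n / n !) y from rfl, ofScalars_sum_eq]
  exact tsum_congr fun n => by rw [smul_eq_mul]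

lemma key_lt (lam : ℝ) (h0 : 0 < lam) (h1 : lam < 1) :
    lam * Real.exp (-lam) * Real.exp 1 < 1 := by
  have h2 : lam - 1 + 1 < Real.exp (lam - 1) :=
    Real.add_one_lt_exp (sub_ne_zero_of_ne (ne_of_lt h1))
  have h3 : Real.exp (lam - 1) * (Real.exp (-lam) * Real.exp 1) = 1 := by
    rw [← Real.exp_add, ← Real.exp_add]; norm_num
  nlinarith [Real.exp_pos (-lam), Real.exp_pos 1, Real.exp_pos (lam - 1)]

lemma pp_radius_ge {r : NNReal} (hr : (r : ℝ) * Real.exp 1 < 1) : (r : ENNReal) ≤ pp.radius := by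
  apply pp.le_radius_of_summable
  have h : ∀ n : ℕ, ‖pp n‖ * (r : ℝ) ^ n = (n : ℝ) ^ n / n ! * (r : ℝ) ^ n := by
    intro n
    rw [show pp n = FormalMultilinearSeries.ofScalars ℝ (fun n => (n : ℝ) ^ n / n !) n from rfl,
      ofScalars_norm, Real.norm_eq_abs, abs_of_nonneg (by positivity)]
  rw [funext h]
  exact summable_c (by rwa [abs_of_nonneg r.coe_nonneg])

lemma analyticAt_ppsum {y : ℝ} (hy : |y| * Real.exp 1 < 1) : AnalyticAt ℝ pp.sum y := by
  have he : 0 < Real.exp 1 := Real.exp_pos 1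
  have hy' : |y| < 1 / Real.exp 1 := (lt_div_iff₀ he).mpr hy
  set m : ℝ := (|y| + 1 / Real.exp 1) / 2 with hmdef
  have hm0 : 0 < m := by positivity
  have hm1 : |y| < m := by rw [hmdef]; linarith
  have hm2 : m * Real.exp 1 < 1 := by
    have h8 : m < 1 / Real.exp 1 := by rw [hmdef]; linarith [abs_nonneg y]
    calc m * Real.exp 1 < 1 / Real.exp 1 * Real.exp 1 := mul_lt_mul_of_pos_right h8 he
    _ = 1 := by field_simp
  have hrad : (m.toNNReal : ENNReal) ≤ pp.radius :=
    pp_radius_ge (by rw [Real.coe_toNNReal _ hm0.le]; exact hm2)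
  have hpos : 0 < pp.radius :=
    lt_of_lt_of_le (ENNReal.coe_pos.mpr (Real.toNNReal_pos.mpr hm0)) hrad
  have hball : y ∈ Metric.eball (0 : ℝ) pp.radius := by
    rw [Metric.mem_eball, edist_dist, Real.dist_0_eq_abs]
    calc ENNReal.ofReal |y| < ENNReal.ofReal m := by
          rw [ENNReal.ofReal_lt_ofReal_iff hm0]; exact hm1
    _ ≤ pp.radius := hrad
  exact (pp.hasFPowerSeriesOnBall hpos).analyticAt_of_mem hball

lemma U_eq (lam : ℝ) (h0 : 0 < lam) (h1 : lam < 1) :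
    ∑' n : ℕ, (n : ℝ) ^ n / n ! * (lam * Real.exp (-lam)) ^ n = (1 - lam)⁻¹ := by
  have habs : ∀ x : ℝ, 0 < x → x < 1 → |x * Real.exp (-x)| * Real.exp 1 < 1 := by
    intro x hx0 hx1
    rw [abs_of_nonneg (by positivity)]
    exact key_lt x hx0 hx1
  have hF : AnalyticOnNhd ℝ (fun x : ℝ => pp.sum (x * Real.exp (-x))) (Set.Ioo 0 1) := by
    intro x hx
    have hg : AnalyticAt ℝ (fun x : ℝ => x * Real.exp (-x)) x :=
      AnalyticAt.mul analyticAt_id (AnalyticAt.rexp (AnalyticAt.neg analyticAt_id))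
    exact AnalyticAt.comp (g := pp.sum) (f := fun x : ℝ => x * Real.exp (-x))
      (analyticAt_ppsum (habs x hx.1 hx.2)) hg
  have hG : AnalyticOnNhd ℝ (fun x : ℝ => (1 - x)⁻¹) (Set.Ioo 0 1) := by
    intro x hx
    exact (analyticAt_const.sub analyticAt_id).inv (sub_ne_zero_of_ne (ne_of_gt hx.2))
  have hev : (fun x : ℝ => pp.sum (x * Real.exp (-x))) =ᶠ[nhds (1/20 : ℝ)]
      fun x : ℝ => (1 - x)⁻¹ := by
    filter_upwards [isOpen_Ioo.mem_nhds
      (show (1/20 : ℝ) ∈ Set.Ioo (0 : ℝ) (1/10) by norm_num)] with x hx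
    rw [pp_sum_eq, small_eq_s10 x hx.1 hx.2]
  have key := hF.eqOn_of_preconnected_of_eventuallyEq hG isPreconnected_Ioo
    (show (1/20 : ℝ) ∈ Set.Ioo (0 : ℝ) 1 by norm_num) hev
  have h9 := key (Set.mem_Ioo.mpr ⟨h0, h1⟩)
  simpa [pp_sum_eq] using h9

/-- First-moment series identity: for `0 < λ < 1`,
`∑_{x=2}^∞ ((x-1)^{x-2}/(x-2)!) λ^x e^{-xλ} = λe^{-λ}/(1-λ) - λe^{-λ}`
(indexed by `x = k + 2`). -/
theorem stmt10 (lam : ℝ) (h0 : 0 < lam) (h1 : lam < 1) :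
    ∑' k : ℕ,
      ((((k + 1 : ℕ) ^ k : ℕ)) : ℝ) / (Nat.factorial k)
        * lam ^ (k + 2) * Real.exp (-((k + 2 : ℕ) : ℝ) * lam)
    = lam * Real.exp (-lam) / (1 - lam) - lam * Real.exp (-lam) := by
  have habs : |lam * Real.exp (-lam)| * Real.exp 1 < 1 := by
    rw [abs_of_nonneg (by positivity)]
    exact key_lt lam h0 h1
  have hsm : Summable (fun n : ℕ => (n : ℝ) ^ n / n ! * (lam * Real.exp (-lam)) ^ n) :=
    summable_c habs
  have hterm : ∀ k : ℕ,
      ((((k + 1 : ℕ) ^ k : ℕ)) : ℝ) / (Nat.factorial k)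
        * lam ^ (k + 2) * Real.exp (-((k + 2 : ℕ) : ℝ) * lam)
      = (lam * Real.exp (-lam)) *
        ((fun n : ℕ => (n : ℝ) ^ n / n ! * (lam * Real.exp (-lam)) ^ n) (k + 1)) := by
    intro k
    have he : Real.exp (-((k + 2 : ℕ) : ℝ) * lam) = Real.exp (-lam) ^ (k + 2) := by
      rw [show -((k + 2 : ℕ) : ℝ) * lam = ((k + 2 : ℕ) : ℝ) * (-lam) by push_cast; ring,
        Real.exp_nat_mul]
    simp only []
    rw [he]
    have hfac : (((k + 1)! : ℕ) : ℝ) = ((k + 1 : ℕ) : ℝ) * ((k ! : ℕ) : ℝ) := by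
      rw [Nat.factorial_succ]; push_cast; ring
    rw [hfac]
    have hk0 : ((k ! : ℕ) : ℝ) ≠ 0 := by positivity
    push_cast
    field_simp
    ring
  rw [tsum_congr hterm, tsum_mul_left]
  beta_reduce
  have hshift := Summable.tsum_eq_zero_add hsm
  rw [U_eq lam h0 h1] at hshift
  have h00 : ((0 : ℕ) : ℝ) ^ (0 : ℕ) / ((Nat.factorial 0 : ℕ) : ℝ)
      * (lam * Real.exp (-lam)) ^ (0 : ℕ) = 1 := by norm_num
  rw [h00] at hshift
  have hne : (1 : ℝ) - lam ≠ 0 := sub_ne_zero_of_ne (ne_of_gt (by linarith))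
  have hinv : ((1 : ℝ) - lam)⁻¹ = 1 / (1 - lam) := by rw [one_div]
  linear_combination (-(lam * Real.exp (-lam))) * hshift
end
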